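/- arXiv:0707.3729 — 8 statements merged into one kernel-verified Lean document; each statement's English description precedes it below -/
import Mathlib

section
/- Let (f_ρ)_{ρ>0} be a family of measurable functions on (0,∞) such that for some constants 0 < p < γ < q and c > 0: (i) for every a > 0, sup_{v>a} v^{−p} F̄_ρ(1) |f_ρ(v)| → 0 as ρ → 0⁺, and (ii) F̄_ρ(1)|f_ρ(v)| ≤ c v^q for all ρ > 0 and v > 0. Then lim_{ρ→0⁺} ∫_{(0,∞)} f_ρ(v) dF_ρ(v) = 0. -/
open MeasureTheory Filter Topology Real


lemma pow_rpow_comm (e : ℝ) (j : ℕ) : ((2:ℝ) ^ j) ^ e = ((2:ℝ) ^ e) ^ j := by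
  rw [← Real.rpow_natCast 2 j, ← Real.rpow_natCast ((2:ℝ) ^ e) j,
    ← Real.rpow_mul (by norm_num), ← Real.rpow_mul (by norm_num), mul_comm]

lemma aux_tail (μ : Measure ℝ) (p s A K b : ℝ) (hp : 0 ≤ p) (hps : p < s)
    (hb : 0 < b) (hA : 0 ≤ A) (hK : 0 ≤ K)
    (hpot : ∀ w, b ≤ w → μ (Set.Ioi w) ≤ ENNReal.ofReal (A * (w / b) ^ (-s)) * μ (Set.Ioi b)) :
    ∫⁻ x in Set.Ioi b, ENNReal.ofReal (K * x ^ p) ∂μ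
      ≤ ENNReal.ofReal (K * (A * 2 ^ p * (1 - 2 ^ (p - s))⁻¹ * b ^ p)) * μ (Set.Ioi b) := by
  set S : ℕ → Set ℝ := fun j => Set.Ioc (b * 2 ^ j) (b * 2 ^ (j + 1)) with hS
  set r : ℝ := (2:ℝ) ^ (p - s) with hr
  have hr0 : 0 ≤ r := by positivity
  have hr1 : r < 1 := rpow_lt_one_of_one_lt_of_neg one_lt_two (by linarith)
  set C : ℝ := K * (A * 2 ^ p * b ^ p) with hC
  have hC0 : 0 ≤ C := by positivity
  have hcov : Set.Ioi b ⊆ ⋃ j, S j := by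
    intro x hx
    have hx' : b < x := hx
    have ht : 1 < x / b := (one_lt_div hb).2 hx'
    have hl : 0 < logb 2 (x / b) := Real.logb_pos one_lt_two ht
    set m := ⌈logb 2 (x / b)⌉₊ with hm
    have hm1 : 1 ≤ m := Nat.one_le_ceil_iff.2 hl
    refine Set.mem_iUnion.2 ⟨m - 1, ?_, ?_⟩
    · have h1 : ((m:ℝ) - 1) < logb 2 (x / b) := by
        have := Nat.ceil_lt_add_one hl.le
        rw [← hm] at this; linarith
      have h2 : (2:ℝ) ^ ((m:ℝ) - 1) < x / b := by
        calc (2:ℝ) ^ ((m:ℝ) - 1) < 2 ^ logb 2 (x / b) :=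
              rpow_lt_rpow_of_exponent_lt one_lt_two h1
          _ = x / b := rpow_logb two_pos (by norm_num) (by positivity)
      have hc : ((m - 1 : ℕ) : ℝ) = (m:ℝ) - 1 := by
        push_cast [Nat.cast_sub hm1]; ring
      have h3 : (2:ℝ) ^ (m - 1 : ℕ) < x / b := by
        rw [← Real.rpow_natCast 2 (m - 1), hc]; exact h2
      calc b * 2 ^ (m - 1 : ℕ) < b * (x / b) :=
            mul_lt_mul_of_pos_left h3 hb
        _ = x := by field_simp
    · have hmm : m - 1 + 1 = m := Nat.succ_pred_eq_of_pos hm1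
      rw [hmm]
      have h1 : x / b ≤ (2:ℝ) ^ (m : ℕ) := by
        calc x / b = 2 ^ logb 2 (x / b) :=
              (rpow_logb two_pos (by norm_num) (by positivity)).symm
          _ ≤ 2 ^ ((m:ℕ):ℝ) := rpow_le_rpow_of_exponent_le one_le_two (Nat.le_ceil _)
          _ = 2 ^ (m:ℕ) := Real.rpow_natCast 2 m
      calc x = b * (x / b) := by field_simp
        _ ≤ b * 2 ^ (m:ℕ) := mul_le_mul_of_nonneg_left h1 hb.le
  have h2e : (2:ℝ) ^ (p - s) = 2 ^ p * 2 ^ (-s) := by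
    rw [← Real.rpow_add two_pos]; ring_nf
  have blockbound : ∀ j : ℕ, ∫⁻ x in S j, ENNReal.ofReal (K * x ^ p) ∂μ
      ≤ ENNReal.ofReal (C * r ^ j) * μ (Set.Ioi b) := by
    intro j
    have h2j : (1:ℝ) ≤ 2 ^ j := one_le_pow₀ (by norm_num)
    have hbj : 0 < b * 2 ^ j := by positivity
    have step1 : ∫⁻ x in S j, ENNReal.ofReal (K * x ^ p) ∂μ
        ≤ ENNReal.ofReal (K * (b * 2 ^ (j + 1)) ^ p) * μ (S j) := by
      rw [← setLIntegral_const]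
      refine setLIntegral_mono measurable_const fun x hx => ?_
      exact ENNReal.ofReal_le_ofReal (mul_le_mul_of_nonneg_left
        (rpow_le_rpow (le_of_lt (lt_trans hbj hx.1)) hx.2 hp) hK)
    have step2 : μ (S j) ≤ ENNReal.ofReal (A * ((2:ℝ) ^ j) ^ (-s)) * μ (Set.Ioi b) := by
      have h1 : μ (S j) ≤ μ (Set.Ioi (b * 2 ^ j)) := measure_mono Set.Ioc_subset_Ioi_self
      have h2 := hpot (b * 2 ^ j) (le_mul_of_one_le_right hb.le h2j)
      have h3 : (b * 2 ^ j) / b = (2:ℝ) ^ j := by field_simp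
      rw [h3] at h2
      exact h1.trans h2
    have hco : K * (b * 2 ^ (j + 1)) ^ p * (A * ((2:ℝ) ^ j) ^ (-s)) = C * r ^ j := by
      rw [mul_rpow hb.le (by positivity), pow_rpow_comm p (j + 1), pow_rpow_comm (-s) j,
        hC, hr, h2e, pow_succ', mul_pow]
      ring
    calc ∫⁻ x in S j, ENNReal.ofReal (K * x ^ p) ∂μ
        ≤ ENNReal.ofReal (K * (b * 2 ^ (j + 1)) ^ p) * μ (S j) := step1
      _ ≤ ENNReal.ofReal (K * (b * 2 ^ (j + 1)) ^ p) *
          (ENNReal.ofReal (A * ((2:ℝ) ^ j) ^ (-s)) * μ (Set.Ioi b)) :=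
            mul_le_mul_right step2 _
      _ = ENNReal.ofReal (C * r ^ j) * μ (Set.Ioi b) := by
            rw [← mul_assoc, ← ENNReal.ofReal_mul (by positivity), hco]
  have hsum : ∑' j : ℕ, ENNReal.ofReal (C * r ^ j)
      = ENNReal.ofReal (C * (1 - r)⁻¹) := by
    rw [← ENNReal.ofReal_tsum_of_nonneg (fun j => by positivity)
      ((summable_geometric_of_lt_one hr0 hr1).mul_left C)]
    congr 1
    rw [tsum_mul_left, tsum_geometric_of_lt_one hr0 hr1]
  calc ∫⁻ x in Set.Ioi b, ENNReal.ofReal (K * x ^ p) ∂μ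
      ≤ ∫⁻ x in ⋃ j, S j, ENNReal.ofReal (K * x ^ p) ∂μ := lintegral_mono_set hcov
    _ ≤ ∑' j : ℕ, ∫⁻ x in S j, ENNReal.ofReal (K * x ^ p) ∂μ := lintegral_iUnion_le _ _
    _ ≤ ∑' j : ℕ, ENNReal.ofReal (C * r ^ j) * μ (Set.Ioi b) :=
          ENNReal.tsum_le_tsum blockbound
    _ = (∑' j : ℕ, ENNReal.ofReal (C * r ^ j)) * μ (Set.Ioi b) := ENNReal.tsum_mul_right
    _ = ENNReal.ofReal (C * (1 - r)⁻¹) * μ (Set.Ioi b) := by rw [hsum]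
    _ = ENNReal.ofReal (K * (A * 2 ^ p * (1 - 2 ^ (p - s))⁻¹ * b ^ p)) * μ (Set.Ioi b) := by
          rw [hC, hr]; ring_nf

lemma pow_rpow_comm' (e : ℝ) (j : ℕ) : ((2:ℝ) ^ j) ^ e = ((2:ℝ) ^ e) ^ j := by
  rw [← Real.rpow_natCast 2 j, ← Real.rpow_natCast ((2:ℝ) ^ e) j,
    ← Real.rpow_mul (by norm_num), ← Real.rpow_mul (by norm_num), mul_comm]

lemma aux_trunc (μ : Measure ℝ) (e s A K V b : ℝ) (hse : s < e) (hs : 0 < s)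
    (hA : 0 ≤ A) (hK : 0 ≤ K) (hV : 0 < V) (hVb : V ≤ b)
    (hpot : ∀ w, V ≤ w → w ≤ b → μ (Set.Ioi w) ≤ ENNReal.ofReal (A * (w / b) ^ (-s)) * μ (Set.Ioi b)) :
    ∫⁻ x in Set.Ioc V b, ENNReal.ofReal (K * x ^ e) ∂μ
      ≤ ENNReal.ofReal (K * (A * 2 ^ s * (1 - 2 ^ (s - e))⁻¹ * b ^ e)) * μ (Set.Ioi b) := by
  have hb : 0 < b := lt_of_lt_of_le hV hVb
  set S : ℕ → Set ℝ := fun j => Set.Ioc (max (b / 2 ^ (j + 1)) V) (b / 2 ^ j) with hS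
  set r : ℝ := (2:ℝ) ^ (s - e) with hr
  have hr0 : 0 ≤ r := by positivity
  have hr1 : r < 1 := rpow_lt_one_of_one_lt_of_neg one_lt_two (by linarith)
  set C : ℝ := K * (A * 2 ^ s * b ^ e) with hC
  have hC0 : 0 ≤ C := by positivity
  have hcov : Set.Ioc V b ⊆ ⋃ j, S j := by
    intro x hx
    have hxV : V < x := hx.1
    have hx0 : 0 < x := lt_trans hV hxV
    have ht : 1 ≤ b / x := (one_le_div hx0).2 hx.2
    have hl : 0 ≤ logb 2 (b / x) := Real.logb_nonneg one_lt_two ht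
    set j := ⌊logb 2 (b / x)⌋₊ with hj
    refine Set.mem_iUnion.2 ⟨j, max_lt_iff.2 ⟨?_, hxV⟩, ?_⟩
    · have h1 : b / x < (2:ℝ) ^ (j + 1) := by
        calc b / x = 2 ^ logb 2 (b / x) :=
              (rpow_logb two_pos (by norm_num) (by positivity)).symm
          _ < 2 ^ (((j:ℝ)) + 1) :=
              rpow_lt_rpow_of_exponent_lt one_lt_two (Nat.lt_floor_add_one _)
          _ = 2 ^ (j + 1 : ℕ) := by
              rw [← Real.rpow_natCast 2 (j + 1)]; push_cast; ring_nf
      rw [div_lt_iff₀ (by positivity)]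
      rw [div_lt_iff₀ hx0] at h1
      linarith [h1]
    · have h1 : (2:ℝ) ^ (j : ℕ) ≤ b / x := by
        calc (2:ℝ) ^ (j:ℕ) = 2 ^ ((j:ℕ):ℝ) := (Real.rpow_natCast 2 j).symm
          _ ≤ 2 ^ logb 2 (b / x) :=
              rpow_le_rpow_of_exponent_le one_le_two (Nat.floor_le hl)
          _ = b / x := rpow_logb two_pos (by norm_num) (by positivity)
      rw [le_div_iff₀ (by positivity)]
      rw [le_div_iff₀ hx0] at h1
      linarith [h1]
  have blockbound : ∀ j : ℕ, ∫⁻ x in S j, ENNReal.ofReal (K * x ^ e) ∂μ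
      ≤ ENNReal.ofReal (C * r ^ j) * μ (Set.Ioi b) := by
    intro j
    set w : ℝ := max (b / 2 ^ (j + 1)) V with hw
    have hw0 : 0 < w := lt_of_lt_of_le hV (le_max_right _ _)
    have step1 : ∫⁻ x in S j, ENNReal.ofReal (K * x ^ e) ∂μ
        ≤ ENNReal.ofReal (K * (b / 2 ^ j) ^ e) * μ (S j) := by
      rw [← setLIntegral_const]
      refine setLIntegral_mono measurable_const fun x hx => ?_
      exact ENNReal.ofReal_le_ofReal (mul_le_mul_of_nonneg_left
        (rpow_le_rpow (le_of_lt (lt_trans hw0 hx.1)) hx.2 (by linarith)) hK)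
    have hlow : ((2:ℝ) ^ (j + 1))⁻¹ ≤ w / b := by
      have h1 : (b / 2 ^ (j + 1)) / b ≤ w / b := by
        gcongr
        exact le_max_left _ _
      calc ((2:ℝ) ^ (j + 1))⁻¹ = (b / 2 ^ (j + 1)) / b := by field_simp
        _ ≤ w / b := h1
    have h4 : (w / b) ^ (-s) ≤ ((2:ℝ) ^ s) ^ (j + 1) := by
      calc (w / b) ^ (-s) ≤ (((2:ℝ) ^ (j + 1))⁻¹) ^ (-s) :=
            rpow_le_rpow_of_nonpos (by positivity) hlow (by linarith)
        _ = ((2:ℝ) ^ (j + 1)) ^ s := by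
            rw [Real.inv_rpow (by positivity), Real.rpow_neg (by positivity), inv_inv]
        _ = ((2:ℝ) ^ s) ^ (j + 1) := pow_rpow_comm' s (j + 1)
    have step2 : μ (S j) ≤ ENNReal.ofReal (A * ((2:ℝ) ^ s) ^ (j + 1)) * μ (Set.Ioi b) := by
      have h1 : μ (S j) ≤ μ (Set.Ioi w) := measure_mono Set.Ioc_subset_Ioi_self
      have h2 := hpot w (le_max_right _ _)
        (max_le (div_le_self hb.le (one_le_pow₀ (by norm_num))) hVb)
      exact h1.trans (h2.trans (mul_le_mul_left
        (ENNReal.ofReal_le_ofReal (mul_le_mul_of_nonneg_left h4 hA)) _))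
    have hco : K * (b / 2 ^ j) ^ e * (A * ((2:ℝ) ^ s) ^ (j + 1)) = C * r ^ j := by
      rw [div_rpow hb.le (by positivity), pow_rpow_comm' e j, hC, hr,
        Real.rpow_sub two_pos, div_pow, pow_succ']
      field_simp
    calc ∫⁻ x in S j, ENNReal.ofReal (K * x ^ e) ∂μ
        ≤ ENNReal.ofReal (K * (b / 2 ^ j) ^ e) * μ (S j) := step1
      _ ≤ ENNReal.ofReal (K * (b / 2 ^ j) ^ e) *
          (ENNReal.ofReal (A * ((2:ℝ) ^ s) ^ (j + 1)) * μ (Set.Ioi b)) :=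
            mul_le_mul_right step2 _
      _ = ENNReal.ofReal (C * r ^ j) * μ (Set.Ioi b) := by
            rw [← mul_assoc, ← ENNReal.ofReal_mul (by positivity), hco]
  have hsum : ∑' j : ℕ, ENNReal.ofReal (C * r ^ j)
      = ENNReal.ofReal (C * (1 - r)⁻¹) := by
    rw [← ENNReal.ofReal_tsum_of_nonneg (fun j => by positivity)
      ((summable_geometric_of_lt_one hr0 hr1).mul_left C)]
    congr 1
    rw [tsum_mul_left, tsum_geometric_of_lt_one hr0 hr1]
  calc ∫⁻ x in Set.Ioc V b, ENNReal.ofReal (K * x ^ e) ∂μ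
      ≤ ∫⁻ x in ⋃ j, S j, ENNReal.ofReal (K * x ^ e) ∂μ := lintegral_mono_set hcov
    _ ≤ ∑' j : ℕ, ∫⁻ x in S j, ENNReal.ofReal (K * x ^ e) ∂μ := lintegral_iUnion_le _ _
    _ ≤ ∑' j : ℕ, ENNReal.ofReal (C * r ^ j) * μ (Set.Ioi b) :=
          ENNReal.tsum_le_tsum blockbound
    _ = (∑' j : ℕ, ENNReal.ofReal (C * r ^ j)) * μ (Set.Ioi b) := ENNReal.tsum_mul_right
    _ = ENNReal.ofReal (C * (1 - r)⁻¹) * μ (Set.Ioi b) := by rw [hsum]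
    _ = ENNReal.ofReal (K * (A * 2 ^ s * (1 - 2 ^ (s - e))⁻¹ * b ^ e)) * μ (Set.Ioi b) := by
          rw [hC, hr]; ring_nf

lemma pow_rpow_comm'' (e : ℝ) (j : ℕ) : ((2:ℝ) ^ j) ^ e = ((2:ℝ) ^ e) ^ j := by
  rw [← Real.rpow_natCast 2 j, ← Real.rpow_natCast ((2:ℝ) ^ e) j,
    ← Real.rpow_mul (by norm_num), ← Real.rpow_mul (by norm_num), mul_comm]

lemma potter_iter_up (h : ℝ → ℝ) (s V : ℝ) (hV : (1:ℝ) ≤ V)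
    (hup : ∀ v, V ≤ v → h (2 * v) ≤ 2 ^ (-s) * h v)
    (hpos : ∀ v, 0 ≤ h v) :
    ∀ (k : ℕ) (v : ℝ), V ≤ v → h (2 ^ k * v) ≤ ((2:ℝ) ^ (-s)) ^ k * h v := by
  intro k
  induction k with
  | zero => intro v hv; simp
  | succ k ih =>
    intro v hv
    have hv0 : (0:ℝ) ≤ v := by linarith
    have h2 : V ≤ 2 ^ k * v := le_trans hv (le_mul_of_one_le_left hv0 (one_le_pow₀ one_le_two))
    have h1 : (2:ℝ) ^ (k + 1) * v = 2 * (2 ^ k * v) := by ring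
    calc h (2 ^ (k + 1) * v) = h (2 * (2 ^ k * v)) := by rw [h1]
      _ ≤ 2 ^ (-s) * h (2 ^ k * v) := hup _ h2
      _ ≤ 2 ^ (-s) * (((2:ℝ) ^ (-s)) ^ k * h v) :=
          mul_le_mul_of_nonneg_left (ih v hv) (by positivity)
      _ = ((2:ℝ) ^ (-s)) ^ (k + 1) * h v := by ring

lemma potter_iter_lo (h : ℝ → ℝ) (s V : ℝ) (hV : (1:ℝ) ≤ V)
    (hlo : ∀ v, V ≤ v → 2 ^ (-s) * h v ≤ h (2 * v)) :
    ∀ (k : ℕ) (v : ℝ), V ≤ v → ((2:ℝ) ^ (-s)) ^ k * h v ≤ h (2 ^ k * v) := by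
  intro k
  induction k with
  | zero => intro v hv; simp
  | succ k ih =>
    intro v hv
    have hv0 : (0:ℝ) ≤ v := by linarith
    have h2 : V ≤ 2 ^ k * v := le_trans hv (le_mul_of_one_le_left hv0 (one_le_pow₀ one_le_two))
    have h1 : (2:ℝ) ^ (k + 1) * v = 2 * (2 ^ k * v) := by ring
    calc ((2:ℝ) ^ (-s)) ^ (k + 1) * h v = 2 ^ (-s) * (((2:ℝ) ^ (-s)) ^ k * h v) := by ring
      _ ≤ 2 ^ (-s) * h (2 ^ k * v) := mul_le_mul_of_nonneg_left (ih v hv) (by positivity)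
      _ ≤ h (2 * (2 ^ k * v)) := hlo _ h2
      _ = h (2 ^ (k + 1) * v) := by rw [h1]

lemma potter_upper (h : ℝ → ℝ) (s V : ℝ) (hs : 0 < s) (hV : (1:ℝ) ≤ V)
    (hmono : ∀ ⦃u v : ℝ⦄, u ≤ v → h v ≤ h u)
    (hpos : ∀ v, 0 ≤ h v)
    (hup : ∀ v, V ≤ v → h (2 * v) ≤ 2 ^ (-s) * h v) :
    ∀ v w, V ≤ v → v ≤ w → h w ≤ 2 ^ s * (w / v) ^ (-s) * h v := by
  intro v w hVv hvw
  have hv0 : 0 < v := lt_of_lt_of_le one_pos (le_trans hV hVv)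
  have ht1 : 1 ≤ w / v := (one_le_div hv0).2 hvw
  have ht0 : 0 < w / v := lt_of_lt_of_le one_pos ht1
  have hl : 0 ≤ logb 2 (w / v) := logb_nonneg one_lt_two ht1
  set k := ⌊logb 2 (w / v)⌋₊ with hk
  have h2k : (2:ℝ) ^ (k:ℕ) ≤ w / v := by
    calc (2:ℝ) ^ (k:ℕ) = 2 ^ ((k:ℕ):ℝ) := (rpow_natCast 2 k).symm
      _ ≤ 2 ^ logb 2 (w / v) := rpow_le_rpow_of_exponent_le one_le_two (Nat.floor_le hl)
      _ = w / v := rpow_logb two_pos (by norm_num) ht0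
  have h2k' : w / v < 2 * 2 ^ (k:ℕ) := by
    calc w / v = 2 ^ logb 2 (w / v) := (rpow_logb two_pos (by norm_num) ht0).symm
      _ < 2 ^ ((k:ℝ) + 1) := rpow_lt_rpow_of_exponent_lt one_lt_two (Nat.lt_floor_add_one _)
      _ = 2 * 2 ^ (k:ℕ) := by rw [rpow_add two_pos, rpow_natCast, rpow_one]; ring
  have step : h w ≤ ((2:ℝ) ^ (-s)) ^ k * h v := by
    have hle : 2 ^ (k:ℕ) * v ≤ w := by
      rw [← le_div_iff₀ hv0]; exact h2k
    exact le_trans (hmono hle) (potter_iter_up h s V hV hup hpos k v hVv)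
  have hr1k : ((2:ℝ) ^ (-s)) ^ k ≤ 2 ^ s * (w / v) ^ (-s) := by
    have e1 : ((2:ℝ) ^ (-s)) ^ k = ((2:ℝ) ^ (k:ℕ)) ^ (-s) := (pow_rpow_comm'' (-s) k).symm
    have e2 : ((2:ℝ) ^ (k:ℕ)) ^ (-s) ≤ ((w / v) / 2) ^ (-s) :=
      rpow_le_rpow_of_nonpos (by positivity) (by linarith) (by linarith)
    have e3 : ((w / v) / 2) ^ (-s) = 2 ^ s * (w / v) ^ (-s) := by
      rw [div_rpow ht0.le (by norm_num : (0:ℝ) ≤ 2), Real.rpow_neg (by norm_num : (0:ℝ) ≤ 2)]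
      field_simp
    rw [e1]; rw [e3] at e2; exact e2
  calc h w ≤ ((2:ℝ) ^ (-s)) ^ k * h v := step
    _ ≤ 2 ^ s * (w / v) ^ (-s) * h v := mul_le_mul_of_nonneg_right hr1k (hpos v)

lemma potter_lower (h : ℝ → ℝ) (s V : ℝ) (hs : 0 < s) (hV : (1:ℝ) ≤ V)
    (hmono : ∀ ⦃u v : ℝ⦄, u ≤ v → h v ≤ h u)
    (hpos : ∀ v, 0 ≤ h v)
    (hlo : ∀ v, V ≤ v → 2 ^ (-s) * h v ≤ h (2 * v)) :
    ∀ v w, V ≤ v → v ≤ w → 2 ^ (-s) * (w / v) ^ (-s) * h v ≤ h w := by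
  intro v w hVv hvw
  have hv0 : 0 < v := lt_of_lt_of_le one_pos (le_trans hV hVv)
  have ht1 : 1 ≤ w / v := (one_le_div hv0).2 hvw
  have ht0 : 0 < w / v := lt_of_lt_of_le one_pos ht1
  have hl : 0 ≤ logb 2 (w / v) := logb_nonneg one_lt_two ht1
  set m := ⌈logb 2 (w / v)⌉₊ with hm
  have h2m : w / v ≤ (2:ℝ) ^ (m:ℕ) := by
    calc w / v = 2 ^ logb 2 (w / v) := (rpow_logb two_pos (by norm_num) ht0).symm
      _ ≤ 2 ^ ((m:ℕ):ℝ) := rpow_le_rpow_of_exponent_le one_le_two (Nat.le_ceil _)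
      _ = 2 ^ (m:ℕ) := rpow_natCast 2 m
  have h2m' : (2:ℝ) ^ (m:ℕ) ≤ 2 * (w / v) := by
    have hlt : ((m:ℕ):ℝ) < logb 2 (w / v) + 1 := Nat.ceil_lt_add_one hl
    calc (2:ℝ) ^ (m:ℕ) = 2 ^ ((m:ℕ):ℝ) := (rpow_natCast 2 m).symm
      _ ≤ 2 ^ (logb 2 (w / v) + 1) := rpow_le_rpow_of_exponent_le one_le_two hlt.le
      _ = 2 * (w / v) := by rw [rpow_add two_pos, rpow_logb two_pos (by norm_num) ht0, rpow_one]; ring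
  have step : ((2:ℝ) ^ (-s)) ^ m * h v ≤ h w := by
    have hle : w ≤ 2 ^ (m:ℕ) * v := by
      rw [← div_le_iff₀ hv0] at *; exact h2m
    exact le_trans (potter_iter_lo h s V hV hlo m v hVv) (hmono hle)
  have hr2m : 2 ^ (-s) * (w / v) ^ (-s) ≤ ((2:ℝ) ^ (-s)) ^ m := by
    have e1 : ((2:ℝ) ^ (-s)) ^ m = ((2:ℝ) ^ (m:ℕ)) ^ (-s) := (pow_rpow_comm'' (-s) m).symm
    have e2 : (2 * (w / v)) ^ (-s) ≤ ((2:ℝ) ^ (m:ℕ)) ^ (-s) :=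
      rpow_le_rpow_of_nonpos (by positivity) h2m' (by linarith)
    have e3 : (2 * (w / v)) ^ (-s) = 2 ^ (-s) * (w / v) ^ (-s) :=
      mul_rpow (by norm_num) ht0.le
    rw [e1]; rw [e3] at e2; exact e2
  calc 2 ^ (-s) * (w / v) ^ (-s) * h v ≤ ((2:ℝ) ^ (-s)) ^ m * h v :=
        mul_le_mul_of_nonneg_right hr2m (hpos v)
    _ ≤ h w := step

lemma potter_rev (h : ℝ → ℝ) (s V : ℝ) (hs : 0 < s) (hV : (0:ℝ) < V)
    (hpos : ∀ v, 0 ≤ h v)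
    (hlow : ∀ v w, V ≤ v → v ≤ w → 2 ^ (-s) * (w / v) ^ (-s) * h v ≤ h w) :
    ∀ v w, V ≤ v → v ≤ w → h v ≤ 2 ^ s * (v / w) ^ (-s) * h w := by
  intro v w hVv hvw
  have hv0 : 0 < v := lt_of_lt_of_le hV hVv
  have hw0 : 0 < w := lt_of_lt_of_le hv0 hvw
  have key : ((2:ℝ) ^ s * (v / w) ^ (-s)) * ((2:ℝ) ^ (-s) * (w / v) ^ (-s)) = 1 := by
    have e1 : (v / w) ^ (-s) * (w / v) ^ (-s) = 1 := by
      rw [← Real.mul_rpow (by positivity) (by positivity)]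
      have e : (v / w) * (w / v) = 1 := by field_simp
      rw [e, Real.one_rpow]
    have e2 : (2:ℝ) ^ s * 2 ^ (-s) = 1 := by
      rw [← Real.rpow_add two_pos]; simp
    calc ((2:ℝ) ^ s * (v / w) ^ (-s)) * ((2:ℝ) ^ (-s) * (w / v) ^ (-s))
        = ((2:ℝ) ^ s * 2 ^ (-s)) * ((v / w) ^ (-s) * (w / v) ^ (-s)) := by ring
      _ = 1 := by rw [e1, e2]; ring
  have hY : (0:ℝ) ≤ 2 ^ s * (v / w) ^ (-s) := by positivity
  calc h v = ((2:ℝ) ^ s * (v / w) ^ (-s)) * ((2:ℝ) ^ (-s) * (w / v) ^ (-s) * h v) := by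
        rw [← mul_assoc, key, one_mul]
    _ ≤ ((2:ℝ) ^ s * (v / w) ^ (-s)) * h w :=
        mul_le_mul_of_nonneg_left (hlow v w hVv hvw) hY



set_option maxHeartbeats 2000000 in
theorem regvar_family_limit_smallpow
    (γ : ℝ) (hγ : 0 < γ)
    (μ : Measure ℝ) [IsProbabilityMeasure μ]
    (hsupp : μ (Set.Iio 0) = 0)
    (hpos : ∀ v : ℝ, 0 < μ (Set.Ioi v))
    (hreg : ∀ a > (0:ℝ), Tendsto
      (fun v : ℝ => (μ (Set.Ioi (a * v))).toReal / (μ (Set.Ioi v)).toReal)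
      atTop (𝓝 (a ^ (-γ))))
    (f : ℝ → ℝ → ℝ) (hmeas : ∀ ρ > (0:ℝ), Measurable (f ρ))
    (p q c : ℝ) (hp : 0 < p) (hpγ : p < γ) (hγq : γ < q) (hc : 0 < c)
    (hsup : ∀ a > (0:ℝ), ∀ ε > (0:ℝ), ∀ᶠ ρ in 𝓝[>] (0:ℝ),
      ∀ v > a, v ^ (-p) * (μ (Set.Ioi ρ⁻¹)).toReal * |f ρ v| ≤ ε)
    (hbound : ∀ ρ > (0:ℝ), ∀ v > (0:ℝ),
      (μ (Set.Ioi ρ⁻¹)).toReal * |f ρ v| ≤ c * v ^ q) :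
    Tendsto
      (fun ρ : ℝ => ∫ v in Set.Ioi (0:ℝ), f ρ v ∂(Measure.map (fun x => ρ * x) μ))
      (𝓝[>] (0:ℝ)) (𝓝 0) := by
  have hfin : ∀ v : ℝ, μ (Set.Ioi v) ≠ ⊤ := fun v => measure_ne_top μ _
  have hpos' : ∀ v : ℝ, 0 < (μ (Set.Ioi v)).toReal :=
    fun v => ENNReal.toReal_pos (hpos v).ne' (hfin v)
  have hmono : ∀ ⦃u v : ℝ⦄, u ≤ v → (μ (Set.Ioi v)).toReal ≤ (μ (Set.Ioi u)).toReal :=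
    fun u v huv => (ENNReal.toReal_le_toReal (hfin v) (hfin u)).2
      (measure_mono (Set.Ioi_subset_Ioi huv))
  set γ' : ℝ := (p + γ) / 2 with hγ'def
  set γ'' : ℝ := (γ + q) / 2 with hγ''def
  have hpγ' : p < γ' := by rw [hγ'def]; linarith
  have hγ'0 : 0 < γ' := lt_trans hp hpγ'
  have hγ'γ : γ' < γ := by rw [hγ'def]; linarith
  have hγγ'' : γ < γ'' := by rw [hγ''def]; linarith
  have hγ''q : γ'' < q := by rw [hγ''def]; linarith
  have hγ''0 : 0 < γ'' := lt_trans hγ hγγ''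
  -- extract the scale V from regular variation at ratio 2
  have hlt1 : (2:ℝ) ^ (-γ'') < 2 ^ (-γ) :=
    rpow_lt_rpow_of_exponent_lt one_lt_two (by linarith)
  have hlt2 : (2:ℝ) ^ (-γ) < 2 ^ (-γ') :=
    rpow_lt_rpow_of_exponent_lt one_lt_two (by linarith)
  have hev0 := (hreg 2 two_pos).eventually (Ioo_mem_nhds hlt1 hlt2)
  rw [eventually_atTop] at hev0
  obtain ⟨V₀, hV₀⟩ := hev0
  set V : ℝ := max V₀ 1 with hVdef
  have hV1 : (1:ℝ) ≤ V := le_max_right _ _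
  have hV0 : (0:ℝ) < V := lt_of_lt_of_le one_pos hV1
  have hup : ∀ v, V ≤ v → (μ (Set.Ioi (2 * v))).toReal ≤ 2 ^ (-γ') * (μ (Set.Ioi v)).toReal := by
    intro v hv
    have h0 := hV₀ v (le_trans (le_max_left _ _) hv)
    have h2 := h0.2
    rw [div_lt_iff₀ (hpos' v)] at h2
    exact h2.le
  have hlo : ∀ v, V ≤ v → 2 ^ (-γ'') * (μ (Set.Ioi v)).toReal ≤ (μ (Set.Ioi (2 * v))).toReal := by
    intro v hv
    have h0 := hV₀ v (le_trans (le_max_left _ _) hv)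
    have h2 := h0.1
    rw [lt_div_iff₀ (hpos' v)] at h2
    exact h2.le
  have hP1 := potter_upper (fun v => (μ (Set.Ioi v)).toReal) γ' V hγ'0 hV1 hmono
    (fun v => (hpos' v).le) hup
  have hP2 := potter_lower (fun v => (μ (Set.Ioi v)).toReal) γ'' V hγ''0 hV1 hmono
    (fun v => (hpos' v).le) hlo
  have hP3 := potter_rev (fun v => (μ (Set.Ioi v)).toReal) γ'' V hγ''0 hV0
    (fun v => (hpos' v).le) hP2
  -- constants
  set K2 : ℝ := (2:ℝ) ^ γ'' * (2:ℝ) ^ γ'' * (1 - (2:ℝ) ^ (γ'' - q))⁻¹ with hK2def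
  set K1 : ℝ := (2:ℝ) ^ γ' * (2:ℝ) ^ p * (1 - (2:ℝ) ^ (p - γ'))⁻¹ with hK1def
  have honeminus2 : 0 < 1 - (2:ℝ) ^ (γ'' - q) := by
    have := rpow_lt_one_of_one_lt_of_neg (x := 2) one_lt_two (by linarith : γ'' - q < 0)
    linarith
  have honeminus1 : 0 < 1 - (2:ℝ) ^ (p - γ') := by
    have := rpow_lt_one_of_one_lt_of_neg (x := 2) one_lt_two (by linarith : p - γ' < 0)
    linarith
  have hK2pos : 0 < K2 := by
    rw [hK2def]
    exact mul_pos (mul_pos (rpow_pos_of_pos two_pos _) (rpow_pos_of_pos two_pos _))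
      (inv_pos.2 honeminus2)
  have hK1pos : 0 < K1 := by
    rw [hK1def]
    exact mul_pos (mul_pos (rpow_pos_of_pos two_pos _) (rpow_pos_of_pos two_pos _))
      (inv_pos.2 honeminus1)
  rw [Metric.tendsto_nhds]
  intro η hη
  set C2 : ℝ := c * K2 * 2 ^ γ'' with hC2def
  have hC2pos : 0 < C2 := by
    rw [hC2def]; exact mul_pos (mul_pos hc hK2pos) (rpow_pos_of_pos two_pos _)
  set a : ℝ := min 1 ((η / (4 * C2)) ^ ((q - γ'')⁻¹)) with hadef
  have ha0 : 0 < a := lt_min one_pos (rpow_pos_of_pos (by positivity) _)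
  have ha1 : a ≤ 1 := min_le_left _ _
  have haq : C2 * a ^ (q - γ'') ≤ η / 4 := by
    have hqγ : 0 < q - γ'' := by linarith
    have h1 : a ^ (q - γ'') ≤ ((η / (4 * C2)) ^ ((q - γ'')⁻¹)) ^ (q - γ'') :=
      rpow_le_rpow ha0.le (min_le_right _ _) hqγ.le
    rw [← rpow_mul (by positivity), inv_mul_cancel₀ hqγ.ne', rpow_one] at h1
    calc C2 * a ^ (q - γ'') ≤ C2 * (η / (4 * C2)) := mul_le_mul_of_nonneg_left h1 hC2pos.le
      _ = η / 4 := by field_simp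
  set C3 : ℝ := K1 * 2 ^ γ'' * a ^ (p - γ'') with hC3def
  have hC3pos : 0 < C3 := by
    rw [hC3def]
    exact mul_pos (mul_pos hK1pos (rpow_pos_of_pos two_pos _)) (rpow_pos_of_pos ha0 _)
  set ε : ℝ := η / (4 * C3) with hεdef
  have hεpos : 0 < ε := by rw [hεdef]; positivity
  have hεC3 : ε * C3 = η / 4 := by rw [hεdef]; field_simp
  set E1 : ℝ := (η / 4) * 2 ^ (-γ'') * V ^ (γ'' - q) * (μ (Set.Ioi V)).toReal / c with hE1def
  have hE1pos : 0 < E1 := by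
    rw [hE1def]
    have := hpos' V
    positivity
  have hev1 : ∀ᶠ ρ in 𝓝[>] (0:ℝ), ρ ^ (q - γ'') < E1 := by
    have hq0 : 0 < q - γ'' := by linarith
    have hcont : Tendsto (fun x : ℝ => x ^ (q - γ'')) (𝓝 0) (𝓝 ((0:ℝ) ^ (q - γ''))) :=
      (Real.continuousAt_rpow_const 0 _ (Or.inr hq0.le)).tendsto
    rw [Real.zero_rpow hq0.ne'] at hcont
    exact (hcont.mono_left nhdsWithin_le_nhds).eventually_lt_const hE1pos
  have hev2 : ∀ᶠ ρ in 𝓝[>] (0:ℝ), ρ < a / V :=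
    eventually_of_mem (nhdsWithin_le_nhds (Iio_mem_nhds (by positivity))) (fun x hx => hx)
  have hev3 := hsup a ha0 ε hεpos
  have hev4 : ∀ᶠ ρ in 𝓝[>] (0:ℝ), (0:ℝ) < ρ :=
    eventually_of_mem self_mem_nhdsWithin (fun x hx => hx)
  filter_upwards [hev1, hev2, hev3, hev4] with ρ h1 h2 h3 hρ
  rw [Real.dist_eq, sub_zero]
  have hρinv : (0:ℝ) < ρ⁻¹ := by positivity
  set T : ℝ := (μ (Set.Ioi ρ⁻¹)).toReal with hTdef
  have hT0 : 0 < T := hpos' ρ⁻¹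
  set b : ℝ := a / ρ with hbdef
  have hb0 : 0 < b := by rw [hbdef]; positivity
  have hVb : V ≤ b := by
    rw [lt_div_iff₀ hV0] at h2
    rw [hbdef, le_div_iff₀ hρ]
    linarith [h2]
  have hbinv : b ≤ ρ⁻¹ := by
    rw [hbdef]
    rw [div_eq_mul_inv]
    calc a * ρ⁻¹ ≤ 1 * ρ⁻¹ := mul_le_mul_of_nonneg_right ha1 (by positivity)
      _ = ρ⁻¹ := one_mul _
  have hVinv : V ≤ ρ⁻¹ := le_trans hVb hbinv
  have hρb : ρ * b = a := by rw [hbdef, mul_comm, div_mul_cancel₀ a hρ.ne']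
  -- rewrite the mapped integral
  have hpre : (fun x => ρ * x) ⁻¹' (Set.Ioi (0:ℝ)) = Set.Ioi 0 := by
    ext x
    simp only [Set.mem_preimage, Set.mem_Ioi]
    constructor
    · intro hx
      rcases mul_pos_iff.1 hx with ⟨-, h⟩ | ⟨h₁, -⟩
      · exact h
      · exact absurd hρ (not_lt.2 h₁.le)
    · intro h; exact mul_pos hρ h
  have hmap : ∫ v in Set.Ioi (0:ℝ), f ρ v ∂(Measure.map (fun x => ρ * x) μ)
      = ∫ x in Set.Ioi (0:ℝ), f ρ (ρ * x) ∂μ := by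
    rw [setIntegral_map measurableSet_Ioi (hmeas ρ hρ).aestronglyMeasurable
      (measurable_const_mul ρ).aemeasurable, hpre]
  rw [hmap]
  set L : ENNReal := ∫⁻ x in Set.Ioi (0:ℝ), ENNReal.ofReal |f ρ (ρ * x)| ∂μ with hLdef
  have habs : |∫ x in Set.Ioi (0:ℝ), f ρ (ρ * x) ∂μ| ≤ L.toReal := by
    have := MeasureTheory.norm_integral_le_lintegral_norm
      (μ := μ.restrict (Set.Ioi 0)) (fun x => f ρ (ρ * x))
    simpa [Real.norm_eq_abs, hLdef] using this
  -- Potter bounds in ENNReal form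
  have hpotA : ∀ w, b ≤ w →
      μ (Set.Ioi w) ≤ ENNReal.ofReal ((2:ℝ) ^ γ' * (w / b) ^ (-γ')) * μ (Set.Ioi b) := by
    intro w hbw
    have hw0 : 0 < w := lt_of_lt_of_le hb0 hbw
    have hr := hP1 b w hVb hbw
    calc μ (Set.Ioi w) = ENNReal.ofReal (μ (Set.Ioi w)).toReal :=
          (ENNReal.ofReal_toReal (hfin w)).symm
      _ ≤ ENNReal.ofReal ((2:ℝ) ^ γ' * (w / b) ^ (-γ') * (μ (Set.Ioi b)).toReal) :=
          ENNReal.ofReal_le_ofReal hr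
      _ = ENNReal.ofReal ((2:ℝ) ^ γ' * (w / b) ^ (-γ')) * μ (Set.Ioi b) := by
          rw [ENNReal.ofReal_mul (mul_nonneg (Real.rpow_nonneg (by norm_num) _)
            (Real.rpow_nonneg (div_nonneg hw0.le hb0.le) _)), ENNReal.ofReal_toReal (hfin b)]
  have hpotB : ∀ w, V ≤ w → w ≤ b →
      μ (Set.Ioi w) ≤ ENNReal.ofReal ((2:ℝ) ^ γ'' * (w / b) ^ (-γ'')) * μ (Set.Ioi b) := by
    intro w hVw hwb
    have hw0 : 0 < w := lt_of_lt_of_le hV0 hVw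
    have hr := hP3 w b hVw hwb
    calc μ (Set.Ioi w) = ENNReal.ofReal (μ (Set.Ioi w)).toReal :=
          (ENNReal.ofReal_toReal (hfin w)).symm
      _ ≤ ENNReal.ofReal ((2:ℝ) ^ γ'' * (w / b) ^ (-γ'') * (μ (Set.Ioi b)).toReal) :=
          ENNReal.ofReal_le_ofReal hr
      _ = ENNReal.ofReal ((2:ℝ) ^ γ'' * (w / b) ^ (-γ'')) * μ (Set.Ioi b) := by
          rw [ENNReal.ofReal_mul (mul_nonneg (Real.rpow_nonneg (by norm_num) _)
            (Real.rpow_nonneg (div_nonneg hw0.le hb0.le) _)), ENNReal.ofReal_toReal (hfin b)]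
  have hIb : μ (Set.Ioi b) ≤ ENNReal.ofReal ((2:ℝ) ^ γ'' * a ^ (-γ'') * T) := by
    have hr := hP3 b ρ⁻¹ hVb hbinv
    have he : b / ρ⁻¹ = a := by rw [hbdef]; field_simp
    rw [he] at hr
    calc μ (Set.Ioi b) = ENNReal.ofReal (μ (Set.Ioi b)).toReal :=
          (ENNReal.ofReal_toReal (hfin b)).symm
      _ ≤ ENNReal.ofReal ((2:ℝ) ^ γ'' * a ^ (-γ'') * T) := ENNReal.ofReal_le_ofReal hr
  -- Piece 1 : (0, V]
  have hpiece1 : ∫⁻ x in Set.Ioc (0:ℝ) V, ENNReal.ofReal |f ρ (ρ * x)| ∂μ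
      ≤ ENNReal.ofReal (η / 4) := by
    have hreal1 : (c * (ρ * V) ^ q) / T ≤ η / 4 := by
      rw [div_le_iff₀ hT0]
      have hTlow := hP2 V ρ⁻¹ (le_refl V) hVinv
      have he : ρ⁻¹ / V = (ρ * V)⁻¹ := by field_simp
      have he2 : ((ρ * V)⁻¹) ^ (-γ'') = (ρ * V) ^ γ'' := by
        rw [Real.inv_rpow (by positivity), Real.rpow_neg (by positivity), inv_inv]
      rw [he, he2] at hTlow
      have e3 : (ρ * V) ^ γ'' = ρ ^ γ'' * V ^ γ'' := mul_rpow hρ.le hV0.le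
      have e4 : (ρ * V) ^ q = ρ ^ q * V ^ q := mul_rpow hρ.le hV0.le
      have e5 : ρ ^ q = ρ ^ γ'' * ρ ^ (q - γ'') := by rw [← rpow_add hρ]; ring_nf
      have e6 : V ^ γ'' = V ^ q * V ^ (γ'' - q) := by rw [← rpow_add hV0]; ring_nf
      have hstep : c * (ρ * V) ^ q ≤ c * V ^ q * ρ ^ γ'' * E1 := by
        rw [e4, e5]
        calc c * (ρ ^ γ'' * ρ ^ (q - γ'') * V ^ q)
            = (c * V ^ q * ρ ^ γ'') * ρ ^ (q - γ'') := by ring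
          _ ≤ (c * V ^ q * ρ ^ γ'') * E1 := mul_le_mul_of_nonneg_left h1.le (by positivity)
      have hstep2 : c * V ^ q * ρ ^ γ'' * E1
          = (η / 4) * (2 ^ (-γ'') * (ρ ^ γ'' * V ^ γ'') * (μ (Set.Ioi V)).toReal) := by
        rw [hE1def, e6]
        field_simp
      calc c * (ρ * V) ^ q
          ≤ (η / 4) * (2 ^ (-γ'') * (ρ ^ γ'' * V ^ γ'') * (μ (Set.Ioi V)).toReal) := by
            rw [← hstep2]; exact hstep
        _ = (η / 4) * (2 ^ (-γ'') * (ρ * V) ^ γ'' * (μ (Set.Ioi V)).toReal) := by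
            rw [e3, mul_assoc (2 ^ (-γ''))]
        _ ≤ (η / 4) * T := mul_le_mul_of_nonneg_left hTlow (by linarith)
    have hptw : ∀ x ∈ Set.Ioc (0:ℝ) V, ENNReal.ofReal |f ρ (ρ * x)|
        ≤ ENNReal.ofReal ((c * (ρ * V) ^ q) / T) := by
      intro x hx
      apply ENNReal.ofReal_le_ofReal
      have hx0 : 0 < ρ * x := mul_pos hρ hx.1
      have hb1 := hbound ρ hρ (ρ * x) hx0
      have hb2 : c * (ρ * x) ^ q ≤ c * (ρ * V) ^ q :=
        mul_le_mul_of_nonneg_left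
          (rpow_le_rpow hx0.le (mul_le_mul_of_nonneg_left hx.2 hρ.le) (by linarith)) hc.le
      rw [le_div_iff₀ hT0]
      calc |f ρ (ρ * x)| * T = T * |f ρ (ρ * x)| := by ring
        _ ≤ c * (ρ * V) ^ q := le_trans hb1 hb2
    calc ∫⁻ x in Set.Ioc (0:ℝ) V, ENNReal.ofReal |f ρ (ρ * x)| ∂μ
        ≤ ∫⁻ _x in Set.Ioc (0:ℝ) V, ENNReal.ofReal ((c * (ρ * V) ^ q) / T) ∂μ :=
          setLIntegral_mono measurable_const hptw
      _ = ENNReal.ofReal ((c * (ρ * V) ^ q) / T) * μ (Set.Ioc 0 V) := setLIntegral_const _ _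
      _ ≤ ENNReal.ofReal ((c * (ρ * V) ^ q) / T) * 1 := mul_le_mul_right prob_le_one _
      _ = ENNReal.ofReal ((c * (ρ * V) ^ q) / T) := mul_one _
      _ ≤ ENNReal.ofReal (η / 4) := ENNReal.ofReal_le_ofReal hreal1
  -- Piece 2 : (V, b]
  have hpiece2 : ∫⁻ x in Set.Ioc V b, ENNReal.ofReal |f ρ (ρ * x)| ∂μ
      ≤ ENNReal.ofReal (η / 4) := by
    set K : ℝ := c * ρ ^ q / T with hKdef
    have hK0 : 0 ≤ K := by rw [hKdef]; positivity
    have hptw : ∀ x ∈ Set.Ioc V b, ENNReal.ofReal |f ρ (ρ * x)|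
        ≤ ENNReal.ofReal (K * x ^ q) := by
      intro x hx
      have hxpos : 0 < x := lt_of_lt_of_le hV0 hx.1.le
      have hx0 : 0 < ρ * x := mul_pos hρ hxpos
      apply ENNReal.ofReal_le_ofReal
      have hb1 := hbound ρ hρ (ρ * x) hx0
      have e : (ρ * x) ^ q = ρ ^ q * x ^ q := mul_rpow hρ.le hxpos.le
      rw [hKdef, div_mul_eq_mul_div, le_div_iff₀ hT0]
      calc |f ρ (ρ * x)| * T = T * |f ρ (ρ * x)| := by ring
        _ ≤ c * (ρ * x) ^ q := hb1
        _ = c * ρ ^ q * x ^ q := by rw [e]; ring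
    have hmb : Measurable fun x : ℝ => ENNReal.ofReal (K * x ^ q) := by fun_prop
    have hmain := aux_trunc μ q γ'' ((2:ℝ) ^ γ'') K V b hγ''q hγ''0 (by positivity) hK0
      hV0 hVb hpotB
    have hreal2 : K * ((2:ℝ) ^ γ'' * 2 ^ γ'' * (1 - 2 ^ (γ'' - q))⁻¹ * b ^ q)
        * ((2:ℝ) ^ γ'' * a ^ (-γ'') * T) ≤ η / 4 := by
      have e1 : ρ ^ q * b ^ q = a ^ q := by rw [← mul_rpow hρ.le hb0.le, hρb]
      have e2 : a ^ q * a ^ (-γ'') = a ^ (q - γ'') := by rw [← rpow_add ha0]; ring_nf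
      have key : K * ((2:ℝ) ^ γ'' * 2 ^ γ'' * (1 - 2 ^ (γ'' - q))⁻¹ * b ^ q)
          * ((2:ℝ) ^ γ'' * a ^ (-γ'') * T) = C2 * a ^ (q - γ'') := by
        rw [hKdef, hC2def, hK2def, ← e2, ← e1]
        field_simp
      rw [key]; exact haq
    calc ∫⁻ x in Set.Ioc V b, ENNReal.ofReal |f ρ (ρ * x)| ∂μ
        ≤ ∫⁻ x in Set.Ioc V b, ENNReal.ofReal (K * x ^ q) ∂μ := setLIntegral_mono hmb hptw
      _ ≤ ENNReal.ofReal (K * ((2:ℝ) ^ γ'' * 2 ^ γ'' * (1 - 2 ^ (γ'' - q))⁻¹ * b ^ q))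
          * μ (Set.Ioi b) := hmain
      _ ≤ ENNReal.ofReal (K * ((2:ℝ) ^ γ'' * 2 ^ γ'' * (1 - 2 ^ (γ'' - q))⁻¹ * b ^ q))
          * ENNReal.ofReal ((2:ℝ) ^ γ'' * a ^ (-γ'') * T) := mul_le_mul_right hIb _
      _ = ENNReal.ofReal (K * ((2:ℝ) ^ γ'' * 2 ^ γ'' * (1 - 2 ^ (γ'' - q))⁻¹ * b ^ q)
          * ((2:ℝ) ^ γ'' * a ^ (-γ'') * T)) := by
            rw [← ENNReal.ofReal_mul]
            exact mul_nonneg hK0 (by positivity)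
      _ ≤ ENNReal.ofReal (η / 4) := ENNReal.ofReal_le_ofReal hreal2
  -- Piece 3 : (b, ∞)
  have hpiece3 : ∫⁻ x in Set.Ioi b, ENNReal.ofReal |f ρ (ρ * x)| ∂μ
      ≤ ENNReal.ofReal (η / 4) := by
    set K3 : ℝ := ε * ρ ^ p / T with hK3def
    have hK30 : 0 ≤ K3 := by rw [hK3def]; positivity
    have hptw : ∀ x ∈ Set.Ioi b, ENNReal.ofReal |f ρ (ρ * x)|
        ≤ ENNReal.ofReal (K3 * x ^ p) := by
      intro x hx
      have hxb : b < x := hx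
      have hxpos : 0 < x := lt_of_lt_of_le hb0 hxb.le
      have hx0 : 0 < ρ * x := mul_pos hρ hxpos
      have hgt : a < ρ * x := by
        rw [← hρb]
        exact mul_lt_mul_of_pos_left hxb hρ
      have h4 := h3 (ρ * x) hgt
      have hone : (ρ * x) ^ p * (ρ * x) ^ (-p) = 1 := by
        rw [← rpow_add hx0]; simp
      have h5 : T * |f ρ (ρ * x)| ≤ ε * (ρ * x) ^ p := by
        have hq : T * |f ρ (ρ * x)|
            = (ρ * x) ^ p * ((ρ * x) ^ (-p) * T * |f ρ (ρ * x)|) := by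
          linear_combination (-(T * |f ρ (ρ * x)|)) * hone
        rw [hq]
        calc (ρ * x) ^ p * ((ρ * x) ^ (-p) * T * |f ρ (ρ * x)|)
            ≤ (ρ * x) ^ p * ε := mul_le_mul_of_nonneg_left h4 (by positivity)
          _ = ε * (ρ * x) ^ p := by ring
      apply ENNReal.ofReal_le_ofReal
      have e : (ρ * x) ^ p = ρ ^ p * x ^ p := mul_rpow hρ.le hxpos.le
      rw [hK3def, div_mul_eq_mul_div, le_div_iff₀ hT0]
      calc |f ρ (ρ * x)| * T = T * |f ρ (ρ * x)| := by ring
        _ ≤ ε * (ρ * x) ^ p := h5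
        _ = ε * ρ ^ p * x ^ p := by rw [e]; ring
    have hmb : Measurable fun x : ℝ => ENNReal.ofReal (K3 * x ^ p) := by fun_prop
    have hmain := aux_tail μ p γ' ((2:ℝ) ^ γ') K3 b hp.le hpγ' hb0 (by positivity) hK30 hpotA
    have hreal3 : K3 * ((2:ℝ) ^ γ' * 2 ^ p * (1 - 2 ^ (p - γ'))⁻¹ * b ^ p)
        * ((2:ℝ) ^ γ'' * a ^ (-γ'') * T) ≤ η / 4 := by
      have e1 : ρ ^ p * b ^ p = a ^ p := by rw [← mul_rpow hρ.le hb0.le, hρb]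
      have e2 : a ^ p * a ^ (-γ'') = a ^ (p - γ'') := by rw [← rpow_add ha0]; ring_nf
      have key : K3 * ((2:ℝ) ^ γ' * 2 ^ p * (1 - 2 ^ (p - γ'))⁻¹ * b ^ p)
          * ((2:ℝ) ^ γ'' * a ^ (-γ'') * T) = ε * C3 := by
        rw [hK3def, hC3def, hK1def, ← e2, ← e1]
        field_simp
      rw [key, hεC3]
    calc ∫⁻ x in Set.Ioi b, ENNReal.ofReal |f ρ (ρ * x)| ∂μ
        ≤ ∫⁻ x in Set.Ioi b, ENNReal.ofReal (K3 * x ^ p) ∂μ := setLIntegral_mono hmb hptw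
      _ ≤ ENNReal.ofReal (K3 * ((2:ℝ) ^ γ' * 2 ^ p * (1 - 2 ^ (p - γ'))⁻¹ * b ^ p))
          * μ (Set.Ioi b) := hmain
      _ ≤ ENNReal.ofReal (K3 * ((2:ℝ) ^ γ' * 2 ^ p * (1 - 2 ^ (p - γ'))⁻¹ * b ^ p))
          * ENNReal.ofReal ((2:ℝ) ^ γ'' * a ^ (-γ'') * T) := mul_le_mul_right hIb _
      _ = ENNReal.ofReal (K3 * ((2:ℝ) ^ γ' * 2 ^ p * (1 - 2 ^ (p - γ'))⁻¹ * b ^ p)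
          * ((2:ℝ) ^ γ'' * a ^ (-γ'') * T)) := by
            rw [← ENNReal.ofReal_mul]
            exact mul_nonneg hK30 (by positivity)
      _ ≤ ENNReal.ofReal (η / 4) := ENNReal.ofReal_le_ofReal hreal3
  -- combine
  have hLbound : L ≤ ENNReal.ofReal (η / 4 + (η / 4 + η / 4)) := by
    have hsplitset : Set.Ioi (0:ℝ) = Set.Ioc 0 V ∪ (Set.Ioc V b ∪ Set.Ioi b) := by
      rw [Set.Ioc_union_Ioi_eq_Ioi hVb, Set.Ioc_union_Ioi_eq_Ioi hV0.le]
    rw [hLdef, hsplitset]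
    calc ∫⁻ x in Set.Ioc 0 V ∪ (Set.Ioc V b ∪ Set.Ioi b), ENNReal.ofReal |f ρ (ρ * x)| ∂μ
        ≤ ∫⁻ x in Set.Ioc (0:ℝ) V, ENNReal.ofReal |f ρ (ρ * x)| ∂μ
          + ∫⁻ x in Set.Ioc V b ∪ Set.Ioi b, ENNReal.ofReal |f ρ (ρ * x)| ∂μ :=
          lintegral_union_le _ _ _
      _ ≤ ENNReal.ofReal (η / 4)
          + (∫⁻ x in Set.Ioc V b, ENNReal.ofReal |f ρ (ρ * x)| ∂μ
            + ∫⁻ x in Set.Ioi b, ENNReal.ofReal |f ρ (ρ * x)| ∂μ) :=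
          add_le_add hpiece1 (lintegral_union_le _ _ _)
      _ ≤ ENNReal.ofReal (η / 4) + (ENNReal.ofReal (η / 4) + ENNReal.ofReal (η / 4)) :=
          add_le_add le_rfl (add_le_add hpiece2 hpiece3)
      _ = ENNReal.ofReal (η / 4 + (η / 4 + η / 4)) := by
          rw [ENNReal.ofReal_add (by linarith) (by linarith),
            ENNReal.ofReal_add (by linarith) (by linarith)]
  have hLreal : L.toReal ≤ η / 4 + (η / 4 + η / 4) :=
    ENNReal.toReal_le_of_le_ofReal (by linarith) hLbound
  calc |∫ x in Set.Ioi (0:ℝ), f ρ (ρ * x) ∂μ| ≤ L.toReal := habs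
    _ ≤ η / 4 + (η / 4 + η / 4) := hLreal
    _ < η := by linarith
end

section
/- Let (f_ρ)_{ρ>0} be a family of measurable functions on (0,∞) such that for some constants 0 < p < γ < q and c > 0: (i) for every a > 0, sup_{0<v≤a} v^{−q} F̄_ρ(1) |f_ρ(v)| → 0 as ρ → 0⁺, and (ii) F̄_ρ(1)|f_ρ(v)| ≤ c v^p for all ρ > 0 and v > 0. Then lim_{ρ→0⁺} ∫_{(0,∞)} f_ρ(v) dF_ρ(v) = 0. -/
open MeasureTheory Filter Topology

lemma aux_ratio_iter_low (μ : Measure ℝ) [IsFiniteMeasure μ]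
    (s t₁ : ℝ) (hs : 0 < s)
    (hrat : ∀ v : ℝ, t₁ ≤ v → s * (μ (Set.Ioi v)).toReal ≤ (μ (Set.Ioi (2*v))).toReal)
    (ht10 : 0 < t₁) :
    ∀ j : ℕ, s^j * (μ (Set.Ioi t₁)).toReal ≤ (μ (Set.Ioi ((2:ℝ)^j * t₁))).toReal := by
  intro j
  induction j with
  | zero => simp
  | succ j ih =>
    have h2j : (1:ℝ) ≤ 2^j := one_le_pow₀ (by norm_num)
    have hv : t₁ ≤ 2^j * t₁ := le_mul_of_one_le_left ht10.le h2j
    have := hrat ((2:ℝ)^j * t₁) hv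
    have heq : (2:ℝ)^(j+1) * t₁ = 2 * ((2:ℝ)^j * t₁) := by ring
    rw [heq]
    calc s^(j+1) * (μ (Set.Ioi t₁)).toReal = s * (s^j * (μ (Set.Ioi t₁)).toReal) := by ring
      _ ≤ s * (μ (Set.Ioi ((2:ℝ)^j * t₁))).toReal := by
          exact mul_le_mul_of_nonneg_left ih hs.le
      _ ≤ (μ (Set.Ioi (2 * ((2:ℝ)^j * t₁)))).toReal := this

lemma aux_lower (μ : Measure ℝ) [IsFiniteMeasure μ]
    (s t₁ : ℝ) (hs : 0 < s) (ht₁ : 1 ≤ t₁)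
    (hrat : ∀ v : ℝ, t₁ ≤ v → s * (μ (Set.Ioi v)).toReal ≤ (μ (Set.Ioi (2*v))).toReal)
    (β : ℝ) (hβ0 : 0 < β) (hβ : s * (2:ℝ)^β = 1) :
    ∀ t : ℝ, t₁ ≤ t → s * (μ (Set.Ioi t₁)).toReal * t₁^β * t^(-β)
      ≤ (μ (Set.Ioi t)).toReal := by
  intro t ht
  have ht10 : 0 < t₁ := by linarith
  have ht0 : 0 < t := by linarith
  have htd : (1:ℝ) ≤ t / t₁ := (one_le_div ht10).mpr ht
  have htd0 : 0 < t / t₁ := by linarith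
  set k := ⌊Real.logb 2 (t/t₁)⌋₊ with hk
  have hlb0 : 0 ≤ Real.logb 2 (t/t₁) := Real.logb_nonneg (by norm_num) htd
  have h1 : (2:ℝ)^(k:ℕ) ≤ t/t₁ := by
    have : ((k:ℕ):ℝ) ≤ Real.logb 2 (t/t₁) := Nat.floor_le hlb0
    calc (2:ℝ)^(k:ℕ) = (2:ℝ)^((k:ℕ):ℝ) := (Real.rpow_natCast 2 k).symm
      _ ≤ (2:ℝ)^(Real.logb 2 (t/t₁)) := Real.rpow_le_rpow_of_exponent_le (by norm_num) this
      _ = t/t₁ := Real.rpow_logb (by norm_num) (by norm_num) htd0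
  have h2 : t/t₁ < (2:ℝ)^(k+1 : ℕ) := by
    have : Real.logb 2 (t/t₁) < ((k:ℕ):ℝ) + 1 := Nat.lt_floor_add_one _
    calc t/t₁ = (2:ℝ)^(Real.logb 2 (t/t₁)) := (Real.rpow_logb (by norm_num) (by norm_num) htd0).symm
      _ < (2:ℝ)^(((k:ℕ):ℝ)+1) := Real.rpow_lt_rpow_of_exponent_lt (by norm_num) this
      _ = (2:ℝ)^(k+1 : ℕ) := by
          rw [← Real.rpow_natCast 2 (k+1)]
          norm_num
  have hta : (2:ℝ)^(k:ℕ) * t₁ ≤ t := (le_div_iff₀ ht10).mp h1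
  have htb : t ≤ (2:ℝ)^(k+1:ℕ) * t₁ := by
    have := (div_lt_iff₀ ht10).mp h2
    linarith
  have hiter := aux_ratio_iter_low μ s t₁ hs hrat ht10 (k+1)
  have hmono : (μ (Set.Ioi ((2:ℝ)^(k+1:ℕ) * t₁))).toReal ≤ (μ (Set.Ioi t)).toReal := by
    apply ENNReal.toReal_mono (measure_ne_top _ _)
    exact measure_mono (Set.Ioi_subset_Ioi htb)
  -- key real computation
  have hkey : s * (μ (Set.Ioi t₁)).toReal * t₁^β * t^(-β) ≤ s^(k+1) * (μ (Set.Ioi t₁)).toReal := by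
    have hG1 : 0 ≤ (μ (Set.Ioi t₁)).toReal := ENNReal.toReal_nonneg
    have hrq : t^(-β) ≤ ((2:ℝ)^(k:ℕ) * t₁)^(-β) :=
      Real.rpow_le_rpow_of_nonpos (by positivity) hta (by linarith)
    have heq2 : ((2:ℝ)^(k:ℕ) * t₁)^(-β) = s^k * t₁^(-β) := by
      rw [Real.mul_rpow (by positivity) ht10.le]
      congr 1
      have hs' : s = (2:ℝ)^(-β) := by
        rw [Real.rpow_neg (by norm_num : (0:ℝ) ≤ 2)]
        exact eq_inv_of_mul_eq_one_left hβ
      rw [hs', ← Real.rpow_natCast ((2:ℝ)^(-β)) k, ← Real.rpow_mul (by norm_num),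
        ← Real.rpow_natCast (2:ℝ) k, ← Real.rpow_mul (by norm_num)]
      congr 1
      ring
    calc s * (μ (Set.Ioi t₁)).toReal * t₁^β * t^(-β)
        ≤ s * (μ (Set.Ioi t₁)).toReal * t₁^β * (((2:ℝ)^(k:ℕ) * t₁)^(-β)) := by
          apply mul_le_mul_of_nonneg_left hrq (by positivity)
      _ = s^(k+1) * (μ (Set.Ioi t₁)).toReal * (t₁^β * t₁^(-β)) := by
          rw [heq2]; ring
      _ = s^(k+1) * (μ (Set.Ioi t₁)).toReal := by
          rw [← Real.rpow_add ht10, add_neg_cancel, Real.rpow_zero, mul_one]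
  exact le_trans hkey (le_trans hiter hmono)

lemma aux_trunc_s5 (μ : Measure ℝ) [IsProbabilityMeasure μ]
    (s t₁ : ℝ) (hs : 0 < s) (ht₁ : 1 ≤ t₁)
    (hrat : ∀ v : ℝ, t₁ ≤ v → s * (μ (Set.Ioi v)).toReal ≤ (μ (Set.Ioi (2*v))).toReal)
    (q : ℝ) (hq : 0 < q) (hsq : (2:ℝ)^(-q) < s)
    (T : ℝ) (hTt : t₁ ≤ T)
    (hT2 : ∀ t : ℝ, T ≤ t → (2*t₁)^q ≤ t^q * (μ (Set.Ioi t)).toReal) :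
    ∀ t : ℝ, T ≤ t → ∫⁻ x in Set.Ioc 0 t, ENNReal.ofReal (x ^ q) ∂μ
      ≤ ENNReal.ofReal ((1 + s⁻¹ * (1 - (2:ℝ)^(-q)/s)⁻¹) * t^q) * μ (Set.Ioi t) := by
  intro t ht
  have ht10 : 0 < t₁ := by linarith
  have ht1 : t₁ ≤ t := le_trans hTt ht
  have ht0 : 0 < t := lt_of_lt_of_le ht10 ht1
  have htd : (1:ℝ) ≤ t / t₁ := (one_le_div ht10).mpr ht1
  have htd0 : 0 < t / t₁ := by linarith
  have hGt0 : 0 ≤ (μ (Set.Ioi t)).toReal := ENNReal.toReal_nonneg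
  have h2q : (0:ℝ) < (2:ℝ)^(-q) := Real.rpow_pos_of_pos (by norm_num) _
  have hds1 : (2:ℝ)^(-q)/s < 1 := (div_lt_one hs).mpr hsq
  have hds0 : (0:ℝ) < (2:ℝ)^(-q)/s := by positivity
  have hinv : (0:ℝ) ≤ (1 - (2:ℝ)^(-q)/s)⁻¹ := inv_nonneg.mpr (by linarith)
  have hcoef : (0:ℝ) ≤ s⁻¹ * (1 - (2:ℝ)^(-q)/s)⁻¹ * t^q :=
    mul_nonneg (mul_nonneg (inv_nonneg.mpr hs.le) hinv) (Real.rpow_nonneg (le_of_lt ht0) q)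
  set K := ⌊Real.logb 2 (t/t₁)⌋₊ with hK
  have hlb0 : 0 ≤ Real.logb 2 (t/t₁) := Real.logb_nonneg (by norm_num) htd
  have h1 : (2:ℝ)^(K:ℕ) ≤ t/t₁ := by
    have : ((K:ℕ):ℝ) ≤ Real.logb 2 (t/t₁) := Nat.floor_le hlb0
    calc (2:ℝ)^(K:ℕ) = (2:ℝ)^((K:ℕ):ℝ) := (Real.rpow_natCast 2 K).symm
      _ ≤ (2:ℝ)^(Real.logb 2 (t/t₁)) := Real.rpow_le_rpow_of_exponent_le (by norm_num) this
      _ = t/t₁ := Real.rpow_logb (by norm_num) (by norm_num) htd0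
  have h2 : t/t₁ < (2:ℝ)^(K+1 : ℕ) := by
    have : Real.logb 2 (t/t₁) < ((K:ℕ):ℝ) + 1 := Nat.lt_floor_add_one _
    calc t/t₁ = (2:ℝ)^(Real.logb 2 (t/t₁)) := (Real.rpow_logb (by norm_num) (by norm_num) htd0).symm
      _ < (2:ℝ)^(((K:ℕ):ℝ)+1) := Real.rpow_lt_rpow_of_exponent_lt (by norm_num) this
      _ = (2:ℝ)^(K+1 : ℕ) := by
          rw [← Real.rpow_natCast 2 (K+1)]
          norm_num
  have hKa : t₁ ≤ t / 2^K := by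
    rw [le_div_iff₀ (by positivity)]
    have := (le_div_iff₀ ht10).mp h1
    linarith
  have hKb : t / 2^K ≤ 2*t₁ := by
    rw [div_le_iff₀ (by positivity)]
    have := (div_lt_iff₀ ht10).mp h2
    rw [pow_succ] at this
    linarith
  -- downward ratio iteration
  have hdown : ∀ j : ℕ, t₁ ≤ t / 2^j →
      (μ (Set.Ioi (t / 2^j))).toReal ≤ s⁻¹^j * (μ (Set.Ioi t)).toReal := by
    intro j
    induction j with
    | zero => intro _; simp
    | succ j ih =>
      intro hyp
      have hdiv : t / 2^(j+1) ≤ t / 2^j := by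
        apply div_le_div_of_nonneg_left ht0.le (by positivity)
        exact pow_le_pow_right₀ (by norm_num) (by omega)
      have hj : t₁ ≤ t / 2^j := le_trans hyp hdiv
      have heq : 2 * (t / 2^(j+1)) = t / 2^j := by
        rw [pow_succ]; field_simp
      have hr := hrat (t / 2^(j+1)) hyp
      rw [heq] at hr
      have : (μ (Set.Ioi (t / 2^(j+1)))).toReal ≤ s⁻¹ * (μ (Set.Ioi (t / 2^j))).toReal := by
        rw [← div_eq_inv_mul, le_div_iff₀ hs]
        linarith
      calc (μ (Set.Ioi (t / 2^(j+1)))).toReal ≤ s⁻¹ * (μ (Set.Ioi (t / 2^j))).toReal := this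
        _ ≤ s⁻¹ * (s⁻¹^j * (μ (Set.Ioi t)).toReal) :=
            mul_le_mul_of_nonneg_left (ih hj) (by positivity)
        _ = s⁻¹^(j+1) * (μ (Set.Ioi t)).toReal := by ring
  -- covering
  have hcov : Set.Ioc 0 t ⊆ Set.Ioc 0 (t / 2^K) ∪ ⋃ i : Fin K, Set.Ioc (t/2^((i:ℕ)+1)) (t/2^(i:ℕ)) := by
    intro x hx
    obtain ⟨hx0, hxt⟩ := hx
    by_cases hle : x ≤ t / 2^K
    · exact Or.inl ⟨hx0, hle⟩
    · push_neg at hle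
      have hex : ∃ j : ℕ, t/2^j < x := ⟨K, hle⟩
      have hj := Nat.find_spec hex
      have hj0 : Nat.find hex ≠ 0 := by
        intro h0
        rw [h0] at hj; simp at hj; linarith
      have hjK : Nat.find hex ≤ K := Nat.find_min' hex hle
      obtain ⟨m, hm⟩ := Nat.exists_eq_succ_of_ne_zero hj0
      have hmK : m < K := by omega
      have hnot : ¬ (t/2^m < x) := Nat.find_min hex (by omega)
      push_neg at hnot
      refine Or.inr (Set.mem_iUnion.mpr ⟨⟨m, hmK⟩, ?_, hnot⟩)
      rw [show m + 1 = Nat.find hex from hm.symm ▸ rfl]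
      exact hj
  -- piece A
  have hA : ∫⁻ x in Set.Ioc 0 (t / 2^K), ENNReal.ofReal (x ^ q) ∂μ
      ≤ ENNReal.ofReal (t^q) * μ (Set.Ioi t) := by
    calc ∫⁻ x in Set.Ioc 0 (t / 2^K), ENNReal.ofReal (x ^ q) ∂μ
        ≤ ∫⁻ _ in Set.Ioc 0 (t / 2^K), ENNReal.ofReal ((2*t₁) ^ q) ∂μ := by
          refine setLIntegral_mono' measurableSet_Ioc fun x hx => ?_
          exact ENNReal.ofReal_le_ofReal
            (Real.rpow_le_rpow (le_of_lt hx.1) (le_trans hx.2 hKb) hq.le)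
      _ = ENNReal.ofReal ((2*t₁) ^ q) * μ (Set.Ioc 0 (t / 2^K)) := setLIntegral_const _ _
      _ ≤ ENNReal.ofReal ((2*t₁) ^ q) * 1 := mul_le_mul_right prob_le_one _
      _ = ENNReal.ofReal ((2*t₁) ^ q) := mul_one _
      _ ≤ ENNReal.ofReal (t^q * (μ (Set.Ioi t)).toReal) := ENNReal.ofReal_le_ofReal (hT2 t ht)
      _ = ENNReal.ofReal (t^q) * μ (Set.Ioi t) := by
          rw [ENNReal.ofReal_mul (by positivity), ENNReal.ofReal_toReal (measure_ne_top _ _)]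
  -- piece B
  have hB : ∫⁻ x in ⋃ i : Fin K, Set.Ioc (t/2^((i:ℕ)+1)) (t/2^(i:ℕ)), ENNReal.ofReal (x ^ q) ∂μ
      ≤ ENNReal.ofReal (s⁻¹ * (1 - (2:ℝ)^(-q)/s)⁻¹ * t^q) * μ (Set.Ioi t) := by
    have hterm : ∀ i : Fin K,
        ∫⁻ x in Set.Ioc (t/2^((i:ℕ)+1)) (t/2^(i:ℕ)), ENNReal.ofReal (x ^ q) ∂μ
        ≤ (ENNReal.ofReal (t^q * (μ (Set.Ioi t)).toReal * s⁻¹))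
            * (ENNReal.ofReal ((2:ℝ)^(-q)/s))^(i:ℕ) := by
      intro i
      have hi1K : (i:ℕ) + 1 ≤ K := i.2
      have hii : t₁ ≤ t / 2^((i:ℕ)+1) := by
        refine le_trans hKa ?_
        apply div_le_div_of_nonneg_left ht0.le (by positivity)
        exact pow_le_pow_right₀ (by norm_num) hi1K
      have hmeas : μ (Set.Ioi (t / 2^((i:ℕ)+1)))
          ≤ ENNReal.ofReal (s⁻¹^((i:ℕ)+1) * (μ (Set.Ioi t)).toReal) := by
        rw [← ENNReal.ofReal_toReal (measure_ne_top μ (Set.Ioi (t / 2^((i:ℕ)+1))))]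
        exact ENNReal.ofReal_le_ofReal (hdown ((i:ℕ)+1) hii)
      have hstep : ∫⁻ x in Set.Ioc (t/2^((i:ℕ)+1)) (t/2^(i:ℕ)), ENNReal.ofReal (x ^ q) ∂μ
          ≤ ENNReal.ofReal ((t/2^(i:ℕ))^q) * μ (Set.Ioi (t/2^((i:ℕ)+1))) := by
        calc ∫⁻ x in Set.Ioc (t/2^((i:ℕ)+1)) (t/2^(i:ℕ)), ENNReal.ofReal (x ^ q) ∂μ
            ≤ ∫⁻ _ in Set.Ioc (t/2^((i:ℕ)+1)) (t/2^(i:ℕ)), ENNReal.ofReal ((t/2^(i:ℕ)) ^ q) ∂μ := by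
              refine setLIntegral_mono' measurableSet_Ioc fun x hx => ?_
              refine ENNReal.ofReal_le_ofReal (Real.rpow_le_rpow ?_ hx.2 hq.le)
              have : (0:ℝ) < t/2^((i:ℕ)+1) := by positivity
              linarith [hx.1]
          _ = ENNReal.ofReal ((t/2^(i:ℕ)) ^ q) * μ (Set.Ioc (t/2^((i:ℕ)+1)) (t/2^(i:ℕ))) :=
              setLIntegral_const _ _
          _ ≤ ENNReal.ofReal ((t/2^(i:ℕ)) ^ q) * μ (Set.Ioi (t/2^((i:ℕ)+1))) :=
              mul_le_mul_right (measure_mono Set.Ioc_subset_Ioi_self) _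
      have hrealeq : (t/2^(i:ℕ))^q * (s⁻¹^((i:ℕ)+1) * (μ (Set.Ioi t)).toReal)
          = (t^q * (μ (Set.Ioi t)).toReal * s⁻¹) * ((2:ℝ)^(-q)/s)^(i:ℕ) := by
        have hpowq : ((2:ℝ)^(i:ℕ) : ℝ)^q = ((2:ℝ)^q)^(i:ℕ) := by
          rw [← Real.rpow_natCast (2:ℝ) (i:ℕ), ← Real.rpow_natCast ((2:ℝ)^q) (i:ℕ),
            ← Real.rpow_mul (by norm_num), ← Real.rpow_mul (by norm_num), mul_comm]
        have hnegq : (2:ℝ)^(-q) = ((2:ℝ)^q)⁻¹ := Real.rpow_neg (by norm_num) q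
        have h2qpos : (0:ℝ) < (2:ℝ)^q := Real.rpow_pos_of_pos (by norm_num) q
        rw [Real.div_rpow ht0.le (by positivity), hpowq, hnegq, div_pow, inv_pow, pow_succ]
        field_simp
        rw [mul_comm (((2:ℝ)^q)^(i:ℕ)), mul_assoc, ← mul_pow, mul_one_div_cancel h2qpos.ne', one_pow, mul_one]
      calc ∫⁻ x in Set.Ioc (t/2^((i:ℕ)+1)) (t/2^(i:ℕ)), ENNReal.ofReal (x ^ q) ∂μ
          ≤ ENNReal.ofReal ((t/2^(i:ℕ))^q) * ENNReal.ofReal (s⁻¹^((i:ℕ)+1) * (μ (Set.Ioi t)).toReal) :=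
            le_trans hstep (mul_le_mul_right hmeas _)
        _ = ENNReal.ofReal ((t/2^(i:ℕ))^q * (s⁻¹^((i:ℕ)+1) * (μ (Set.Ioi t)).toReal)) := by
            rw [← ENNReal.ofReal_mul (by positivity)]
        _ = ENNReal.ofReal ((t^q * (μ (Set.Ioi t)).toReal * s⁻¹) * ((2:ℝ)^(-q)/s)^(i:ℕ)) := by
            rw [hrealeq]
        _ = (ENNReal.ofReal (t^q * (μ (Set.Ioi t)).toReal * s⁻¹))
              * (ENNReal.ofReal ((2:ℝ)^(-q)/s))^(i:ℕ) := by
            rw [ENNReal.ofReal_mul (by positivity), ENNReal.ofReal_pow hds0.le]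
    calc ∫⁻ x in ⋃ i : Fin K, Set.Ioc (t/2^((i:ℕ)+1)) (t/2^(i:ℕ)), ENNReal.ofReal (x ^ q) ∂μ
        ≤ ∑' i : Fin K, ∫⁻ x in Set.Ioc (t/2^((i:ℕ)+1)) (t/2^(i:ℕ)), ENNReal.ofReal (x ^ q) ∂μ :=
          lintegral_iUnion_le _ _
      _ ≤ ∑' i : Fin K, (ENNReal.ofReal (t^q * (μ (Set.Ioi t)).toReal * s⁻¹))
            * (ENNReal.ofReal ((2:ℝ)^(-q)/s))^(i:ℕ) := ENNReal.tsum_le_tsum hterm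
      _ ≤ ∑' i : ℕ, (ENNReal.ofReal (t^q * (μ (Set.Ioi t)).toReal * s⁻¹))
            * (ENNReal.ofReal ((2:ℝ)^(-q)/s))^i := by
          rw [tsum_fintype]
          rw [Fin.sum_univ_eq_sum_range
            (fun i => (ENNReal.ofReal (t^q * (μ (Set.Ioi t)).toReal * s⁻¹))
              * (ENNReal.ofReal ((2:ℝ)^(-q)/s))^i) K]
          exact ENNReal.sum_le_tsum _
      _ = (ENNReal.ofReal (t^q * (μ (Set.Ioi t)).toReal * s⁻¹))
            * ENNReal.ofReal ((1 - (2:ℝ)^(-q)/s)⁻¹) := by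
          rw [ENNReal.tsum_mul_left, ENNReal.tsum_geometric,
            ENNReal.ofReal_inv_of_pos (by linarith), ENNReal.ofReal_sub _ hds0.le,
            ENNReal.ofReal_one]
      _ = ENNReal.ofReal (s⁻¹ * (1 - (2:ℝ)^(-q)/s)⁻¹ * t^q) * μ (Set.Ioi t) := by
          rw [← ENNReal.ofReal_mul (by positivity),
            show t^q * (μ (Set.Ioi t)).toReal * s⁻¹ * (1 - (2:ℝ)^(-q)/s)⁻¹
              = (s⁻¹ * (1 - (2:ℝ)^(-q)/s)⁻¹ * t^q) * (μ (Set.Ioi t)).toReal by ring,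
            ENNReal.ofReal_mul hcoef, ENNReal.ofReal_toReal (measure_ne_top _ _)]
  calc ∫⁻ x in Set.Ioc 0 t, ENNReal.ofReal (x ^ q) ∂μ
      ≤ ∫⁻ x in Set.Ioc 0 (t / 2^K) ∪ ⋃ i : Fin K, Set.Ioc (t/2^((i:ℕ)+1)) (t/2^(i:ℕ)),
          ENNReal.ofReal (x ^ q) ∂μ := lintegral_mono_set hcov
    _ ≤ ∫⁻ x in Set.Ioc 0 (t / 2^K), ENNReal.ofReal (x ^ q) ∂μ
          + ∫⁻ x in ⋃ i : Fin K, Set.Ioc (t/2^((i:ℕ)+1)) (t/2^(i:ℕ)), ENNReal.ofReal (x ^ q) ∂μ :=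
        lintegral_union_le _ _ _
    _ ≤ ENNReal.ofReal (t^q) * μ (Set.Ioi t)
          + ENNReal.ofReal (s⁻¹ * (1 - (2:ℝ)^(-q)/s)⁻¹ * t^q) * μ (Set.Ioi t) := add_le_add hA hB
    _ = ENNReal.ofReal ((1 + s⁻¹ * (1 - (2:ℝ)^(-q)/s)⁻¹) * t^q) * μ (Set.Ioi t) := by
        rw [← add_mul]
        congr 1
        rw [show (1 + s⁻¹ * (1 - (2:ℝ)^(-q)/s)⁻¹) * t^q
          = t^q + s⁻¹ * (1 - (2:ℝ)^(-q)/s)⁻¹ * t^q by ring]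
        rw [ENNReal.ofReal_add (by positivity) (mul_nonneg (mul_nonneg (inv_nonneg.mpr hs.le) hinv) (Real.rpow_nonneg (le_of_lt ht0) q))]

lemma aux_ratio_iter_up (μ : Measure ℝ) [IsFiniteMeasure μ]
    (r t₀ : ℝ) (hr : 0 < r)
    (hrat : ∀ v : ℝ, t₀ ≤ v → (μ (Set.Ioi (2*v))).toReal ≤ r * (μ (Set.Ioi v)).toReal)
    (t : ℝ) (ht0 : 0 < t) (ht : t₀ ≤ t) :
    ∀ k : ℕ, μ (Set.Ioi ((2:ℝ)^k * t)) ≤ (ENNReal.ofReal r) ^ k * μ (Set.Ioi t) := by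
  intro k
  induction k with
  | zero => simp
  | succ k ih =>
    have h2k : (1:ℝ) ≤ 2^k := one_le_pow₀ (by norm_num)
    have hv : t₀ ≤ 2^k * t := le_trans ht (le_mul_of_one_le_left ht0.le h2k)
    have hre := hrat ((2:ℝ)^k * t) hv
    have heq : (2:ℝ)^(k+1) * t = 2 * ((2:ℝ)^k * t) := by ring
    calc μ (Set.Ioi ((2:ℝ)^(k+1) * t))
        = ENNReal.ofReal ((μ (Set.Ioi (2 * ((2:ℝ)^k * t)))).toReal) := by
          rw [← heq, ENNReal.ofReal_toReal (measure_ne_top _ _)]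
      _ ≤ ENNReal.ofReal (r * (μ (Set.Ioi ((2:ℝ)^k * t))).toReal) := ENNReal.ofReal_le_ofReal hre
      _ = ENNReal.ofReal r * μ (Set.Ioi ((2:ℝ)^k * t)) := by
          rw [ENNReal.ofReal_mul hr.le, ENNReal.ofReal_toReal (measure_ne_top _ _)]
      _ ≤ ENNReal.ofReal r * ((ENNReal.ofReal r) ^ k * μ (Set.Ioi t)) := by
          exact mul_le_mul_right ih _
      _ = (ENNReal.ofReal r) ^ (k+1) * μ (Set.Ioi t) := by ring

lemma aux_tail_s5 (μ : Measure ℝ) [IsFiniteMeasure μ]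
    (r t₀ : ℝ) (hr : 0 < r) (ht₀ : 1 ≤ t₀)
    (hrat : ∀ v : ℝ, t₀ ≤ v → (μ (Set.Ioi (2*v))).toReal ≤ r * (μ (Set.Ioi v)).toReal)
    (p : ℝ) (hp : 0 ≤ p) (hrp : (2:ℝ)^p * r < 1) :
    ∀ t : ℝ, t₀ ≤ t → ∫⁻ x in Set.Ioi t, ENNReal.ofReal (x ^ p) ∂μ
      ≤ ENNReal.ofReal ((2:ℝ)^p * (1 - (2:ℝ)^p*r)⁻¹ * t ^ p) * μ (Set.Ioi t) := by
  intro t ht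
  have ht0 : 0 < t := lt_of_lt_of_le (by linarith) ht
  have h2p : (0:ℝ) < (2:ℝ)^p := Real.rpow_pos_of_pos (by norm_num) p
  -- covering
  have hcov : Set.Ioi t ⊆ ⋃ k : ℕ, Set.Ioc ((2:ℝ)^k * t) ((2:ℝ)^(k+1) * t) := by
    intro x hx
    have hxt : t < x := hx
    have hex : ∃ n : ℕ, x ≤ 2^n * t := by
      obtain ⟨n, hn⟩ := pow_unbounded_of_one_lt (x/t) (by norm_num : (1:ℝ) < 2)
      exact ⟨n, le_of_lt (by rw [div_lt_iff₀ ht0] at hn; linarith [hn])⟩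
    have hK := Nat.find_spec hex
    have hK0 : Nat.find hex ≠ 0 := by
      intro h0
      rw [h0] at hK; simp at hK; linarith
    obtain ⟨m, hm⟩ := Nat.exists_eq_succ_of_ne_zero hK0
    have hmlt : ¬ (x ≤ 2^m * t) := Nat.find_min hex (by omega)
    push_neg at hmlt
    refine Set.mem_iUnion.mpr ⟨m, ?_, ?_⟩
    · exact hmlt
    · rw [← Nat.succ_eq_add_one, ← hm]; exact hK
  have hterm : ∀ k : ℕ, ∫⁻ x in Set.Ioc ((2:ℝ)^k * t) ((2:ℝ)^(k+1) * t), ENNReal.ofReal (x ^ p) ∂μ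
      ≤ (ENNReal.ofReal ((2:ℝ)^p * t^p) * μ (Set.Ioi t)) * (ENNReal.ofReal ((2:ℝ)^p * r)) ^ k := by
    intro k
    have hb : (0:ℝ) < 2^k * t := by positivity
    have hstep1 : ∫⁻ x in Set.Ioc ((2:ℝ)^k * t) ((2:ℝ)^(k+1) * t), ENNReal.ofReal (x ^ p) ∂μ
        ≤ ENNReal.ofReal (((2:ℝ)^(k+1) * t) ^ p) * μ (Set.Ioc ((2:ℝ)^k * t) ((2:ℝ)^(k+1) * t)) := by
      rw [← setLIntegral_const]
      refine setLIntegral_mono' measurableSet_Ioc fun x hx => ?_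
      exact ENNReal.ofReal_le_ofReal (Real.rpow_le_rpow (le_of_lt (lt_of_le_of_lt hb.le hx.1)) hx.2 hp)
    have hstep2 : μ (Set.Ioc ((2:ℝ)^k * t) ((2:ℝ)^(k+1) * t)) ≤ (ENNReal.ofReal r)^k * μ (Set.Ioi t) :=
      le_trans (measure_mono Set.Ioc_subset_Ioi_self)
        (aux_ratio_iter_up μ r t₀ hr hrat t ht0 ht k)
    have hpow : (((2:ℝ)^(k+1) * t) : ℝ) ^ p = (2:ℝ)^p * t^p * ((2:ℝ)^p)^k := by
      have h1 : ((2:ℝ)^(k+1)) ^ p = ((2:ℝ)^p)^(k+1) := by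
        rw [← Real.rpow_natCast (2:ℝ) (k+1), ← Real.rpow_natCast ((2:ℝ)^p) (k+1),
          ← Real.rpow_mul (by norm_num), ← Real.rpow_mul (by norm_num), mul_comm]
      rw [Real.mul_rpow (by positivity) ht0.le, h1, pow_succ]
      ring
    calc ∫⁻ x in Set.Ioc ((2:ℝ)^k * t) ((2:ℝ)^(k+1) * t), ENNReal.ofReal (x ^ p) ∂μ
        ≤ ENNReal.ofReal (((2:ℝ)^(k+1) * t) ^ p) * ((ENNReal.ofReal r)^k * μ (Set.Ioi t)) :=
          le_trans hstep1 (mul_le_mul_right hstep2 _)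
      _ = (ENNReal.ofReal ((2:ℝ)^p * t^p) * μ (Set.Ioi t)) * (ENNReal.ofReal ((2:ℝ)^p * r)) ^ k := by
          rw [hpow, ENNReal.ofReal_mul (by positivity), ENNReal.ofReal_pow h2p.le,
            ENNReal.ofReal_mul (by positivity), ENNReal.ofReal_mul h2p.le, mul_pow]
          ring
  have hgeo : ∑' k : ℕ, (ENNReal.ofReal ((2:ℝ)^p * r)) ^ k = ENNReal.ofReal ((1 - (2:ℝ)^p * r)⁻¹) := by
    rw [ENNReal.tsum_geometric]
    rw [ENNReal.ofReal_inv_of_pos (by linarith)]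
    congr 1
    rw [ENNReal.ofReal_sub _ (by positivity), ENNReal.ofReal_one]
  calc ∫⁻ x in Set.Ioi t, ENNReal.ofReal (x ^ p) ∂μ
      ≤ ∑' k : ℕ, ∫⁻ x in Set.Ioc ((2:ℝ)^k * t) ((2:ℝ)^(k+1) * t), ENNReal.ofReal (x ^ p) ∂μ :=
        le_trans (lintegral_mono_set hcov) (lintegral_iUnion_le _ _)
    _ ≤ ∑' k : ℕ, (ENNReal.ofReal ((2:ℝ)^p * t^p) * μ (Set.Ioi t)) * (ENNReal.ofReal ((2:ℝ)^p * r)) ^ k :=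
        ENNReal.tsum_le_tsum hterm
    _ = (ENNReal.ofReal ((2:ℝ)^p * t^p) * μ (Set.Ioi t)) * ENNReal.ofReal ((1 - (2:ℝ)^p * r)⁻¹) := by
        rw [ENNReal.tsum_mul_left, hgeo]
    _ = ENNReal.ofReal ((2:ℝ)^p * (1 - (2:ℝ)^p*r)⁻¹ * t ^ p) * μ (Set.Ioi t) := by
        have hh : ENNReal.ofReal ((2:ℝ)^p * (1 - (2:ℝ)^p*r)⁻¹ * t ^ p)
            = ENNReal.ofReal ((2:ℝ)^p * t^p) * ENNReal.ofReal ((1-(2:ℝ)^p*r)⁻¹) := by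
          rw [← ENNReal.ofReal_mul (by positivity)]
          congr 1
          ring
        rw [hh]
        ring


set_option maxHeartbeats 1000000 in
theorem regvar_family_limit_largepow
    (γ : ℝ) (hγ : 0 < γ)
    (μ : Measure ℝ) [IsProbabilityMeasure μ]
    (hsupp : μ (Set.Iio 0) = 0)
    (hpos : ∀ v : ℝ, 0 < μ (Set.Ioi v))
    (hreg : ∀ a > (0:ℝ), Tendsto
      (fun v : ℝ => (μ (Set.Ioi (a * v))).toReal / (μ (Set.Ioi v)).toReal)
      atTop (𝓝 (a ^ (-γ))))
    (f : ℝ → ℝ → ℝ) (hmeas : ∀ ρ > (0:ℝ), Measurable (f ρ))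
    (p q c : ℝ) (hp : 0 < p) (hpγ : p < γ) (hγq : γ < q) (hc : 0 < c)
    (hsup : ∀ a > (0:ℝ), ∀ ε > (0:ℝ), ∀ᶠ ρ in 𝓝[>] (0:ℝ),
      ∀ v, 0 < v → v ≤ a → v ^ (-q) * (μ (Set.Ioi ρ⁻¹)).toReal * |f ρ v| ≤ ε)
    (hbound : ∀ ρ > (0:ℝ), ∀ v > (0:ℝ),
      (μ (Set.Ioi ρ⁻¹)).toReal * |f ρ v| ≤ c * v ^ p) :
    Tendsto
      (fun ρ : ℝ => ∫ v in Set.Ioi (0:ℝ), f ρ v ∂(Measure.map (fun x => ρ * x) μ))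
      (𝓝[>] (0:ℝ)) (𝓝 0) := by
  have hq : 0 < q := lt_trans hγ hγq
  rw [Metric.tendsto_nhds]
  intro ε' hε'
  -- upper ratio bound at factor 2
  have h2γp : (2:ℝ)^(-γ) < (2:ℝ)^(-p) :=
    (Real.rpow_lt_rpow_left_iff (by norm_num : (1:ℝ) < 2)).mpr (by linarith)
  set r : ℝ := ((2:ℝ)^(-γ) + (2:ℝ)^(-p))/2 with hrdef
  have h2γ0 : (0:ℝ) < (2:ℝ)^(-γ) := Real.rpow_pos_of_pos (by norm_num) _
  have h2p0 : (0:ℝ) < (2:ℝ)^(p) := Real.rpow_pos_of_pos (by norm_num) _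
  have hr0 : 0 < r := by positivity
  have hrlt : (2:ℝ)^(-γ) < r := by rw [hrdef]; linarith
  have hrup : r < (2:ℝ)^(-p) := by rw [hrdef]; linarith
  have h2pr : (2:ℝ)^p * r < 1 := by
    have h1 : (2:ℝ)^p * r < (2:ℝ)^p * (2:ℝ)^(-p) := mul_lt_mul_of_pos_left hrup h2p0
    rw [← Real.rpow_add (by norm_num), add_neg_cancel, Real.rpow_zero] at h1
    exact h1
  obtain ⟨t₀', ht₀'⟩ := eventually_atTop.mp
    ((hreg 2 (by norm_num)).eventually_le_const hrlt)
  set t₀ : ℝ := max t₀' 1 with ht₀def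
  have ht₀1 : 1 ≤ t₀ := le_max_right _ _
  have hrat : ∀ v : ℝ, t₀ ≤ v → (μ (Set.Ioi (2*v))).toReal ≤ r * (μ (Set.Ioi v)).toReal := by
    intro v hv
    have h := ht₀' v (le_trans (le_max_left _ _) hv)
    have hGv : 0 < (μ (Set.Ioi v)).toReal :=
      ENNReal.toReal_pos (hpos v).ne' (measure_ne_top _ _)
    rwa [div_le_iff₀ hGv] at h
  set CA : ℝ := (2:ℝ)^p * (1 - (2:ℝ)^p*r)⁻¹ with hCAdef
  have hCA0 : 0 < CA := mul_pos h2p0 (inv_pos.mpr (by linarith))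
  have hA := aux_tail_s5 μ r t₀ hr0 ht₀1 hrat p hp.le h2pr
  -- choice of a
  set a : ℝ := max 1 ((4*c*CA/ε')^((γ-p)⁻¹)) with hadef
  have ha1 : 1 ≤ a := le_max_left _ _
  have ha0 : 0 < a := by linarith
  have haγ0 : 0 < a^(-γ) := Real.rpow_pos_of_pos ha0 _
  have hkey2 : c * CA * a^p * (2*a^(-γ)) ≤ ε'/2 := by
    have hb0 : 0 < 4*c*CA/ε' := by positivity
    have haγp : 4*c*CA/ε' ≤ a^(γ-p) := by
      have hEq : ((4*c*CA/ε')^((γ-p)⁻¹))^(γ-p) = 4*c*CA/ε' := by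
        rw [← Real.rpow_mul hb0.le, inv_mul_cancel₀ (ne_of_gt (by linarith : (0:ℝ) < γ - p)),
          Real.rpow_one]
      calc 4*c*CA/ε' = ((4*c*CA/ε')^((γ-p)⁻¹))^(γ-p) := hEq.symm
        _ ≤ a^(γ-p) := Real.rpow_le_rpow (Real.rpow_nonneg hb0.le _) (le_max_right _ _)
            (by linarith)
    have hpγa : a^p * a^(-γ) = (a^(γ-p))⁻¹ := by
      rw [← Real.rpow_add ha0, ← Real.rpow_neg ha0.le]
      congr 1
      ring
    have hpos2 : 0 < a^(γ-p) := Real.rpow_pos_of_pos ha0 _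
    have hinv2 : (a^(γ-p))⁻¹ ≤ (4*c*CA/ε')⁻¹ := by
      apply inv_anti₀ hb0 haγp
    calc c*CA*a^p*(2*a^(-γ)) = 2*c*CA * (a^p*a^(-γ)) := by ring
      _ = 2*c*CA * (a^(γ-p))⁻¹ := by rw [hpγa]
      _ ≤ 2*c*CA * (4*c*CA/ε')⁻¹ := mul_le_mul_of_nonneg_left hinv2 (by positivity)
      _ = ε'/2 := by
          rw [inv_div]
          field_simp
          ring
  set R : ℝ := 2*a^(-γ) with hRdef
  have hR0 : 0 < R := by positivity
  have hra : a^(-γ) < R := by rw [hRdef]; linarith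
  obtain ⟨tR, htR⟩ := eventually_atTop.mp ((hreg a ha0).eventually_le_const hra)
  have hrata : ∀ v : ℝ, tR ≤ v → (μ (Set.Ioi (a*v))).toReal ≤ R * (μ (Set.Ioi v)).toReal := by
    intro v hv
    have h := htR v hv
    have hGv : 0 < (μ (Set.Ioi v)).toReal :=
      ENNReal.toReal_pos (hpos v).ne' (measure_ne_top _ _)
    rwa [div_le_iff₀ hGv] at h
  -- lower ratio bound and truncated moments
  set β : ℝ := (γ+q)/2 with hβdef
  have hβγ : γ < β := by rw [hβdef]; linarith
  have hβq : β < q := by rw [hβdef]; linarith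
  have hβ0 : 0 < β := by linarith
  set s : ℝ := (2:ℝ)^(-β) with hsdef
  have hs0 : 0 < s := Real.rpow_pos_of_pos (by norm_num) _
  have hsβ : s * (2:ℝ)^β = 1 := by
    rw [hsdef, ← Real.rpow_add (by norm_num), neg_add_cancel, Real.rpow_zero]
  have hsγ : s < (2:ℝ)^(-γ) :=
    (Real.rpow_lt_rpow_left_iff (by norm_num : (1:ℝ) < 2)).mpr (by linarith)
  obtain ⟨t₁', ht₁'⟩ := eventually_atTop.mp
    ((hreg 2 (by norm_num)).eventually_const_le hsγ)
  set t₁ : ℝ := max t₁' 1 with ht₁def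
  have ht₁1 : 1 ≤ t₁ := le_max_right _ _
  have hratl : ∀ v : ℝ, t₁ ≤ v → s * (μ (Set.Ioi v)).toReal ≤ (μ (Set.Ioi (2*v))).toReal := by
    intro v hv
    have h := ht₁' v (le_trans (le_max_left _ _) hv)
    have hGv : 0 < (μ (Set.Ioi v)).toReal :=
      ENNReal.toReal_pos (hpos v).ne' (measure_ne_top _ _)
    rwa [le_div_iff₀ hGv] at h
  have hlow := aux_lower μ s t₁ hs0 ht₁1 hratl β hβ0 hsβ
  set c₀ : ℝ := s * (μ (Set.Ioi t₁)).toReal * t₁^β with hc₀def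
  have hGt₁ : 0 < (μ (Set.Ioi t₁)).toReal :=
    ENNReal.toReal_pos (hpos t₁).ne' (measure_ne_top _ _)
  have hc₀0 : 0 < c₀ := by
    rw [hc₀def]
    have : (0:ℝ) < t₁^β := Real.rpow_pos_of_pos (by linarith) _
    positivity
  have hsq2 : (2:ℝ)^(-q) < s :=
    (Real.rpow_lt_rpow_left_iff (by norm_num : (1:ℝ) < 2)).mpr (by linarith)
  obtain ⟨T₂, hT₂⟩ := eventually_atTop.mp
    ((tendsto_rpow_atTop (by linarith : (0:ℝ) < q - β)).eventually_ge_atTop ((2*t₁)^q / c₀))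
  set TB : ℝ := max t₁ (max T₂ 1) with hTBdef
  have hTBt₁ : t₁ ≤ TB := le_max_left _ _
  have hT2' : ∀ t : ℝ, TB ≤ t → (2*t₁)^q ≤ t^q * (μ (Set.Ioi t)).toReal := by
    intro t ht
    have ht1 : t₁ ≤ t := le_trans hTBt₁ ht
    have ht0 : 0 < t := by linarith
    have hl := hlow t ht1
    have h2 := hT₂ t (le_trans (le_trans (le_max_left T₂ 1) (le_max_right t₁ _)) ht)
    have hqβ : c₀ * t^(q-β) = t^q * (c₀ * t^(-β)) := by
      rw [show q-β = q + -β by ring, Real.rpow_add ht0]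
      ring
    calc (2*t₁)^q = c₀ * ((2*t₁)^q / c₀) := by field_simp
      _ ≤ c₀ * t^(q-β) := mul_le_mul_of_nonneg_left h2 hc₀0.le
      _ = t^q * (c₀ * t^(-β)) := hqβ
      _ ≤ t^q * (μ (Set.Ioi t)).toReal := by
          apply mul_le_mul_of_nonneg_left _ (Real.rpow_nonneg ht0.le q)
          exact hl
  set CB : ℝ := 1 + s⁻¹ * (1 - (2:ℝ)^(-q)/s)⁻¹ with hCBdef
  have hds1 : (2:ℝ)^(-q)/s < 1 := (div_lt_one hs0).mpr hsq2
  have h2q0 : (0:ℝ) < (2:ℝ)^(-q) := Real.rpow_pos_of_pos (by norm_num) _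
  have hCB0 : 0 < CB := by
    have h1 : (0:ℝ) ≤ s⁻¹ * (1 - (2:ℝ)^(-q)/s)⁻¹ :=
      mul_nonneg (inv_nonneg.mpr hs0.le) (inv_nonneg.mpr (by linarith))
    rw [hCBdef]; linarith
  have hB := aux_trunc_s5 μ s t₁ hs0 ht₁1 hratl q hq hsq2 TB hTBt₁ hT2'
  -- choice of ε and M
  have haq0 : (0:ℝ) < a^q := Real.rpow_pos_of_pos ha0 _
  set ε : ℝ := ε' / (4 * (CB * a^q * R)) with hεdef
  have hε0 : 0 < ε := by rw [hεdef]; positivity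
  set M : ℝ := max t₀ (max tR TB) with hMdef
  have hM0 : 0 < M := lt_of_lt_of_le (by linarith) (le_max_left t₀ _)
  have hE2 : ∀ᶠ ρ in 𝓝[>] (0:ℝ), ρ < M⁻¹ :=
    Filter.Eventually.filter_mono nhdsWithin_le_nhds (eventually_lt_nhds (by positivity))
  have hE3 : ∀ᶠ ρ in 𝓝[>] (0:ℝ), (0:ℝ) < ρ := eventually_mem_nhdsWithin
  filter_upwards [hsup a ha0 ε hε0, hE2, hE3] with ρ h1 h2 h3
  -- per ρ facts
  have hMρ : M < ρ⁻¹ := by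
    have := inv_strictAnti₀ h3 h2
    rwa [inv_inv] at this
  have hρinv0 : 0 < ρ⁻¹ := inv_pos.mpr h3
  have hGt : 0 < (μ (Set.Ioi ρ⁻¹)).toReal :=
    ENNReal.toReal_pos (hpos _).ne' (measure_ne_top _ _)
  have hinvaρ : a/ρ = a * ρ⁻¹ := div_eq_mul_inv a ρ
  have hρinvle : ρ⁻¹ ≤ a/ρ := by
    rw [hinvaρ]
    exact le_mul_of_one_le_left hρinv0.le ha1
  have haρTB : TB ≤ a/ρ :=
    le_trans (le_trans (le_trans (le_max_right tR TB) (le_max_right t₀ (max tR TB))) hMρ.le)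
      hρinvle
  have haρt₀ : t₀ ≤ a/ρ :=
    le_trans (le_trans (le_max_left t₀ _) hMρ.le) hρinvle
  have hratio : (μ (Set.Ioi (a * ρ⁻¹))).toReal ≤ R * (μ (Set.Ioi ρ⁻¹)).toReal :=
    hrata ρ⁻¹ (le_trans (le_trans (le_max_left tR TB) (le_max_right t₀ _)) hMρ.le)
  have hmρ : Measurable fun x : ℝ => ρ * x := measurable_id.const_mul ρ
  have hfm : Measurable fun v : ℝ => ENNReal.ofReal ‖f ρ v‖ := ((hmeas ρ h3).norm).ennreal_ofReal
  set ν := Measure.map (fun x : ℝ => ρ * x) μ with hνdef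
  have hsplit : Set.Ioc (0:ℝ) a ∪ Set.Ioi a = Set.Ioi (0:ℝ) := Set.Ioc_union_Ioi_eq_Ioi ha0.le
  -- preimages
  have hpre1 : (fun x : ℝ => ρ * x) ⁻¹' (Set.Ioc 0 a) = Set.Ioc 0 (a/ρ) := by
    ext x
    simp only [Set.mem_preimage, Set.mem_Ioc]
    constructor
    · rintro ⟨hx1, hx2⟩
      refine ⟨(mul_pos_iff_of_pos_left h3).mp hx1, ?_⟩
      rw [le_div_iff₀ h3]
      linarith [mul_comm x ρ]
    · rintro ⟨hx1, hx2⟩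
      refine ⟨mul_pos h3 hx1, ?_⟩
      have := (le_div_iff₀ h3).mp hx2
      linarith [mul_comm x ρ]
  have hpre2 : (fun x : ℝ => ρ * x) ⁻¹' (Set.Ioi a) = Set.Ioi (a/ρ) := by
    ext x
    simp only [Set.mem_preimage, Set.mem_Ioi]
    rw [div_lt_iff₀ h3]
    constructor <;> intro h <;> linarith [mul_comm x ρ]
  -- pointwise bound, small part
  have hpt1 : ∀ x ∈ Set.Ioc (0:ℝ) (a/ρ), ENNReal.ofReal ‖f ρ (ρ*x)‖
      ≤ ENNReal.ofReal (ε/(μ (Set.Ioi ρ⁻¹)).toReal * ρ^q) * ENNReal.ofReal (x^q) := by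
    intro x hx
    have hv0 : 0 < ρ * x := mul_pos h3 hx.1
    have hva : ρ * x ≤ a := by
      have := (le_div_iff₀ h3).mp hx.2
      linarith [mul_comm x ρ]
    have h := h1 (ρ*x) hv0 hva
    have hvq : 0 < (ρ*x)^q := Real.rpow_pos_of_pos hv0 q
    rw [Real.rpow_neg hv0.le] at h
    have hfb : |f ρ (ρ*x)| ≤ ε * (ρ*x)^q / (μ (Set.Ioi ρ⁻¹)).toReal := by
      rw [le_div_iff₀ hGt]
      have h' := mul_le_mul_of_nonneg_left h hvq.le
      calc |f ρ (ρ*x)| * (μ (Set.Ioi ρ⁻¹)).toReal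
          = (ρ*x)^q * (((ρ*x)^q)⁻¹ * (μ (Set.Ioi ρ⁻¹)).toReal * |f ρ (ρ*x)|) := by
            field_simp
        _ ≤ (ρ*x)^q * ε := h'
        _ = ε * (ρ*x)^q := mul_comm _ _
    have hveq : (ρ*x)^q = ρ^q * x^q := Real.mul_rpow h3.le hx.1.le
    have heq3 : ε * (ρ*x)^q / (μ (Set.Ioi ρ⁻¹)).toReal
        = (ε/(μ (Set.Ioi ρ⁻¹)).toReal * ρ^q) * x^q := by
      rw [hveq]
      field_simp
    calc ENNReal.ofReal ‖f ρ (ρ*x)‖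
        ≤ ENNReal.ofReal ((ε/(μ (Set.Ioi ρ⁻¹)).toReal * ρ^q) * x^q) := by
          apply ENNReal.ofReal_le_ofReal
          rw [Real.norm_eq_abs, ← heq3]
          exact hfb
      _ = ENNReal.ofReal (ε/(μ (Set.Ioi ρ⁻¹)).toReal * ρ^q) * ENNReal.ofReal (x^q) := by
          rw [ENNReal.ofReal_mul (by positivity)]
  -- pointwise bound, tail part
  have hpt2 : ∀ x ∈ Set.Ioi (a/ρ), ENNReal.ofReal ‖f ρ (ρ*x)‖
      ≤ ENNReal.ofReal (c/(μ (Set.Ioi ρ⁻¹)).toReal * ρ^p) * ENNReal.ofReal (x^p) := by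
    intro x hx
    have hx0 : 0 < x := lt_trans (by positivity) hx
    have hv0 : 0 < ρ * x := mul_pos h3 hx0
    have h := hbound ρ h3 (ρ*x) hv0
    have hfb : |f ρ (ρ*x)| ≤ c * (ρ*x)^p / (μ (Set.Ioi ρ⁻¹)).toReal := by
      rw [le_div_iff₀ hGt]
      linarith [mul_comm ((μ (Set.Ioi ρ⁻¹)).toReal) (|f ρ (ρ*x)|)]
    have hveq : (ρ*x)^p = ρ^p * x^p := Real.mul_rpow h3.le hx0.le
    have heq3 : c * (ρ*x)^p / (μ (Set.Ioi ρ⁻¹)).toReal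
        = (c/(μ (Set.Ioi ρ⁻¹)).toReal * ρ^p) * x^p := by
      rw [hveq]
      field_simp
    calc ENNReal.ofReal ‖f ρ (ρ*x)‖
        ≤ ENNReal.ofReal ((c/(μ (Set.Ioi ρ⁻¹)).toReal * ρ^p) * x^p) := by
          apply ENNReal.ofReal_le_ofReal
          rw [Real.norm_eq_abs, ← heq3]
          exact hfb
      _ = ENNReal.ofReal (c/(μ (Set.Ioi ρ⁻¹)).toReal * ρ^p) * ENNReal.ofReal (x^p) := by
          rw [ENNReal.ofReal_mul (by positivity)]
  have hmeasfin : μ (Set.Ioi (a * ρ⁻¹)) ≤ ENNReal.ofReal (R * (μ (Set.Ioi ρ⁻¹)).toReal) := by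
    rw [← ENNReal.ofReal_toReal (measure_ne_top μ (Set.Ioi (a*ρ⁻¹)))]
    exact ENNReal.ofReal_le_ofReal hratio
  have hρq0 : 0 < ρ^q := Real.rpow_pos_of_pos h3 q
  have hρp0 : 0 < ρ^p := Real.rpow_pos_of_pos h3 p
  -- Term 1
  have hT1 : ∫⁻ v in Set.Ioc (0:ℝ) a, ENNReal.ofReal ‖f ρ v‖ ∂ν ≤ ENNReal.ofReal (ε'/4) := by
    have e1 : ∫⁻ v in Set.Ioc (0:ℝ) a, ENNReal.ofReal ‖f ρ v‖ ∂ν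
        = ∫⁻ x in Set.Ioc 0 (a/ρ), ENNReal.ofReal ‖f ρ (ρ*x)‖ ∂μ := by
      rw [hνdef, Measure.restrict_map hmρ measurableSet_Ioc, lintegral_map hfm hmρ, hpre1]
    rw [e1]
    calc ∫⁻ x in Set.Ioc 0 (a/ρ), ENNReal.ofReal ‖f ρ (ρ*x)‖ ∂μ
        ≤ ∫⁻ x in Set.Ioc 0 (a/ρ),
            ENNReal.ofReal (ε/(μ (Set.Ioi ρ⁻¹)).toReal * ρ^q) * ENNReal.ofReal (x^q) ∂μ :=
          setLIntegral_mono' measurableSet_Ioc hpt1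
      _ = ENNReal.ofReal (ε/(μ (Set.Ioi ρ⁻¹)).toReal * ρ^q)
            * ∫⁻ x in Set.Ioc 0 (a/ρ), ENNReal.ofReal (x^q) ∂μ :=
          lintegral_const_mul _ ((Real.continuous_rpow_const hq.le).measurable.ennreal_ofReal)
      _ ≤ ENNReal.ofReal (ε/(μ (Set.Ioi ρ⁻¹)).toReal * ρ^q)
            * (ENNReal.ofReal (CB * (a/ρ)^q) * μ (Set.Ioi (a/ρ))) :=
          mul_le_mul_right (hB (a/ρ) haρTB) _
      _ ≤ ENNReal.ofReal (ε/(μ (Set.Ioi ρ⁻¹)).toReal * ρ^q)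
            * (ENNReal.ofReal (CB * (a/ρ)^q) * ENNReal.ofReal (R * (μ (Set.Ioi ρ⁻¹)).toReal)) := by
          apply mul_le_mul_right
          apply mul_le_mul_right
          rw [hinvaρ]
          exact hmeasfin
      _ = ENNReal.ofReal ((ε/(μ (Set.Ioi ρ⁻¹)).toReal * ρ^q)
            * ((CB * (a/ρ)^q) * (R * (μ (Set.Ioi ρ⁻¹)).toReal))) := by
          rw [ENNReal.ofReal_mul (show (0:ℝ) ≤ ε/(μ (Set.Ioi ρ⁻¹)).toReal * ρ^q by positivity),
            ENNReal.ofReal_mul (show (0:ℝ) ≤ CB * (a/ρ)^q by positivity)]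
      _ = ENNReal.ofReal (ε * (CB * a^q * R)) := by
          congr 1
          rw [Real.div_rpow ha0.le h3.le]
          have h' : ε/(μ (Set.Ioi ρ⁻¹)).toReal * ρ^q
                * (CB * (a^q/ρ^q) * (R * (μ (Set.Ioi ρ⁻¹)).toReal))
              = ε * (CB*a^q*R)
                * ((ρ^q/ρ^q) * ((μ (Set.Ioi ρ⁻¹)).toReal/(μ (Set.Ioi ρ⁻¹)).toReal)) := by
            ring
          rw [div_self hρq0.ne', div_self hGt.ne', mul_one, mul_one] at h'
          exact h'
      _ = ENNReal.ofReal (ε'/4) := by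
          congr 1
          have hXne : CB * a^q * R ≠ 0 := by positivity
          rw [hεdef, div_mul_eq_mul_div, div_eq_div_iff (by positivity) (by norm_num : (4:ℝ) ≠ 0)]
          ring
  -- Term 2
  have hT2 : ∫⁻ v in Set.Ioi a, ENNReal.ofReal ‖f ρ v‖ ∂ν ≤ ENNReal.ofReal (ε'/2) := by
    have e1 : ∫⁻ v in Set.Ioi a, ENNReal.ofReal ‖f ρ v‖ ∂ν
        = ∫⁻ x in Set.Ioi (a/ρ), ENNReal.ofReal ‖f ρ (ρ*x)‖ ∂μ := by
      rw [hνdef, Measure.restrict_map hmρ measurableSet_Ioi, lintegral_map hfm hmρ, hpre2]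
    rw [e1]
    calc ∫⁻ x in Set.Ioi (a/ρ), ENNReal.ofReal ‖f ρ (ρ*x)‖ ∂μ
        ≤ ∫⁻ x in Set.Ioi (a/ρ),
            ENNReal.ofReal (c/(μ (Set.Ioi ρ⁻¹)).toReal * ρ^p) * ENNReal.ofReal (x^p) ∂μ :=
          setLIntegral_mono' measurableSet_Ioi hpt2
      _ = ENNReal.ofReal (c/(μ (Set.Ioi ρ⁻¹)).toReal * ρ^p)
            * ∫⁻ x in Set.Ioi (a/ρ), ENNReal.ofReal (x^p) ∂μ :=
          lintegral_const_mul _ ((Real.continuous_rpow_const hp.le).measurable.ennreal_ofReal)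
      _ ≤ ENNReal.ofReal (c/(μ (Set.Ioi ρ⁻¹)).toReal * ρ^p)
            * (ENNReal.ofReal (CA * (a/ρ)^p) * μ (Set.Ioi (a/ρ))) :=
          mul_le_mul_right (hA (a/ρ) haρt₀) _
      _ ≤ ENNReal.ofReal (c/(μ (Set.Ioi ρ⁻¹)).toReal * ρ^p)
            * (ENNReal.ofReal (CA * (a/ρ)^p) * ENNReal.ofReal (R * (μ (Set.Ioi ρ⁻¹)).toReal)) := by
          apply mul_le_mul_right
          apply mul_le_mul_right
          rw [hinvaρ]
          exact hmeasfin
      _ = ENNReal.ofReal ((c/(μ (Set.Ioi ρ⁻¹)).toReal * ρ^p)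
            * ((CA * (a/ρ)^p) * (R * (μ (Set.Ioi ρ⁻¹)).toReal))) := by
          rw [ENNReal.ofReal_mul (show (0:ℝ) ≤ c/(μ (Set.Ioi ρ⁻¹)).toReal * ρ^p by positivity),
            ENNReal.ofReal_mul (show (0:ℝ) ≤ CA * (a/ρ)^p by positivity)]
      _ = ENNReal.ofReal (c * CA * a^p * R) := by
          congr 1
          rw [Real.div_rpow ha0.le h3.le]
          have h' : c/(μ (Set.Ioi ρ⁻¹)).toReal * ρ^p
                * (CA * (a^p/ρ^p) * (R * (μ (Set.Ioi ρ⁻¹)).toReal))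
              = c * CA * a^p * R
                * ((ρ^p/ρ^p) * ((μ (Set.Ioi ρ⁻¹)).toReal/(μ (Set.Ioi ρ⁻¹)).toReal)) := by
            ring
          rw [div_self hρp0.ne', div_self hGt.ne', mul_one, mul_one] at h'
          exact h'
      _ ≤ ENNReal.ofReal (ε'/2) := by
          apply ENNReal.ofReal_le_ofReal
          rw [hRdef]
          exact hkey2
  -- combine
  have htotal : ∫⁻ v in Set.Ioi (0:ℝ), ENNReal.ofReal ‖f ρ v‖ ∂ν ≤ ENNReal.ofReal (3*ε'/4) := by
    rw [← hsplit, lintegral_union measurableSet_Ioi (Set.Ioc_disjoint_Ioi le_rfl)]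
    calc ∫⁻ v in Set.Ioc (0:ℝ) a, ENNReal.ofReal ‖f ρ v‖ ∂ν
          + ∫⁻ v in Set.Ioi a, ENNReal.ofReal ‖f ρ v‖ ∂ν
        ≤ ENNReal.ofReal (ε'/4) + ENNReal.ofReal (ε'/2) := add_le_add hT1 hT2
      _ = ENNReal.ofReal (3*ε'/4) := by
          rw [← ENNReal.ofReal_add (by positivity) (by positivity)]
          congr 1
          ring
  rw [Real.dist_eq, sub_zero]
  calc |∫ v in Set.Ioi (0:ℝ), f ρ v ∂ν| = ‖∫ v in Set.Ioi (0:ℝ), f ρ v ∂ν‖ :=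
        (Real.norm_eq_abs _).symm
    _ ≤ (∫⁻ v in Set.Ioi (0:ℝ), ENNReal.ofReal ‖f ρ v‖ ∂ν).toReal :=
        norm_integral_le_lintegral_norm _
    _ ≤ 3*ε'/4 := ENNReal.toReal_le_of_le_ofReal (by positivity) htotal
    _ < ε' := by linarith
end

section
/- Let C be a bounded measurable subset of ℝᵈ whose topological boundary ∂C has Lebesgue measure zero. Then the Lebesgue measure of the symmetric difference |C Δ rC| tends to 0 as the real number r tends to 1, where rC = {rc : c ∈ C}. -/
open MeasureTheory Filter Topology Pointwise

theorem symmDiff_scaling_tendsto_zero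
    (d : ℕ) (hd : 0 < d)
    (C : Set (EuclideanSpace ℝ (Fin d)))
    (hCm : MeasurableSet C) (hCb : Bornology.IsBounded C)
    (hCfr : volume (frontier C) = 0) :
    Tendsto (fun r : ℝ => volume (symmDiff C (r • C))) (𝓝 (1:ℝ)) (𝓝 0) := by
  obtain ⟨R, hR0, hRC⟩ : ∃ R : ℝ, 0 ≤ R ∧ C ⊆ Metric.closedBall 0 R := by
    obtain ⟨R, hR⟩ := hCb.subset_closedBall 0
    exact ⟨max R 0, le_max_right _ _,
      hR.trans (Metric.closedBall_subset_closedBall (le_max_left _ _))⟩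
  set F : ℝ → EuclideanSpace ℝ (Fin d) → ENNReal :=
    fun r => Set.indicator (symmDiff C (r • C)) (fun _ => (1 : ENNReal))
  set bound : EuclideanSpace ℝ (Fin d) → ENNReal :=
    Set.indicator (Metric.closedBall (0 : EuclideanSpace ℝ (Fin d)) (2 * R))
      (fun _ => (1 : ENNReal))
  have hne : ∀ᶠ r : ℝ in 𝓝 1, r ≠ 0 := eventually_ne_nhds one_ne_zero
  have hmeasF : ∀ᶠ r : ℝ in 𝓝 1, Measurable (F r) := by
    filter_upwards [hne] with r hr
    exact (measurable_const.indicator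
      (hCm.symmDiff (hCm.const_smul₀ r)))
  have hsubset : ∀ᶠ r : ℝ in 𝓝 1, ∀ x, F r x ≤ bound x := by
    have : ∀ᶠ r : ℝ in 𝓝 1, |r| ≤ 2 := by
      have : Set.Icc (-2 : ℝ) 2 ∈ 𝓝 (1 : ℝ) :=
        Icc_mem_nhds (by norm_num) (by norm_num)
      filter_upwards [this] with r hr
      exact abs_le.mpr ⟨hr.1, hr.2⟩
    filter_upwards [this] with r hr x
    apply Set.indicator_le_indicator_of_subset _ (fun _ => zero_le)
    intro y hy
    have hy' : y ∈ C ∪ r • C := by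
      rcases Set.mem_symmDiff.mp hy with h | h
      · exact Or.inl h.1
      · exact Or.inr h.1
    rcases hy' with h | h
    · have := hRC h
      simp only [Metric.mem_closedBall, dist_zero_right] at this ⊢
      nlinarith
    · obtain ⟨c, hc, rfl⟩ := h
      have hc' := hRC hc
      simp only [Metric.mem_closedBall, dist_zero_right] at hc' ⊢
      rw [norm_smul]
      calc ‖r‖ * ‖c‖ ≤ 2 * R := by
            apply mul_le_mul hr hc' (norm_nonneg _) (by norm_num)
      _ ≤ 2 * R := le_refl _
  have hboundfin : ∫⁻ x, bound x ≠ ⊤ := by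
    simp only [bound]
    rw [lintegral_indicator_const measurableSet_closedBall, one_mul]
    exact (MeasureTheory.measure_closedBall_lt_top).ne
  have hlim : ∀ᵐ x, Tendsto (fun r => F r x) (𝓝 (1 : ℝ)) (𝓝 0) := by
    have hfr : ∀ᵐ x, x ∉ frontier C := by
      rw [MeasureTheory.ae_iff]
      simpa using hCfr
    filter_upwards [hfr] with x hx
    have hinv : Tendsto (fun r : ℝ => r⁻¹ • x) (𝓝 1) (𝓝 x) := by
      have h1 : Tendsto (fun r : ℝ => r⁻¹) (𝓝 1) (𝓝 ((1:ℝ)⁻¹)) :=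
        (continuousAt_inv₀ one_ne_zero).tendsto
      rw [inv_one] at h1
      simpa using h1.smul (tendsto_const_nhds (x := x))
    have key : ∀ᶠ r : ℝ in 𝓝 1, F r x = 0 := by
      by_cases hxc : x ∈ closure C
      · have hxi : x ∈ interior C := by
          by_contra h
          exact hx ⟨hxc, h⟩
        have h1 : ∀ᶠ r : ℝ in 𝓝 1, r⁻¹ • x ∈ interior C :=
          hinv.eventually_mem (isOpen_interior.mem_nhds hxi)
        filter_upwards [h1, hne] with r hr hr0
        apply Set.indicator_of_notMem
        have hxr : x ∈ r • C :=
          (Set.mem_smul_set_iff_inv_smul_mem₀ hr0 _ _).mpr (interior_subset hr)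
        intro h
        rcases Set.mem_symmDiff.mp h with ⟨_, h2⟩ | ⟨_, h2⟩
        · exact h2 hxr
        · exact h2 (interior_subset hxi)
      · have h1 : ∀ᶠ r : ℝ in 𝓝 1, r⁻¹ • x ∈ (closure C)ᶜ :=
          hinv.eventually_mem (isClosed_closure.isOpen_compl.mem_nhds hxc)
        filter_upwards [h1, hne] with r hr hr0
        apply Set.indicator_of_notMem
        have hxC : x ∉ C := fun h => hxc (subset_closure h)
        have hxr : x ∉ r • C := by
          intro h
          exact hr (subset_closure ((Set.mem_smul_set_iff_inv_smul_mem₀ hr0 _ _).mp h))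
        intro h
        rcases Set.mem_symmDiff.mp h with ⟨h1', _⟩ | ⟨h1', _⟩
        · exact hxC h1'
        · exact hxr h1'
    exact Tendsto.congr' (key.mono fun r h => h.symm) tendsto_const_nhds
  have hmain : Tendsto (fun r : ℝ => ∫⁻ x, F r x) (𝓝 1) (𝓝 (∫⁻ _x : EuclideanSpace ℝ (Fin d), (0:ENNReal))) := by
    refine tendsto_lintegral_filter_of_dominated_convergence bound hmeasF ?_ hboundfin hlim
    filter_upwards [hsubset] with r hr
    exact Filter.Eventually.of_forall hr
  simp only [lintegral_zero] at hmain
  apply hmain.congr'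
  filter_upwards [hne] with r hr
  rw [lintegral_indicator_const (hCm.symmDiff (hCm.const_smul₀ r)), one_mul]
end

section
/- Let C be a bounded measurable subset of ℝᵈ whose topological boundary ∂C has Lebesgue measure zero, and let φ be a finite signed measure on ℝᵈ. Then the function v ↦ ∫_{ℝᵈ} φ(x + v^{1/d}C)² dx is continuous on (0,∞). -/
open MeasureTheory Filter Topology Pointwise ENNReal

variable {d : ℕ}
local notation "E" => EuclideanSpace ℝ (Fin d)

lemma vadd_eq_preimage (x : E) (s : Set E) : x +ᵥ s = (fun y => y - x) ⁻¹' s := by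
  ext y
  simp [Set.mem_vadd_set_iff_neg_vadd_mem, sub_eq_neg_add]

lemma meas_vadd_fun (ν : Measure E) [SFinite ν] {s : Set E} (hs : MeasurableSet s) :
    Measurable fun x : E => ν (x +ᵥ s) := by
  have h : ∀ x : E, ν (x +ᵥ s) = ∫⁻ y, s.indicator 1 (y - x) ∂ν := by
    intro x
    rw [vadd_eq_preimage]
    rw [← lintegral_indicator_one (hs.preimage (measurable_sub_const x))]
    refine lintegral_congr fun y => ?_
    by_cases hy : y - x ∈ s <;> simp [Set.indicator_apply, hy]
  simp only [h]
  apply Measurable.lintegral_prod_right (f := fun x y => s.indicator 1 (y - x))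
  exact (measurable_const.indicator hs).comp (measurable_snd.sub measurable_fst)

lemma lintegral_vadd_meas (ν : Measure E) [IsFiniteMeasure ν] {s : Set E} (hs : MeasurableSet s) :
    ∫⁻ x, ν (x +ᵥ s) ∂(volume : Measure E) = ν Set.univ * volume s := by
  have hrw : ∀ x : E, ν (x +ᵥ s) = ∫⁻ y, s.indicator 1 (y - x) ∂ν := by
    intro x
    rw [vadd_eq_preimage]
    rw [← lintegral_indicator_one (hs.preimage (measurable_sub_const x))]
    refine lintegral_congr fun y => ?_
    by_cases hy : y - x ∈ s <;> simp [Set.indicator_apply, hy]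
  simp only [hrw]
  rw [lintegral_lintegral_swap]
  · have hin : ∀ y : E, ∫⁻ x, s.indicator 1 (y - x) ∂(volume : Measure E) = volume s := by
      intro y
      have h1 : ∀ x : E, s.indicator (1 : E → ℝ≥0∞) (y - x)
          = ((fun x : E => y - x) ⁻¹' s).indicator 1 x := by
        intro x
        by_cases hy : y - x ∈ s <;> simp [Set.indicator_apply, hy]
      simp only [h1]
      rw [lintegral_indicator_one (hs.preimage (measurable_id'.const_sub y))]
      exact (MeasureTheory.Measure.measurePreserving_sub_left (volume : Measure E) y).measure_preimage hs.nullMeasurableSet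
  
    simp only [hin]
    rw [lintegral_const]
    exact mul_comm _ _
  · exact ((measurable_const.indicator hs).comp (measurable_snd.sub measurable_fst)).aemeasurable

lemma ae_vadd_zero (ν : Measure E) [IsFiniteMeasure ν] {t : Set E} (ht : MeasurableSet t)
    (ht0 : volume t = 0) : ∀ᵐ x ∂(volume : Measure E), ν (x +ᵥ t) = 0 := by
  have h := lintegral_vadd_meas (d := d) ν ht
  rw [ht0, mul_zero] at h
  exact (lintegral_eq_zero_iff (meas_vadd_fun ν ht)).mp h

lemma signed_apply_eq (φ : SignedMeasure E) {s : Set E} (hs : MeasurableSet s) :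
    φ s = (φ.toJordanDecomposition.posPart s).toReal
      - (φ.toJordanDecomposition.negPart s).toReal := by
  conv_lhs => rw [← φ.toSignedMeasure_toJordanDecomposition]
  rw [JordanDecomposition.toSignedMeasure, VectorMeasure.sub_apply,
    Measure.toSignedMeasure_apply_measurable hs, Measure.toSignedMeasure_apply_measurable hs]
  rfl

lemma smul_set_measurable {C : Set E} (hCm : MeasurableSet C) {r : ℝ} (hr : r ≠ 0) :
    MeasurableSet (r • C) := by
  have : r • C = (fun y : E => r⁻¹ • y) ⁻¹' C := by
    ext y
    rw [Set.mem_smul_set_iff_inv_smul_mem₀ hr]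
    rfl
  rw [this]
  exact hCm.preimage (measurable_const_smul _)

lemma vadd_smul_measurable {C : Set E} (hCm : MeasurableSet C) {r : ℝ} (hr : r ≠ 0) (x : E) :
    MeasurableSet (x +ᵥ (r • C)) := by
  rw [vadd_eq_preimage]
  exact (smul_set_measurable hCm hr).preimage (measurable_sub_const x)

lemma indicator_tendsto {C : Set E} (hd : 0 < d) {v₀ : ℝ} (hv₀ : 0 < v₀) (x y : E)
    (hy : y ∉ x +ᵥ ((v₀ ^ ((d:ℝ)⁻¹)) • frontier C)) :
    Tendsto (fun v : ℝ => (x +ᵥ (v ^ ((d:ℝ)⁻¹) • C)).indicator (1 : E → ℝ≥0∞) y)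
      (𝓝[Set.Ioi (0:ℝ)] v₀)
      (𝓝 ((x +ᵥ (v₀ ^ ((d:ℝ)⁻¹) • C)).indicator (1 : E → ℝ≥0∞) y)) := by
  set r₀ : ℝ := v₀ ^ ((d:ℝ)⁻¹) with hr₀def
  have hr₀ : 0 < r₀ := Real.rpow_pos_of_pos hv₀ _
  set w : E := r₀⁻¹ • (y - x) with hwdef
  have hw : w ∉ frontier C := by
    intro hw
    exact hy (by
      rw [vadd_eq_preimage]
      exact (Set.mem_smul_set_iff_inv_smul_mem₀ hr₀.ne' _ _).mpr hw)
  have hmem : ∀ v : ℝ, 0 < v →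
      (y ∈ x +ᵥ (v ^ ((d:ℝ)⁻¹) • C) ↔ (v ^ ((d:ℝ)⁻¹))⁻¹ • (y - x) ∈ C) := by
    intro v hv
    rw [vadd_eq_preimage, Set.mem_preimage,
      Set.mem_smul_set_iff_inv_smul_mem₀ (Real.rpow_pos_of_pos hv _).ne']
  have hg : Tendsto (fun v : ℝ => (v ^ ((d:ℝ)⁻¹))⁻¹ • (y - x)) (𝓝[Set.Ioi (0:ℝ)] v₀) (𝓝 w) := by
    have h1 : ContinuousAt (fun v : ℝ => v ^ ((d:ℝ)⁻¹)) v₀ :=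
      Real.continuousAt_rpow_const v₀ _ (Or.inl hv₀.ne')
    have h2 : Tendsto (fun v : ℝ => (v ^ ((d:ℝ)⁻¹))⁻¹ • (y - x)) (𝓝 v₀) (𝓝 w) := by
      exact ((h1.tendsto.inv₀ hr₀.ne').smul tendsto_const_nhds)
    exact h2.mono_left nhdsWithin_le_nhds
  rcases (or_iff_not_imp_left.mpr fun hnc =>
      (not_not.mp (fun hni => hw ⟨(not_not.mp hnc), hni⟩))) with hclos | hint
  · -- w ∉ closure C : indicator eventually 0
    have htarget : (x +ᵥ (v₀ ^ ((d:ℝ)⁻¹) • C)).indicator (1 : E → ℝ≥0∞) y = 0 := by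
      refine Set.indicator_of_notMem (fun h => hclos (subset_closure ?_)) _
      exact (hmem v₀ hv₀).mp h
    rw [htarget]
    refine Tendsto.congr' ?_ tendsto_const_nhds
    filter_upwards [hg.eventually_mem (isClosed_closure.isOpen_compl.mem_nhds hclos),
      self_mem_nhdsWithin] with v h1 h2
    exact Set.indicator_of_notMem
      (fun h => h1 (subset_closure ((hmem v h2).mp h))) (1 : E → ℝ≥0∞) |>.symm
  · -- w ∈ interior C : indicator eventually 1
    have htarget : (x +ᵥ (v₀ ^ ((d:ℝ)⁻¹) • C)).indicator (1 : E → ℝ≥0∞) y = 1 := by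
      refine Set.indicator_of_mem ?_ _
      exact (hmem v₀ hv₀).mpr (interior_subset hint)
    rw [htarget]
    refine Tendsto.congr' ?_ tendsto_const_nhds
    filter_upwards [hg.eventually_mem (isOpen_interior.mem_nhds hint),
      self_mem_nhdsWithin] with v h1 h2
    exact Set.indicator_of_mem ((hmem v h2).mpr (interior_subset h1)) (1 : E → ℝ≥0∞) |>.symm

lemma tendsto_meas_vadd {C : Set E} (hd : 0 < d) (hCm : MeasurableSet C)
    (ν : Measure E) [IsFiniteMeasure ν] {v₀ : ℝ} (hv₀ : 0 < v₀) (x : E)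
    (hx : ν (x +ᵥ ((v₀ ^ ((d:ℝ)⁻¹)) • frontier C)) = 0) :
    Tendsto (fun v : ℝ => ν (x +ᵥ (v ^ ((d:ℝ)⁻¹) • C))) (𝓝[Set.Ioi (0:ℝ)] v₀)
      (𝓝 (ν (x +ᵥ (v₀ ^ ((d:ℝ)⁻¹) • C)))) := by
  have key : ∀ v : ℝ, 0 < v →
      ν (x +ᵥ (v ^ ((d:ℝ)⁻¹) • C)) = ∫⁻ y, (x +ᵥ (v ^ ((d:ℝ)⁻¹) • C)).indicator 1 y ∂ν := by
    intro v hv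
    rw [lintegral_indicator_one (vadd_smul_measurable hCm (Real.rpow_pos_of_pos hv _).ne' x)]
  have h0 : Tendsto (fun v : ℝ => ∫⁻ y, (x +ᵥ (v ^ ((d:ℝ)⁻¹) • C)).indicator 1 y ∂ν)
      (𝓝[Set.Ioi (0:ℝ)] v₀)
      (𝓝 (∫⁻ y, (x +ᵥ (v₀ ^ ((d:ℝ)⁻¹) • C)).indicator 1 y ∂ν)) := by
    refine tendsto_lintegral_filter_of_dominated_convergence (fun _ => 1) ?_ ?_ ?_ ?_
    · filter_upwards [self_mem_nhdsWithin] with v hv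
      exact measurable_const.indicator (vadd_smul_measurable hCm
        (Real.rpow_pos_of_pos hv _).ne' x)
    · filter_upwards [self_mem_nhdsWithin] with v _
      exact Filter.Eventually.of_forall fun y => Set.indicator_le_self' (fun _ _ => zero_le_one) y
    · simp [lintegral_const, measure_ne_top]
    · filter_upwards [measure_eq_zero_iff_ae_notMem.mp hx] with y hy
      exact indicator_tendsto hd hv₀ x y hy
  rw [key v₀ hv₀]
  refine h0.congr' ?_
  filter_upwards [self_mem_nhdsWithin] with v hv
  exact (key v hv).symm

theorem continuity_of_square_integral
    (d : ℕ) (hd : 0 < d)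
    (C : Set (EuclideanSpace ℝ (Fin d)))
    (hCm : MeasurableSet C) (hCb : Bornology.IsBounded C)
    (hCfr : volume (frontier C) = 0)
    (φ : MeasureTheory.SignedMeasure (EuclideanSpace ℝ (Fin d))) :
    ContinuousOn
      (fun v : ℝ => ∫ x, (φ (x +ᵥ (v ^ ((d:ℝ)⁻¹) • C))) ^ 2
        ∂(volume : Measure (EuclideanSpace ℝ (Fin d))))
      (Set.Ioi 0) := by
  intro v₀ hv₀
  rw [Set.mem_Ioi] at hv₀
  set p : Measure (EuclideanSpace ℝ (Fin d)) := φ.toJordanDecomposition.posPart with hp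
  set n : Measure (EuclideanSpace ℝ (Fin d)) := φ.toJordanDecomposition.negPart with hn
  obtain ⟨M, hM⟩ := hCb.subset_closedBall 0
  set R : ℝ := (2 * v₀) ^ ((d:ℝ)⁻¹) * max M 0 with hR
  set B : Set (EuclideanSpace ℝ (Fin d)) := Metric.closedBall 0 R with hB
  have hBmeas : MeasurableSet B := measurableSet_closedBall
  have hBvol : volume B ≠ ⊤ := (MeasureTheory.measure_closedBall_lt_top).ne
  -- subset property
  have hsub : ∀ v ∈ Set.Ioo (0:ℝ) (2 * v₀), (v ^ ((d:ℝ)⁻¹)) • C ⊆ B := by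
    rintro v hv z ⟨c, hc, rfl⟩
    rw [hB, Metric.mem_closedBall, dist_zero_right]
    have h1 : ‖(v ^ ((d:ℝ)⁻¹)) • c‖ = v ^ ((d:ℝ)⁻¹) * ‖c‖ := by
      rw [norm_smul, Real.norm_eq_abs, abs_of_nonneg (Real.rpow_nonneg hv.1.le _)]
    rw [h1]
    apply mul_le_mul
    · exact Real.rpow_le_rpow hv.1.le hv.2.le (by positivity)
    · exact le_max_of_le_left (by simpa [Metric.mem_closedBall, dist_zero_right] using hM hc)
    · exact norm_nonneg _
    · positivity
  have hJ : Set.Ioo (0:ℝ) (2 * v₀) ∈ 𝓝[Set.Ioi (0:ℝ)] v₀ :=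
    nhdsWithin_le_nhds (Ioo_mem_nhds hv₀ (by linarith))
  -- the square function representation
  have hrep : ∀ v : ℝ, 0 < v → ∀ x : (EuclideanSpace ℝ (Fin d)),
      φ (x +ᵥ (v ^ ((d:ℝ)⁻¹) • C)) = (p (x +ᵥ (v ^ ((d:ℝ)⁻¹) • C))).toReal
        - (n (x +ᵥ (v ^ ((d:ℝ)⁻¹) • C))).toReal := fun v hv x =>
    signed_apply_eq φ (vadd_smul_measurable hCm (Real.rpow_pos_of_pos hv _).ne' x)
  have habs : ∀ v : ℝ, 0 < v → ∀ x : (EuclideanSpace ℝ (Fin d)),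
      |φ (x +ᵥ (v ^ ((d:ℝ)⁻¹) • C))| ≤ (p (x +ᵥ (v ^ ((d:ℝ)⁻¹) • C))).toReal
        + (n (x +ᵥ (v ^ ((d:ℝ)⁻¹) • C))).toReal := by
    intro v hv x
    rw [hrep v hv x, abs_sub_le_iff]
    constructor <;> nlinarith [ENNReal.toReal_nonneg (a := p (x +ᵥ (v ^ ((d:ℝ)⁻¹) • C))),
      ENNReal.toReal_nonneg (a := n (x +ᵥ (v ^ ((d:ℝ)⁻¹) • C)))]
  refine tendsto_integral_filter_of_dominated_convergence
    (fun x => ((p Set.univ).toReal + (n Set.univ).toReal)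
      * ((p (x +ᵥ B)).toReal + (n (x +ᵥ B)).toReal)) ?_ ?_ ?_ ?_
  · -- measurability
    filter_upwards [self_mem_nhdsWithin] with v hv
    rw [Set.mem_Ioi] at hv
    have hs : MeasurableSet ((v ^ ((d:ℝ)⁻¹)) • C) :=
      smul_set_measurable hCm (Real.rpow_pos_of_pos hv _).ne'
    have : (fun x : (EuclideanSpace ℝ (Fin d)) => (φ (x +ᵥ (v ^ ((d:ℝ)⁻¹) • C))) ^ 2)
        = fun x : (EuclideanSpace ℝ (Fin d)) => ((p (x +ᵥ (v ^ ((d:ℝ)⁻¹) • C))).toReal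
          - (n (x +ᵥ (v ^ ((d:ℝ)⁻¹) • C))).toReal) ^ 2 := by
      funext x; rw [hrep v hv x]
    rw [this]
    exact (((meas_vadd_fun p hs).ennreal_toReal.sub
      (meas_vadd_fun n hs).ennreal_toReal).pow_const 2).aestronglyMeasurable
  · -- bound
    filter_upwards [hJ] with v hv
    refine Filter.Eventually.of_forall fun x => ?_
    have hvadd : x +ᵥ ((v ^ ((d:ℝ)⁻¹)) • C) ⊆ x +ᵥ B := Set.vadd_set_mono (hsub v hv)
    have h1 : |φ (x +ᵥ (v ^ ((d:ℝ)⁻¹) • C))|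
        ≤ (p Set.univ).toReal + (n Set.univ).toReal :=
      (habs v hv.1 x).trans (add_le_add
        (ENNReal.toReal_mono (measure_ne_top _ _) (measure_mono (Set.subset_univ _)))
        (ENNReal.toReal_mono (measure_ne_top _ _) (measure_mono (Set.subset_univ _))))
    have h2 : |φ (x +ᵥ (v ^ ((d:ℝ)⁻¹) • C))|
        ≤ (p (x +ᵥ B)).toReal + (n (x +ᵥ B)).toReal :=
      (habs v hv.1 x).trans (add_le_add
        (ENNReal.toReal_mono (measure_ne_top _ _) (measure_mono hvadd))
        (ENNReal.toReal_mono (measure_ne_top _ _) (measure_mono hvadd)))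
    calc ‖(φ (x +ᵥ (v ^ ((d:ℝ)⁻¹) • C))) ^ 2‖
        = |φ (x +ᵥ (v ^ ((d:ℝ)⁻¹) • C))| * |φ (x +ᵥ (v ^ ((d:ℝ)⁻¹) • C))| := by
          rw [sq, Real.norm_eq_abs, abs_mul]
      _ ≤ _ := mul_le_mul h1 h2 (abs_nonneg _) (by positivity)
  · -- integrability of the bound
    refine Integrable.const_mul ?_ _
    refine Integrable.add ?_ ?_
    · refine integrable_toReal_of_lintegral_ne_top (meas_vadd_fun p hBmeas).aemeasurable ?_
      rw [lintegral_vadd_meas p hBmeas]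
      exact ENNReal.mul_ne_top (measure_ne_top _ _) hBvol
    · refine integrable_toReal_of_lintegral_ne_top (meas_vadd_fun n hBmeas).aemeasurable ?_
      rw [lintegral_vadd_meas n hBmeas]
      exact ENNReal.mul_ne_top (measure_ne_top _ _) hBvol
  · -- a.e. pointwise convergence
    have hfr_meas : MeasurableSet ((v₀ ^ ((d:ℝ)⁻¹)) • frontier C) :=
      smul_set_measurable isClosed_frontier.measurableSet
        (Real.rpow_pos_of_pos hv₀ _).ne'
    have hfr0 : volume ((v₀ ^ ((d:ℝ)⁻¹)) • frontier C) = 0 := by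
      rw [Measure.addHaar_smul, hCfr, mul_zero]
    filter_upwards [ae_vadd_zero p hfr_meas hfr0, ae_vadd_zero n hfr_meas hfr0]
      with x hxp hxn
    have htp := (ENNReal.tendsto_toReal (measure_ne_top p _)).comp
      (tendsto_meas_vadd hd hCm p hv₀ x hxp)
    have htn := (ENNReal.tendsto_toReal (measure_ne_top n _)).comp
      (tendsto_meas_vadd hd hCm n hv₀ x hxn)
    have hts := ((htp.sub htn).pow 2)
    refine Tendsto.congr' (f₁ := fun v : ℝ =>
        ((p (x +ᵥ v ^ ((d:ℝ)⁻¹) • C)).toReal - (n (x +ᵥ v ^ ((d:ℝ)⁻¹) • C)).toReal) ^ 2) ?_ ?_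
    · filter_upwards [self_mem_nhdsWithin] with v hv
      rw [Set.mem_Ioi] at hv
      rw [hrep v hv x]
    · rw [hrep v₀ hv₀ x]
      exact hts
end

section
/- Let C be a bounded measurable subset of ℝᵈ whose topological boundary ∂C has Lebesgue measure zero, and let φ be a finite signed measure on ℝᵈ. Then the complex-valued function v ↦ ∫_{ℝᵈ} Ψ(φ(x + v^{1/d}C)) dx is continuous on (0,∞). -/
open MeasureTheory Filter Topology Pointwise
open scoped ENNReal

noncomputable def Psi (v : ℝ) : ℂ := Complex.exp (v * Complex.I) - 1 - v * Complex.I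

namespace PsiProof


lemma norm_exp_mul_I_sub_one_le (t : ℝ) : ‖Complex.exp (t * Complex.I) - 1‖ ≤ |t| := by
  have h1 : Complex.exp (t * Complex.I) - 1
      = ((Real.cos t - 1 : ℝ) : ℂ) + ((Real.sin t : ℝ) : ℂ) * Complex.I := by
    rw [Complex.exp_mul_I, ← Complex.ofReal_cos, ← Complex.ofReal_sin]
    push_cast; ring
  rw [h1]
  have h2 : ‖((Real.cos t - 1 : ℝ) : ℂ) + ((Real.sin t : ℝ) : ℂ) * Complex.I‖ ^ 2
      = (Real.cos t - 1) ^ 2 + Real.sin t ^ 2 := by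
    rw [Complex.sq_norm, Complex.normSq_add_mul_I]
  have h3 : (Real.cos t - 1) ^ 2 + Real.sin t ^ 2 ≤ |t| ^ 2 := by
    have := Real.sin_sq_le_sq (x := t / 2)
    have hc := Real.cos_sq (t / 2)
    have hs := Real.sin_sq_add_cos_sq (t / 2)
    have ht : 2 * (t / 2) = t := by ring
    rw [ht] at hc
    have h4 := Real.sin_sq_add_cos_sq t
    rw [sq_abs]
    nlinarith
  have h5 : ‖((Real.cos t - 1 : ℝ) : ℂ) + ((Real.sin t : ℝ) : ℂ) * Complex.I‖ ^ 2 ≤ |t| ^ 2 := by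
    rw [h2]; exact h3
  exact (pow_le_pow_iff_left₀ (norm_nonneg _) (abs_nonneg t) two_ne_zero).1 h5

lemma norm_Psi_le (t : ℝ) : ‖Psi t‖ ≤ 2 * |t| := by
  have h0 : Psi t = (Complex.exp (t * Complex.I) - 1) - (t : ℂ) * Complex.I := by
    unfold Psi; ring
  calc ‖Psi t‖ ≤ ‖Complex.exp (t * Complex.I) - 1‖ + ‖(t : ℂ) * Complex.I‖ := by
        rw [h0]; exact norm_sub_le _ _
    _ ≤ |t| + |t| := by
        refine add_le_add (norm_exp_mul_I_sub_one_le t) ?_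
        simp
    _ = 2 * |t| := by ring

lemma continuous_Psi : Continuous Psi := by
  unfold Psi
  fun_prop



variable {d : ℕ}

local notation "E" => EuclideanSpace ℝ (Fin d)

lemma mem_vadd_iff {x y : E} {S : Set E} : y ∈ x +ᵥ S ↔ y - x ∈ S := by
  rw [Set.mem_vadd_set_iff_neg_vadd_mem]
  simp [vadd_eq_add, neg_add_eq_sub]

lemma vadd_eq_preimage (x : E) (S : Set E) : x +ᵥ S = (fun y => y - x) ⁻¹' S := by
  ext y; simp [mem_vadd_iff]

lemma measurableSet_vadd {S : Set E} (hS : MeasurableSet S) (x : E) :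
    MeasurableSet (x +ᵥ S) := by
  rw [vadd_eq_preimage]
  exact (measurable_id.sub_const x) hS

lemma measurable_meas_vadd (μ : Measure E) [IsFiniteMeasure μ] {S : Set E}
    (hS : MeasurableSet S) : Measurable (fun x : E => μ (x +ᵥ S)) := by
  have hT : MeasurableSet {p : E × E | p.2 - p.1 ∈ S} :=
    (measurable_snd.sub measurable_fst) hS
  have h := measurable_measure_prodMk_left (ν := μ) hT
  convert h using 2 with x
  congr 1
  ext y
  simp [mem_vadd_iff, Set.mem_preimage]

lemma lintegral_meas_vadd (μ : Measure E) [IsFiniteMeasure μ] {S : Set E}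
    (hS : MeasurableSet S) :
    ∫⁻ x, μ (x +ᵥ S) ∂(volume : Measure E) = μ Set.univ * volume S := by
  have hT : MeasurableSet {p : E × E | p.2 - p.1 ∈ S} :=
    (measurable_snd.sub measurable_fst) hS
  calc ∫⁻ x, μ (x +ᵥ S) ∂(volume : Measure E)
      = ∫⁻ x, ∫⁻ y, S.indicator (fun _ => (1 : ℝ≥0∞)) (y - x) ∂μ ∂(volume : Measure E) := by
        apply lintegral_congr; intro x
        rw [← lintegral_indicator_one (measurableSet_vadd hS x)]
        apply lintegral_congr; intro y
        by_cases hy : y - x ∈ S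
        · simp [Set.indicator_apply, hy, mem_vadd_iff.2 hy]
        · simp [Set.indicator_apply, hy, mem_vadd_iff]
    _ = ∫⁻ y, ∫⁻ x, S.indicator (fun _ => (1 : ℝ≥0∞)) (y - x) ∂(volume : Measure E) ∂μ := by
        apply lintegral_lintegral_swap
        apply Measurable.aemeasurable
        have huncurry : (Function.uncurry fun (x y : E) =>
            S.indicator (fun _ => (1 : ℝ≥0∞)) (y - x))
            = {p : E × E | p.2 - p.1 ∈ S}.indicator (fun _ => (1 : ℝ≥0∞)) := by
          ext p
          by_cases hp : p.2 - p.1 ∈ S <;>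
            simp [Function.uncurry, Set.indicator_apply, hp]
        rw [huncurry]
        exact measurable_const.indicator hT
    _ = ∫⁻ y, volume S ∂μ := by
        apply lintegral_congr
        intro y
        have hpre : MeasurableSet ((fun t : E => y - t) ⁻¹' S) :=
          (show Measurable fun t : E => y - t by fun_prop) hS
        rw [← (Measure.measurePreserving_sub_left (volume : Measure E) y).measure_preimage
            hS.nullMeasurableSet,
          ← lintegral_indicator_one hpre]
        apply lintegral_congr; intro x
        by_cases hx : y - x ∈ S <;>
          simp [Set.indicator_apply, Set.mem_preimage, hx]
    _ = μ Set.univ * volume S := by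
        rw [lintegral_const, mul_comm]

lemma integrable_meas_vadd (μ : Measure E) [IsFiniteMeasure μ] {S : Set E}
    (hS : MeasurableSet S) (hSv : volume S ≠ ⊤) :
    Integrable (fun x => (μ (x +ᵥ S)).toReal) (volume : Measure E) := by
  apply integrable_toReal_of_lintegral_ne_top (measurable_meas_vadd μ hS).aemeasurable
  rw [lintegral_meas_vadd μ hS]
  exact ENNReal.mul_ne_top (measure_ne_top μ _) hSv

lemma ae_null_vadd (μ : Measure E) [IsFiniteMeasure μ] {S : Set E}
    (hS : MeasurableSet S) (hSv : volume S = 0) :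
    ∀ᵐ x ∂(volume : Measure E), μ (x +ᵥ S) = 0 := by
  have h := lintegral_meas_vadd μ hS
  rw [hSv, mul_zero] at h
  have := (lintegral_eq_zero_iff (measurable_meas_vadd μ hS)).1 h
  filter_upwards [this] with x hx using hx

lemma eventually_mem_iff (hd : 0 < d) {C : Set E} {v₀ : ℝ} (hv₀ : 0 < v₀) {z : E}
    (hz : (v₀ ^ ((d : ℝ)⁻¹))⁻¹ • z ∉ frontier C) :
    ∀ᶠ v in 𝓝[Set.Ioi (0:ℝ)] v₀,
      (z ∈ v ^ ((d : ℝ)⁻¹) • C ↔ z ∈ v₀ ^ ((d : ℝ)⁻¹) • C) := by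
  have hne : ∀ v : ℝ, 0 < v → v ^ ((d : ℝ)⁻¹) ≠ 0 :=
    fun v hv => (Real.rpow_pos_of_pos hv _).ne'
  set g : ℝ → E := fun v => (v ^ ((d : ℝ)⁻¹))⁻¹ • z with hg
  have hgc : Tendsto g (𝓝[Set.Ioi (0:ℝ)] v₀) (𝓝 (g v₀)) := by
    have h1 : ContinuousAt (fun v : ℝ => v ^ ((d : ℝ)⁻¹)) v₀ :=
      Real.continuousAt_rpow_const v₀ _ (Or.inl hv₀.ne')
    have h2 : ContinuousAt g v₀ := by
      exact ((h1.inv₀ (hne v₀ hv₀)).smul continuousAt_const)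
    exact h2.continuousWithinAt
  have hmem : ∀ v : ℝ, 0 < v → (z ∈ v ^ ((d : ℝ)⁻¹) • C ↔ g v ∈ C) := by
    intro v hv
    exact Set.mem_smul_set_iff_inv_smul_mem₀ (hne v hv) _ _
  have hv₀' : ∀ᶠ v in 𝓝[Set.Ioi (0:ℝ)] v₀, 0 < v := eventually_mem_nhdsWithin
  by_cases hcl : g v₀ ∈ closure C
  · have hint : g v₀ ∈ interior C := by
      by_contra hi
      exact hz ⟨hcl, hi⟩
    have := hgc.eventually (isOpen_interior.mem_nhds hint)
    filter_upwards [this, hv₀'] with v hv1 hv2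
    rw [hmem v hv2, hmem v₀ hv₀]
    exact ⟨fun _ => interior_subset hint, fun _ => interior_subset hv1⟩
  · have := hgc.eventually (isOpen_compl_iff.2 isClosed_closure |>.mem_nhds hcl)
    filter_upwards [this, hv₀'] with v hv1 hv2
    rw [hmem v hv2, hmem v₀ hv₀]
    exact ⟨fun h => absurd (subset_closure h) hv1, fun h => absurd (subset_closure h) hcl⟩

lemma tendsto_meas (hd : 0 < d) {C : Set E} (hCm : MeasurableSet C)
    (μ : Measure E) [IsFiniteMeasure μ] {v₀ : ℝ} (hv₀ : 0 < v₀) {x : E}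
    (hx : μ (x +ᵥ (v₀ ^ ((d : ℝ)⁻¹) • frontier C)) = 0) :
    Tendsto (fun v : ℝ => (μ (x +ᵥ v ^ ((d : ℝ)⁻¹) • C)).toReal) (𝓝[Set.Ioi (0:ℝ)] v₀)
      (𝓝 ((μ (x +ᵥ v₀ ^ ((d : ℝ)⁻¹) • C)).toReal)) := by
  have hne : ∀ v : ℝ, 0 < v → v ^ ((d : ℝ)⁻¹) ≠ 0 :=
    fun v hv => (Real.rpow_pos_of_pos hv _).ne'
  have hmeasset : ∀ v : ℝ, 0 < v → MeasurableSet (x +ᵥ v ^ ((d : ℝ)⁻¹) • C) :=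
    fun v hv => measurableSet_vadd (hCm.const_smul₀ _) x
  have hv₀' : ∀ᶠ v in 𝓝[Set.Ioi (0:ℝ)] v₀, 0 < v := eventually_mem_nhdsWithin
  set F : ℝ → E → ℝ := fun v y =>
    (x +ᵥ v ^ ((d : ℝ)⁻¹) • C).indicator (fun _ => (1 : ℝ)) y with hF
  have key : Tendsto (fun v => ∫ y, F v y ∂μ) (𝓝[Set.Ioi (0:ℝ)] v₀)
      (𝓝 (∫ y, F v₀ y ∂μ)) := by
    apply tendsto_integral_filter_of_dominated_convergence (fun _ => (1 : ℝ))
    · filter_upwards [hv₀'] with v hv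
      exact (measurable_const.indicator (hmeasset v hv)).aestronglyMeasurable
    · filter_upwards with v
      filter_upwards with y
      rw [hF]
      by_cases hy : y ∈ x +ᵥ v ^ ((d : ℝ)⁻¹) • C <;> simp [Set.indicator_apply, hy]
    · exact integrable_const 1
    · have hae : ∀ᵐ y ∂μ, y ∉ x +ᵥ (v₀ ^ ((d : ℝ)⁻¹) • frontier C) :=
        measure_eq_zero_iff_ae_notMem.1 hx
      filter_upwards [hae] with y hy
      have hz : (v₀ ^ ((d : ℝ)⁻¹))⁻¹ • (y - x) ∉ frontier C := by
        intro h
        exact hy (mem_vadd_iff.2 ((Set.mem_smul_set_iff_inv_smul_mem₀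
          (hne v₀ hv₀) _ _).2 h))
      have := eventually_mem_iff (C := C) hd hv₀ hz
      apply Tendsto.congr' ?_ tendsto_const_nhds
      filter_upwards [this] with v hv
      rw [hF]
      by_cases hy2 : y - x ∈ v₀ ^ ((d : ℝ)⁻¹) • C
      · have : y - x ∈ v ^ ((d : ℝ)⁻¹) • C := hv.2 hy2
        simp [Set.indicator_apply, mem_vadd_iff, hy2, this]
      · have : y - x ∉ v ^ ((d : ℝ)⁻¹) • C := fun h => hy2 (hv.1 h)
        simp [Set.indicator_apply, mem_vadd_iff, hy2, this]
  have hFv : ∀ v : ℝ, 0 < v → ∫ y, F v y ∂μ = (μ (x +ᵥ v ^ ((d : ℝ)⁻¹) • C)).toReal :=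
    fun v hv => integral_indicator_one (hmeasset v hv)
  rw [← hFv v₀ hv₀]
  apply key.congr'
  filter_upwards [hv₀'] with v hv using (hFv v hv)


lemma signedMeasure_apply (φ : MeasureTheory.SignedMeasure E) {S : Set E}
    (hS : MeasurableSet S) :
    φ S = (φ.toJordanDecomposition.posPart S).toReal
      - (φ.toJordanDecomposition.negPart S).toReal := by
  conv_lhs => rw [← φ.toSignedMeasure_toJordanDecomposition]
  rw [MeasureTheory.JordanDecomposition.toSignedMeasure, VectorMeasure.sub_apply,
    Measure.toSignedMeasure_apply_measurable hS,
    Measure.toSignedMeasure_apply_measurable hS]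
  rfl

end PsiProof

open PsiProof
theorem continuity_of_Psi_integral
    (d : ℕ) (hd : 0 < d)
    (C : Set (EuclideanSpace ℝ (Fin d)))
    (hCm : MeasurableSet C) (hCb : Bornology.IsBounded C)
    (hCfr : volume (frontier C) = 0)
    (φ : MeasureTheory.SignedMeasure (EuclideanSpace ℝ (Fin d))) :
    ContinuousOn
      (fun v : ℝ => ∫ x, Psi (φ (x +ᵥ (v ^ ((d:ℝ)⁻¹) • C)))
        ∂(volume : Measure (EuclideanSpace ℝ (Fin d))))
      (Set.Ioi 0) := by
  intro v₀ hv₀m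
  have hv₀ : (0:ℝ) < v₀ := hv₀m
  set μp := φ.toJordanDecomposition.posPart with hμp
  set μn := φ.toJordanDecomposition.negPart with hμn
  obtain ⟨M, hM⟩ := hCb.subset_closedBall 0
  set R : ℝ := (2 * v₀) ^ ((d:ℝ)⁻¹) * (|M| + 1) with hR
  set B := Metric.closedBall (0 : EuclideanSpace ℝ (Fin d)) R with hB
  have hBm : MeasurableSet B := measurableSet_closedBall
  have hBv : volume B ≠ ⊤ := measure_closedBall_lt_top.ne
  have hVev : ∀ᶠ v in 𝓝[Set.Ioi (0:ℝ)] v₀, v ∈ Set.Ioo (v₀/2) (2*v₀) :=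
    Filter.eventually_mem_set.2 (nhdsWithin_le_nhds (Ioo_mem_nhds (by linarith) (by linarith)))
  have hvpos_of : ∀ v ∈ Set.Ioo (v₀/2) (2*v₀), (0:ℝ) < v :=
    fun v hv => lt_trans (by positivity) hv.1
  have hsub : ∀ v ∈ Set.Ioo (v₀/2) (2*v₀), v ^ ((d:ℝ)⁻¹) • C ⊆ B := by
    rintro v hv y hy
    obtain ⟨c, hc, rfl⟩ := hy
    have hvpos : (0:ℝ) < v := hvpos_of v hv
    have h1 : v ^ ((d:ℝ)⁻¹) ≤ (2*v₀) ^ ((d:ℝ)⁻¹) :=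
      Real.rpow_le_rpow hvpos.le hv.2.le (by positivity)
    have h2 : ‖c‖ ≤ |M| + 1 := by
      have hc2 := hM hc
      rw [Metric.mem_closedBall, dist_zero_right] at hc2
      calc ‖c‖ ≤ M := hc2
        _ ≤ |M| + 1 := by
            have := le_abs_self M; linarith
    rw [hB, Metric.mem_closedBall, dist_zero_right, norm_smul]
    calc ‖(v ^ ((d:ℝ)⁻¹) : ℝ)‖ * ‖c‖ ≤ (2*v₀) ^ ((d:ℝ)⁻¹) * (|M| + 1) := by
          apply mul_le_mul ?_ h2 (norm_nonneg _) (by positivity)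
          rw [Real.norm_eq_abs, abs_of_nonneg (Real.rpow_nonneg hvpos.le _)]
          exact h1
      _ = R := rfl
  set g : EuclideanSpace ℝ (Fin d) → ℝ :=
    fun x => 2 * ((μp (x +ᵥ B)).toReal + (μn (x +ᵥ B)).toReal) with hg
  have hgint : Integrable g (volume : Measure (EuclideanSpace ℝ (Fin d))) :=
    ((integrable_meas_vadd μp hBm hBv).add (integrable_meas_vadd μn hBm hBv)).const_mul 2
  have main : Tendsto
      (fun v : ℝ => ∫ x, Psi (φ (x +ᵥ (v ^ ((d:ℝ)⁻¹) • C)))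
        ∂(volume : Measure (EuclideanSpace ℝ (Fin d))))
      (𝓝[Set.Ioi (0:ℝ)] v₀)
      (𝓝 (∫ x, Psi (φ (x +ᵥ (v₀ ^ ((d:ℝ)⁻¹) • C)))
        ∂(volume : Measure (EuclideanSpace ℝ (Fin d))))) := by
    apply tendsto_integral_filter_of_dominated_convergence g
    · filter_upwards [eventually_mem_nhdsWithin] with v hv
      have hvpos : (0:ℝ) < v := hv
      have hsm : MeasurableSet (v ^ ((d:ℝ)⁻¹) • C) := hCm.const_smul₀ _
      have hm : Measurable fun x : EuclideanSpace ℝ (Fin d) =>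
          φ (x +ᵥ v ^ ((d:ℝ)⁻¹) • C) := by
        have heq : (fun x : EuclideanSpace ℝ (Fin d) => φ (x +ᵥ v ^ ((d:ℝ)⁻¹) • C))
            = fun x => (μp (x +ᵥ v ^ ((d:ℝ)⁻¹) • C)).toReal
              - (μn (x +ᵥ v ^ ((d:ℝ)⁻¹) • C)).toReal :=
          funext fun x => signedMeasure_apply φ (measurableSet_vadd hsm x)
        rw [heq]
        exact ((measurable_meas_vadd μp hsm).ennreal_toReal).sub
          ((measurable_meas_vadd μn hsm).ennreal_toReal)
      exact (continuous_Psi.measurable.comp hm).aestronglyMeasurable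
    · filter_upwards [hVev] with v hv
      filter_upwards with x
      have hvpos : (0:ℝ) < v := hvpos_of v hv
      have hsm : MeasurableSet (v ^ ((d:ℝ)⁻¹) • C) := hCm.const_smul₀ _
      have hSm := measurableSet_vadd (d := d) hsm x
      have hsubx : x +ᵥ v ^ ((d:ℝ)⁻¹) • C ⊆ x +ᵥ B := fun y hy =>
        mem_vadd_iff.2 (hsub v hv (mem_vadd_iff.1 hy))
      have hup : (μp (x +ᵥ v ^ ((d:ℝ)⁻¹) • C)).toReal ≤ (μp (x +ᵥ B)).toReal :=
        ENNReal.toReal_mono (measure_ne_top _ _) (measure_mono hsubx)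
      have hun : (μn (x +ᵥ v ^ ((d:ℝ)⁻¹) • C)).toReal ≤ (μn (x +ᵥ B)).toReal :=
        ENNReal.toReal_mono (measure_ne_top _ _) (measure_mono hsubx)
      have habs : |φ (x +ᵥ v ^ ((d:ℝ)⁻¹) • C)|
          ≤ (μp (x +ᵥ B)).toReal + (μn (x +ᵥ B)).toReal := by
        rw [signedMeasure_apply φ hSm]
        calc |(μp (x +ᵥ v ^ ((d:ℝ)⁻¹) • C)).toReal
              - (μn (x +ᵥ v ^ ((d:ℝ)⁻¹) • C)).toReal|
            ≤ |(μp (x +ᵥ v ^ ((d:ℝ)⁻¹) • C)).toReal|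
              + |(μn (x +ᵥ v ^ ((d:ℝ)⁻¹) • C)).toReal| := abs_sub _ _
          _ ≤ (μp (x +ᵥ B)).toReal + (μn (x +ᵥ B)).toReal := by
              rw [abs_of_nonneg ENNReal.toReal_nonneg, abs_of_nonneg ENNReal.toReal_nonneg]
              exact add_le_add hup hun
      calc ‖Psi (φ (x +ᵥ v ^ ((d:ℝ)⁻¹) • C))‖
          ≤ 2 * |φ (x +ᵥ v ^ ((d:ℝ)⁻¹) • C)| := norm_Psi_le _
        _ ≤ g x := by
            rw [hg]
            have h2 : (0:ℝ) ≤ 2 := by norm_num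
            exact mul_le_mul_of_nonneg_left habs h2
    · exact hgint
    · have hDm : MeasurableSet (v₀ ^ ((d:ℝ)⁻¹) • frontier C) :=
        (isClosed_frontier.measurableSet).const_smul₀ _
      have hDv : volume (v₀ ^ ((d:ℝ)⁻¹) • frontier C) = 0 := by
        rw [Measure.addHaar_smul, hCfr, mul_zero]
      filter_upwards [ae_null_vadd μp hDm hDv, ae_null_vadd μn hDm hDv] with x hx1 hx2
      have t1 := tendsto_meas hd hCm μp hv₀ (x := x) hx1
      have t2 := tendsto_meas hd hCm μn hv₀ (x := x) hx2
      have t3 : Tendsto (fun v : ℝ => φ (x +ᵥ v ^ ((d:ℝ)⁻¹) • C))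
          (𝓝[Set.Ioi (0:ℝ)] v₀) (𝓝 (φ (x +ᵥ v₀ ^ ((d:ℝ)⁻¹) • C))) := by
        rw [signedMeasure_apply φ (measurableSet_vadd (hCm.const_smul₀ _) x)]
        apply Tendsto.congr' ?_ (t1.sub t2)
        filter_upwards [eventually_mem_nhdsWithin] with v hv
        exact (signedMeasure_apply φ (measurableSet_vadd (hCm.const_smul₀ _) x)).symm
      exact (continuous_Psi.tendsto _).comp t3
  exact main
end

section
/- Let C be a bounded measurable subset of ℝᵈ, let α ∈ (0,1), and let φ be a finite signed measure on ℝᵈ with finite α-Riesz energy. Then there exists a constant c > 0 such that for all v > 0, ∫_{ℝᵈ} φ(x + v^{1/d}C)² dx ≤ c · min(v, v^{2−α}). -/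
open MeasureTheory Filter Topology Pointwise
open scoped ENNReal NNReal

lemma abs_apply_le_totalVariation {X : Type*} [MeasurableSpace X]
    (φ : MeasureTheory.SignedMeasure X) (s : Set X) :
    |φ s| ≤ (φ.totalVariation s).toReal := by
  by_cases hs : MeasurableSet s
  · have hp := φ.toJordanDecomposition_spec
    have hφ : φ s = (φ.toJordanDecomposition.posPart s).toReal
        - (φ.toJordanDecomposition.negPart s).toReal := by
      conv_lhs => rw [← φ.toSignedMeasure_toJordanDecomposition]
      rw [MeasureTheory.JordanDecomposition.toSignedMeasure, VectorMeasure.sub_apply,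
        Measure.toSignedMeasure_apply_measurable hs, Measure.toSignedMeasure_apply_measurable hs]
      rfl
    have htv : (φ.totalVariation s).toReal = (φ.toJordanDecomposition.posPart s).toReal
        + (φ.toJordanDecomposition.negPart s).toReal := by
      rw [MeasureTheory.SignedMeasure.totalVariation, Measure.add_apply,
        ENNReal.toReal_add (measure_ne_top _ _) (measure_ne_top _ _)]
    rw [hφ, htv]
    have h1 : (0:ℝ) ≤ (φ.toJordanDecomposition.posPart s).toReal := ENNReal.toReal_nonneg
    have h2 : (0:ℝ) ≤ (φ.toJordanDecomposition.negPart s).toReal := ENNReal.toReal_nonneg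
    rw [abs_le]; constructor <;> linarith
  · rw [VectorMeasure.not_measurable φ hs]
    simp [ENNReal.toReal_nonneg]

theorem square_integral_bound_riesz
    (d : ℕ) (hd : 0 < d)
    (C : Set (EuclideanSpace ℝ (Fin d)))
    (hCm : MeasurableSet C) (hCb : Bornology.IsBounded C)
    (α : ℝ) (hα0 : 0 < α) (hα1 : α < 1)
    (φ : MeasureTheory.SignedMeasure (EuclideanSpace ℝ (Fin d)))
    (henergy : ∫⁻ x, ∫⁻ y, (‖x - y‖₊ : ℝ≥0∞) ^ (-(1 - α) * (d:ℝ))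
        ∂φ.totalVariation ∂φ.totalVariation < ⊤) :
    ∃ c > (0:ℝ), ∀ v > (0:ℝ),
      (∫ x, (φ (x +ᵥ (v ^ ((d:ℝ)⁻¹) • C))) ^ 2
        ∂(volume : Measure (EuclideanSpace ℝ (Fin d))))
      ≤ c * min v (v ^ (2 - α)) := by

  set μ := φ.totalVariation with hμ
  haveI : IsFiniteMeasure μ := by
    unfold μ; unfold MeasureTheory.SignedMeasure.totalVariation; infer_instance
  set b : ℝ := (1 - α) * d with hb_def
  have hb : 0 < b := mul_pos (by linarith) (by exact_mod_cast hd)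
  have hexp : -(1 - α) * (d:ℝ) = -b := by rw [hb_def]; ring
  set E0 : ℝ≥0∞ := ∫⁻ x, ∫⁻ y, (‖x - y‖₊ : ℝ≥0∞) ^ (-b) ∂μ ∂μ with hE0
  have hE0top : E0 ≠ ⊤ := by
    rw [hE0]; rw [hexp] at henergy; exact henergy.ne
  -- radius
  obtain ⟨R0, hR0⟩ := hCb.subset_closedBall 0
  set R : ℝ := max R0 1 with hR_def
  have hR1 : (1:ℝ) ≤ R := le_max_right _ _
  have hRpos : (0:ℝ) < R := lt_of_lt_of_le one_pos hR1
  have hCR : C ⊆ Metric.closedBall 0 R := hR0.trans (Metric.closedBall_subset_closedBall (le_max_left _ _))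
  have hvolC : (volume C : ℝ≥0∞) ≠ ⊤ :=
    ((measure_mono hCR).trans_lt measure_closedBall_lt_top).ne
  set K1 : ℝ≥0∞ := volume C * (μ Set.univ * μ Set.univ) with hK1
  set K2 : ℝ≥0∞ := volume C * (ENNReal.ofReal (2 * R)) ^ b * E0 with hK2
  have hK1top : K1 ≠ ⊤ := by
    rw [hK1]
    exact ENNReal.mul_ne_top hvolC (ENNReal.mul_ne_top (measure_ne_top _ _) (measure_ne_top _ _))
  have hK2top : K2 ≠ ⊤ := by
    rw [hK2]
    exact ENNReal.mul_ne_top (ENNReal.mul_ne_top hvolC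
      (ENNReal.rpow_ne_top_of_nonneg hb.le ENNReal.ofReal_ne_top)) hE0top
  refine ⟨max 1 (max K1.toReal K2.toReal), lt_of_lt_of_le one_pos (le_max_left _ _), ?_⟩
  set c : ℝ := max 1 (max K1.toReal K2.toReal) with hc
  have hc0 : (0:ℝ) ≤ c := le_trans zero_le_one (le_max_left _ _)
  have hcK1 : K1.toReal ≤ c := le_trans (le_max_left _ _) (le_max_right _ _)
  have hcK2 : K2.toReal ≤ c := le_trans (le_max_right _ _) (le_max_right _ _)
  intro v hv
  set r : ℝ := v ^ ((d:ℝ)⁻¹) with hr_def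
  have hr : 0 < r := Real.rpow_pos_of_pos hv _
  set A : Set (EuclideanSpace ℝ (Fin d)) := r • C with hA
  have hAm : MeasurableSet A := hCm.const_smul₀ r
  have hd' : (d:ℝ) ≠ 0 := Nat.cast_ne_zero.mpr hd.ne'
  have hrd : r ^ d = v := by
    rw [hr_def, ← Real.rpow_natCast (v ^ ((d:ℝ)⁻¹)) d, ← Real.rpow_mul hv.le,
      inv_mul_cancel₀ hd', Real.rpow_one]
  have hvolA : volume A = ENNReal.ofReal v * volume C := by
    rw [hA, Measure.addHaar_smul_of_nonneg _ hr.le, finrank_euclideanSpace_fin, hrd]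
  have hA_sub : A ⊆ Metric.closedBall 0 (r * R) := by
    rintro a ⟨x, hx, rfl⟩
    rw [Metric.mem_closedBall, dist_zero_right, norm_smul, Real.norm_eq_abs, abs_of_pos hr]
    exact mul_le_mul_of_nonneg_left (by simpa [dist_zero_right] using hCR hx) hr.le
  -- the main lintegral
  set I : ℝ≥0∞ := ∫⁻ x, (μ (x +ᵥ A)) ^ 2 ∂(volume : Measure (EuclideanSpace ℝ (Fin d))) with hI
  have hxA : ∀ x : EuclideanSpace ℝ (Fin d), x +ᵥ A = {y : EuclideanSpace ℝ (Fin d) | y - x ∈ A} := by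
    intro x; ext y
    rw [Set.mem_vadd_set_iff_neg_vadd_mem]
    have : -x +ᵥ y = y - x := by simp [vadd_eq_add]; abel
    rw [this]; rfl
  have hmeas_set : ∀ x : EuclideanSpace ℝ (Fin d),
      MeasurableSet {y : EuclideanSpace ℝ (Fin d) | y - x ∈ A} :=
    fun x => (measurable_id.sub_const x) hAm
  set T : Set ((EuclideanSpace ℝ (Fin d)) × ((EuclideanSpace ℝ (Fin d)) × (EuclideanSpace ℝ (Fin d)))) :=
    {p | p.2.1 - p.1 ∈ A ∧ p.2.2 - p.1 ∈ A} with hT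
  have hTm : MeasurableSet T := by
    have m1 : Measurable fun p : (EuclideanSpace ℝ (Fin d)) × ((EuclideanSpace ℝ (Fin d)) × (EuclideanSpace ℝ (Fin d))) => p.2.1 - p.1 :=
      (measurable_fst.comp measurable_snd).sub measurable_fst
    have m2 : Measurable fun p : (EuclideanSpace ℝ (Fin d)) × ((EuclideanSpace ℝ (Fin d)) × (EuclideanSpace ℝ (Fin d))) => p.2.2 - p.1 :=
      (measurable_snd.comp measurable_snd).sub measurable_fst
    exact (m1 hAm).inter (m2 hAm)
  have step1 : ∀ x : EuclideanSpace ℝ (Fin d),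
      (μ (x +ᵥ A)) ^ 2 = ∫⁻ q, T.indicator 1 (x, q) ∂(μ.prod μ) := by
    intro x
    have hind : ∀ q : (EuclideanSpace ℝ (Fin d)) × (EuclideanSpace ℝ (Fin d)),
        T.indicator 1 (x, q) = (({y | y - x ∈ A} ×ˢ {y | y - x ∈ A} :
          Set ((EuclideanSpace ℝ (Fin d)) × (EuclideanSpace ℝ (Fin d)))).indicator
          (1 : (EuclideanSpace ℝ (Fin d)) × (EuclideanSpace ℝ (Fin d)) → ℝ≥0∞)) q := by
      intro q
      rfl
    simp_rw [hind]
    rw [lintegral_indicator_one ((hmeas_set x).prod (hmeas_set x)),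
      Measure.prod_prod, hxA x, sq]
  have swap : I = ∫⁻ q, ∫⁻ x, T.indicator 1 (x, q)
      ∂(volume : Measure (EuclideanSpace ℝ (Fin d))) ∂(μ.prod μ) := by
    rw [hI]
    simp_rw [step1]
    exact lintegral_lintegral_swap ((measurable_const.indicator hTm).aemeasurable)
  set S : (EuclideanSpace ℝ (Fin d)) × (EuclideanSpace ℝ (Fin d)) → Set (EuclideanSpace ℝ (Fin d)) :=
    fun q => {x | q.1 - x ∈ A ∧ q.2 - x ∈ A} with hS
  have hSm : ∀ q, MeasurableSet (S q) := fun q =>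
    (((measurable_const.sub measurable_id) hAm).inter ((measurable_const.sub measurable_id) hAm))
  have inner_eq : ∀ q, (∫⁻ x, T.indicator 1 (x, q)
      ∂(volume : Measure (EuclideanSpace ℝ (Fin d)))) = volume (S q) := by
    intro q
    have hind : ∀ x, T.indicator 1 (x, q) = ((S q).indicator
        (1 : (EuclideanSpace ℝ (Fin d)) → ℝ≥0∞)) x := by
      intro x
      rfl
    simp_rw [hind]
    exact lintegral_indicator_one (hSm q)
  have swap2 : I = ∫⁻ q, volume (S q) ∂(μ.prod μ) := by
    rw [swap]; exact lintegral_congr inner_eq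
  -- pointwise volume bounds
  have hvol1 : ∀ q, volume (S q) ≤ ENNReal.ofReal v * volume C := by
    intro q
    have hsub : S q ⊆ q.1 +ᵥ (-A) := by
      intro x hx
      rw [Set.mem_vadd_set_iff_neg_vadd_mem]
      have h1 : -q.1 +ᵥ x = -(q.1 - x) := by simp [vadd_eq_add]; abel
      rw [h1, Set.neg_mem_neg]
      exact hx.1
    calc volume (S q) ≤ volume (q.1 +ᵥ (-A)) := measure_mono hsub
      _ = volume (-A) := measure_vadd _ _ _
      _ = volume A := Measure.measure_neg _ _
      _ = ENNReal.ofReal v * volume C := hvolA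
  have hvol2 : ∀ q : (EuclideanSpace ℝ (Fin d)) × (EuclideanSpace ℝ (Fin d)),
      volume (S q) ≤ (ENNReal.ofReal v * volume C) *
        ((ENNReal.ofReal (2 * R * r)) ^ b * (‖q.1 - q.2‖₊ : ℝ≥0∞) ^ (-b)) := by
    intro q
    rcases Set.eq_empty_or_nonempty (S q) with hemp | ⟨x, hx1, hx2⟩
    · rw [hemp]; simp
    · have hnorm : ‖q.1 - q.2‖ ≤ 2 * R * r := by
        have e1 : ‖q.1 - x‖ ≤ r * R := by
          simpa [dist_zero_right] using hA_sub hx1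
        have e2 : ‖q.2 - x‖ ≤ r * R := by
          simpa [dist_zero_right] using hA_sub hx2
        have e3 : q.1 - q.2 = (q.1 - x) - (q.2 - x) := by abel
        rw [e3]
        calc ‖(q.1 - x) - (q.2 - x)‖ ≤ ‖q.1 - x‖ + ‖q.2 - x‖ := norm_sub_le _ _
          _ ≤ r * R + r * R := add_le_add e1 e2
          _ = 2 * R * r := by ring
      set t : ℝ≥0∞ := (‖q.1 - q.2‖₊ : ℝ≥0∞) with ht
      have ht_le : t ≤ ENNReal.ofReal (2 * R * r) := by
        rw [ht, ← ENNReal.ofReal_coe_nnreal, coe_nnnorm]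
        exact ENNReal.ofReal_le_ofReal hnorm
      have hone : (1:ℝ≥0∞) ≤ (ENNReal.ofReal (2 * R * r)) ^ b * t ^ (-b) := by
        rcases eq_or_ne t 0 with ht0 | ht0
        · rw [ht0, ENNReal.zero_rpow_of_neg (neg_neg_iff_pos.mpr hb)]
          have hb0 : (ENNReal.ofReal (2 * R * r)) ^ b ≠ 0 := by
            apply ne_of_gt
            apply ENNReal.rpow_pos _ ENNReal.ofReal_ne_top
            rw [ENNReal.ofReal_pos]
            positivity
          rw [ENNReal.mul_top hb0]
          exact le_top
        · rw [ENNReal.rpow_neg]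
          have htb0 : t ^ b ≠ 0 := by
            apply ne_of_gt
            apply ENNReal.rpow_pos (lt_of_le_of_ne zero_le (Ne.symm ht0))
            rw [ht]; exact ENNReal.coe_ne_top
          have htbtop : t ^ b ≠ ⊤ := by
            apply ENNReal.rpow_ne_top_of_nonneg hb.le
            rw [ht]; exact ENNReal.coe_ne_top
          calc (1:ℝ≥0∞) = t ^ b * (t ^ b)⁻¹ := (ENNReal.mul_inv_cancel htb0 htbtop).symm
            _ ≤ (ENNReal.ofReal (2 * R * r)) ^ b * (t ^ b)⁻¹ :=
              mul_le_mul_left (ENNReal.rpow_le_rpow ht_le hb.le) _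
      calc volume (S q) = volume (S q) * 1 := (mul_one _).symm
        _ ≤ (ENNReal.ofReal v * volume C) *
            ((ENNReal.ofReal (2 * R * r)) ^ b * t ^ (-b)) :=
          mul_le_mul' (hvol1 q) hone
  -- integrate the bounds
  have bound1 : I ≤ ENNReal.ofReal v * K1 := by
    calc I ≤ ∫⁻ _, ENNReal.ofReal v * volume C ∂(μ.prod μ) := by
          rw [swap2]; exact lintegral_mono hvol1
      _ = (ENNReal.ofReal v * volume C) * (μ.prod μ) Set.univ := lintegral_const _
      _ = ENNReal.ofReal v * K1 := by
          rw [hK1, ← Set.univ_prod_univ, Measure.prod_prod]; ring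
  have hm : Measurable fun q : (EuclideanSpace ℝ (Fin d)) × (EuclideanSpace ℝ (Fin d)) =>
      (‖q.1 - q.2‖₊ : ℝ≥0∞) ^ (-b) :=
    ((measurable_fst.sub measurable_snd).nnnorm.coe_nnreal_ennreal).pow_const _
  have hEprod : ∫⁻ q : (EuclideanSpace ℝ (Fin d)) × (EuclideanSpace ℝ (Fin d)),
      (‖q.1 - q.2‖₊ : ℝ≥0∞) ^ (-b) ∂(μ.prod μ) = E0 := by
    rw [hE0]; exact lintegral_prod _ hm.aemeasurable
  have hconst : ENNReal.ofReal v * volume C * (ENNReal.ofReal (2 * R * r)) ^ b =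
      ENNReal.ofReal (v ^ (2 - α)) * (volume C * (ENNReal.ofReal (2 * R)) ^ b) := by
    have h2R : (0:ℝ) ≤ 2 * R := by positivity
    have hsplit : ENNReal.ofReal (2 * R * r) = ENNReal.ofReal (2 * R) * ENNReal.ofReal r :=
      ENNReal.ofReal_mul h2R
    have hrb : r ^ b = v ^ (1 - α) := by
      rw [hr_def, ← Real.rpow_mul hv.le]
      congr 1
      rw [hb_def]; field_simp
    have hmulr : (ENNReal.ofReal r) ^ b = ENNReal.ofReal (v ^ (1 - α)) := by
      rw [ENNReal.ofReal_rpow_of_pos hr, hrb]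
    have hvv : v * v ^ (1 - α) = v ^ (2 - α) := by
      rw [show (2:ℝ) - α = 1 + (1 - α) by ring, Real.rpow_add hv, Real.rpow_one]
    rw [hsplit, ENNReal.mul_rpow_of_nonneg _ _ hb.le, hmulr,
      show ENNReal.ofReal v * volume C * ((ENNReal.ofReal (2*R)) ^ b * ENNReal.ofReal (v ^ (1-α)))
        = (ENNReal.ofReal v * ENNReal.ofReal (v ^ (1-α))) * (volume C * (ENNReal.ofReal (2*R)) ^ b)
        from by ring,
      ← ENNReal.ofReal_mul hv.le, hvv]
  have bound2 : I ≤ ENNReal.ofReal (v ^ (2 - α)) * K2 := by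
    calc I ≤ ∫⁻ q, (ENNReal.ofReal v * volume C) *
          ((ENNReal.ofReal (2 * R * r)) ^ b * (‖q.1 - q.2‖₊ : ℝ≥0∞) ^ (-b)) ∂(μ.prod μ) := by
          rw [swap2]; exact lintegral_mono hvol2
      _ = (ENNReal.ofReal v * volume C * (ENNReal.ofReal (2 * R * r)) ^ b) * E0 := by
          simp_rw [← mul_assoc]
          rw [lintegral_const_mul'' _ hm.aemeasurable, hEprod]
      _ = ENNReal.ofReal (v ^ (2 - α)) * K2 := by
          rw [hK2, hconst]; ring
  have hIne : I ≠ ⊤ := by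
    apply ne_top_of_le_ne_top _ bound1
    exact ENNReal.mul_ne_top ENNReal.ofReal_ne_top hK1top
  have hIle1 : I.toReal ≤ v * K1.toReal := by
    have h := ENNReal.toReal_mono (ENNReal.mul_ne_top ENNReal.ofReal_ne_top hK1top) bound1
    rwa [ENNReal.toReal_mul, ENNReal.toReal_ofReal hv.le] at h
  have hIle2 : I.toReal ≤ v ^ (2 - α) * K2.toReal := by
    have h := ENNReal.toReal_mono (ENNReal.mul_ne_top ENNReal.ofReal_ne_top hK2top) bound2
    rwa [ENNReal.toReal_mul, ENNReal.toReal_ofReal (Real.rpow_nonneg hv.le _)] at h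
  have key : (∫ x, (φ (x +ᵥ A)) ^ 2 ∂(volume : Measure (EuclideanSpace ℝ (Fin d))))
      ≤ I.toReal := by
    by_cases hint : Integrable (fun x => (φ (x +ᵥ A)) ^ 2)
        (volume : Measure (EuclideanSpace ℝ (Fin d)))
    · rw [integral_eq_lintegral_of_nonneg_ae (Eventually.of_forall fun x => sq_nonneg _)
        hint.aestronglyMeasurable]
      apply ENNReal.toReal_mono hIne
      rw [hI]
      apply lintegral_mono
      intro x
      have h1 : |φ (x +ᵥ A)| ≤ (μ (x +ᵥ A)).toReal := abs_apply_le_totalVariation φ _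
      have h2 : (φ (x +ᵥ A)) ^ 2 ≤ ((μ (x +ᵥ A)).toReal) ^ 2 := by
        rw [← sq_abs]
        exact pow_le_pow_left₀ (abs_nonneg _) h1 2
      calc ENNReal.ofReal ((φ (x +ᵥ A)) ^ 2)
          ≤ ENNReal.ofReal (((μ (x +ᵥ A)).toReal) ^ 2) := ENNReal.ofReal_le_ofReal h2
        _ = (ENNReal.ofReal ((μ (x +ᵥ A)).toReal)) ^ 2 :=
            ENNReal.ofReal_pow ENNReal.toReal_nonneg 2
        _ = (μ (x +ᵥ A)) ^ 2 := by rw [ENNReal.ofReal_toReal (measure_ne_top _ _)]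
    · rw [integral_undef hint]
      exact ENNReal.toReal_nonneg
  have h1 : I.toReal ≤ c * v := by
    calc I.toReal ≤ v * K1.toReal := hIle1
      _ ≤ v * c := mul_le_mul_of_nonneg_left hcK1 hv.le
      _ = c * v := mul_comm _ _
  have h2 : I.toReal ≤ c * v ^ (2 - α) := by
    calc I.toReal ≤ v ^ (2 - α) * K2.toReal := hIle2
      _ ≤ v ^ (2 - α) * c := mul_le_mul_of_nonneg_left hcK2 (Real.rpow_nonneg hv.le _)
      _ = c * v ^ (2 - α) := mul_comm _ _
  calc (∫ x, (φ (x +ᵥ A)) ^ 2 ∂(volume : Measure (EuclideanSpace ℝ (Fin d))))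
      ≤ I.toReal := key
    _ ≤ min (c * v) (c * v ^ (2 - α)) := le_min h1 h2
    _ = c * min v (v ^ (2 - α)) := (mul_min_of_nonneg _ _ hc0).symm
end

section
/- Suppose C is invariant under rotations, i.e. θ(C) = C for every θ in the special orthogonal group SO(d). Then for every x ∈ ℝᵈ with x ≠ 0 and every unit vector e₁ ∈ ℝᵈ, K_{γ,C}(x) = K_{γ,C}(e₁) · |x|^{−(γ−1)d}, as an equality in [0,∞]. -/
open MeasureTheory Filter Topology Pointwise
open scoped ENNReal NNReal

noncomputable def rieszKernel (d : ℕ) (γ : ℝ) (C : Set (EuclideanSpace ℝ (Fin d)))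
    (x : EuclideanSpace ℝ (Fin d)) : ℝ≥0∞ :=
  ∫⁻ v in Set.Ioi (0:ℝ),
    volume (((v ^ (-(d:ℝ)⁻¹)) • x +ᵥ C) ∩ C) * ENNReal.ofReal (v ^ (-γ))

section Aux

variable {d : ℕ} {C : Set (EuclideanSpace ℝ (Fin d))}

/-- translation symmetry: `|(a+C) ∩ C| = |(-a+C) ∩ C|`. -/
lemma aux_vol_neg (a : EuclideanSpace ℝ (Fin d)) :
    volume ((-a +ᵥ C) ∩ C) = volume ((a +ᵥ C) ∩ C) := by
  have h : (a +ᵥ C) ∩ C = a +ᵥ ((-a +ᵥ C) ∩ C) := by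
    rw [Set.vadd_set_inter, vadd_vadd, add_neg_cancel, zero_vadd, Set.inter_comm]
  rw [h, measure_vadd]

/-- isometry invariance. -/
lemma aux_vol_iso (hCm : MeasurableSet C)
    (θ : EuclideanSpace ℝ (Fin d) ≃ₗᵢ[ℝ] EuclideanSpace ℝ (Fin d))
    (hC : θ '' C = C) (a : EuclideanSpace ℝ (Fin d)) :
    volume ((θ a +ᵥ C) ∩ C) = volume ((a +ᵥ C) ∩ C) := by
  have hpre : θ ⁻¹' C = C := by
    conv_lhs => rw [← hC]
    exact Set.preimage_image_eq C θ.injective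
  have hpre2 : θ ⁻¹' ((θ a +ᵥ C) ∩ C) = (a +ᵥ C) ∩ C := by
    rw [Set.preimage_inter, hpre]
    congr 1
    ext z
    simp only [Set.mem_preimage, Set.mem_vadd_set_iff_neg_vadd_mem, vadd_eq_add]
    rw [← map_neg θ, ← map_add θ, ← Set.mem_preimage, hpre]
  have hm : MeasurableSet ((θ a +ᵥ C) ∩ C) := (hCm.const_vadd (θ a)).inter hCm
  rw [← hpre2, θ.measurePreserving.measure_preimage hm.nullMeasurableSet]

/-- substitution `v = c w` in a lintegral over `(0,∞)`. -/
lemma aux_subst (c : ℝ) (hc : 0 < c) (f : ℝ → ℝ≥0∞) :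
    ∫⁻ v in Set.Ioi (0:ℝ), f v
      = ENNReal.ofReal c * ∫⁻ w in Set.Ioi (0:ℝ), f (c * w) := by
  let e : ℝ ≃ᵐ ℝ := (Homeomorph.mulLeft₀ c hc.ne').toMeasurableEquiv
  have hpre : (fun w : ℝ => c * w) ⁻¹' Set.Ioi 0 = Set.Ioi 0 := by
    ext w
    simp only [Set.mem_preimage, Set.mem_Ioi]
    exact mul_pos_iff_of_pos_left hc
  have hmap : Measure.map e (volume.restrict (Set.Ioi (0:ℝ)))
      = (ENNReal.ofReal c⁻¹ • volume).restrict (Set.Ioi (0:ℝ)) := by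
    have : Measure.map e volume = ENNReal.ofReal |c⁻¹| • volume :=
      Real.map_volume_mul_left hc.ne'
    have hpre' : ⇑e ⁻¹' Set.Ioi 0 = Set.Ioi (0:ℝ) := hpre
    conv_lhs => rw [show volume.restrict (Set.Ioi (0:ℝ))
      = volume.restrict (⇑e ⁻¹' Set.Ioi 0) from by rw [hpre']]
    rw [← Measure.restrict_map e.measurable measurableSet_Ioi]
    show (Measure.map e volume).restrict _ = _
    rw [this, abs_of_pos (inv_pos.mpr hc)]
  have h2 : ∫⁻ w in Set.Ioi (0:ℝ), f (c * w)
      = ENNReal.ofReal c⁻¹ * ∫⁻ v in Set.Ioi (0:ℝ), f v := by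
    calc ∫⁻ w in Set.Ioi (0:ℝ), f (c * w)
        = ∫⁻ v, f v ∂(Measure.map e (volume.restrict (Set.Ioi (0:ℝ)))) :=
          (MeasureTheory.lintegral_map_equiv f e).symm
      _ = ∫⁻ v, f v ∂((ENNReal.ofReal c⁻¹ • volume).restrict (Set.Ioi (0:ℝ))) := by rw [hmap]
      _ = ENNReal.ofReal c⁻¹ * ∫⁻ v in Set.Ioi (0:ℝ), f v := by
          rw [Measure.restrict_smul, lintegral_smul_measure, smul_eq_mul]
  rw [h2, ← mul_assoc, ← ENNReal.ofReal_mul hc.le, mul_inv_cancel₀ hc.ne', ENNReal.ofReal_one,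
    one_mul]

end Aux

theorem rieszKernel_rotation_invariant
    (d : ℕ) (hd : 0 < d)
    (C : Set (EuclideanSpace ℝ (Fin d)))
    (hCm : MeasurableSet C) (hCb : Bornology.IsBounded C)
    (γ : ℝ) (hγ1 : 1 < γ) (hγ2 : γ < 2)
    (hrot : ∀ θ : EuclideanSpace ℝ (Fin d) ≃ₗᵢ[ℝ] EuclideanSpace ℝ (Fin d),
      LinearMap.det (θ.toLinearEquiv : EuclideanSpace ℝ (Fin d) →ₗ[ℝ] EuclideanSpace ℝ (Fin d)) = 1 →
      θ '' C = C)
    (x : EuclideanSpace ℝ (Fin d)) (hx : x ≠ 0)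
    (e₁ : EuclideanSpace ℝ (Fin d)) (he₁ : ‖e₁‖ = 1) :
    rieszKernel d γ C x =
      rieszKernel d γ C e₁ * ENNReal.ofReal (‖x‖ ^ (-(γ - 1) * (d:ℝ))) := by
  have hr : (0:ℝ) < ‖x‖ := norm_pos_iff.mpr hx
  have hdR : ((d:ℝ)) ≠ 0 := Nat.cast_ne_zero.mpr hd.ne'
  set r : ℝ := ‖x‖ with hrdef
  set u : EuclideanSpace ℝ (Fin d) := r⁻¹ • x with hudef
  have hu : ‖u‖ = 1 := by
    rw [hudef, norm_smul, norm_inv, Real.norm_eq_abs, abs_of_pos hr, inv_mul_cancel₀ hr.ne']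
  -- step 1: rotation invariance: for all t, vol((t•u + C) ∩ C) = vol((t•e₁+C)∩C)
  have hvol : ∀ t : ℝ,
      volume ((t • u +ᵥ C) ∩ C) = volume ((t • e₁ +ᵥ C) ∩ C) := by
    intro t
    by_cases huel : u = e₁
    · rw [huel]
    · have hsub : e₁ - u ≠ 0 := sub_ne_zero.mpr (Ne.symm huel)
      have he₁0 : e₁ ≠ 0 := by intro h; rw [h, norm_zero] at he₁; norm_num at he₁
      set R₁ := Submodule.reflection (ℝ ∙ e₁)ᗮ with hR₁
      set R₂ := Submodule.reflection (ℝ ∙ (e₁ - u))ᗮ with hR₂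
      set θ := R₁.trans R₂ with hθ
      have hdet₁ : ∀ (v : EuclideanSpace ℝ (Fin d)), v ≠ 0 →
          LinearMap.det ((Submodule.reflection (ℝ ∙ v)ᗮ).toLinearEquiv :
            EuclideanSpace ℝ (Fin d) →ₗ[ℝ] EuclideanSpace ℝ (Fin d)) = -1 := by
        intro v hv
        have : LinearMap.det (Submodule.reflection (ℝ ∙ v)ᗮ : EuclideanSpace ℝ (Fin d) ≃ₗᵢ[ℝ]
            EuclideanSpace ℝ (Fin d)).toLinearMap = (-1) ^ Module.finrank ℝ ((ℝ ∙ v)ᗮ)ᗮ :=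
          Submodule.det_reflection _
        rw [Submodule.orthogonal_orthogonal, finrank_span_singleton hv, pow_one] at this
        exact this
      have hdet : LinearMap.det ((θ.toLinearEquiv :
          EuclideanSpace ℝ (Fin d) →ₗ[ℝ] EuclideanSpace ℝ (Fin d))) = 1 := by
        have hcomp : ((θ.toLinearEquiv :
            EuclideanSpace ℝ (Fin d) →ₗ[ℝ] EuclideanSpace ℝ (Fin d)))
            = ((R₂.toLinearEquiv : EuclideanSpace ℝ (Fin d) →ₗ[ℝ] EuclideanSpace ℝ (Fin d)))
              ∘ₗ ((R₁.toLinearEquiv : EuclideanSpace ℝ (Fin d) →ₗ[ℝ] EuclideanSpace ℝ (Fin d))) :=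
          rfl
        rw [hcomp, LinearMap.det_comp, hdet₁ _ hsub, hdet₁ _ he₁0]
        norm_num
      have hCinv : θ '' C = C := hrot θ hdet
      have hθe₁ : θ e₁ = -u := by
        have h1 : R₁ e₁ = -e₁ := Submodule.reflection_orthogonalComplement_singleton_eq_neg e₁
        have h2 : R₂ e₁ = u := Submodule.reflection_sub (by rw [he₁, hu])
        have : θ e₁ = R₂ (R₁ e₁) := rfl
        rw [this, h1, map_neg, h2]
      have key : t • u = -(θ (t • e₁)) := by
        rw [_root_.map_smul, hθe₁, smul_neg, neg_neg]
      rw [key, aux_vol_neg, aux_vol_iso hCm θ hCinv]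
  -- step 2: scaling
  set c : ℝ := r ^ (d:ℝ) with hcdef
  have hc : (0:ℝ) < c := Real.rpow_pos_of_pos hr _
  have hscale : rieszKernel d γ C x
      = ENNReal.ofReal c * (ENNReal.ofReal (c ^ (-γ)) * rieszKernel d γ C u) := by
    rw [rieszKernel,
      aux_subst c hc (fun v => volume (((v ^ (-(d:ℝ)⁻¹)) • x +ᵥ C) ∩ C)
        * ENNReal.ofReal (v ^ (-γ)))]
    congr 1
    rw [rieszKernel, ← lintegral_const_mul' _ _ ENNReal.ofReal_ne_top]
    refine setLIntegral_congr_fun measurableSet_Ioi (fun w hw => ?_)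
    have hw0 : (0:ℝ) < w := hw
    have hcw1 : (c * w) ^ (-(d:ℝ)⁻¹) = r⁻¹ * w ^ (-(d:ℝ)⁻¹) := by
      rw [Real.mul_rpow hc.le hw0.le, hcdef, ← Real.rpow_mul hr.le, mul_neg,
        mul_inv_cancel₀ hdR, Real.rpow_neg_one]
    have hsmul : ((c * w) ^ (-(d:ℝ)⁻¹)) • x = (w ^ (-(d:ℝ)⁻¹)) • u := by
      rw [hcw1, mul_comm, mul_smul, hudef]
    have hpow : (c * w) ^ (-γ) = c ^ (-γ) * w ^ (-γ) := Real.mul_rpow hc.le hw0.le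
    rw [hsmul, hpow, ENNReal.ofReal_mul (Real.rpow_nonneg hc.le _)]
    ring
  -- step 3: K(u) = K(e₁)
  have hue : rieszKernel d γ C u = rieszKernel d γ C e₁ := by
    unfold rieszKernel
    refine setLIntegral_congr_fun measurableSet_Ioi (fun v _ => ?_)
    rw [hvol]
  rw [hscale, hue]
  rw [← mul_assoc, ← ENNReal.ofReal_mul hc.le, mul_comm (ENNReal.ofReal _)]
  congr 2
  rw [show -(γ - 1) * (d:ℝ) = (d:ℝ) * (1 - γ) by ring, Real.rpow_mul hr.le,
    show (1:ℝ) - γ = 1 + -γ by ring, Real.rpow_add hc, Real.rpow_one]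
end

section
/- Let C be a bounded measurable subset of ℝᵈ with Lebesgue measure |C| = 1, let γ ∈ (1,2), and let φ be a finite positive measure on ℝᵈ. Then ∫_{ℝᵈ} ∫₀^∞ φ(x + v^{1/d}C)² v^{−γ−1} dv dx = ∫_{ℝᵈ}∫_{ℝᵈ} K_{γ,C}(x − y) dφ(x) dφ(y), as an equality in [0,∞]. -/
open MeasureTheory Filter Topology Pointwise Set
open scoped ENNReal NNReal
set_option maxHeartbeats 1000000

private lemma ind_le_one {d : ℕ} (C : Set (EuclideanSpace ℝ (Fin d))) (u : EuclideanSpace ℝ (Fin d)) :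
    C.indicator (1 : EuclideanSpace ℝ (Fin d) → ℝ≥0∞) u ≤ 1 := by
  by_cases h : u ∈ C <;> simp [Set.indicator_apply, h]

private lemma meas_ind_comp {d : ℕ} {α : Type*} [MeasurableSpace α]
    (C : Set (EuclideanSpace ℝ (Fin d))) (hCm : MeasurableSet C) {ψ : α → EuclideanSpace ℝ (Fin d)} (hψ : Measurable ψ) :
    Measurable fun a => C.indicator (1 : EuclideanSpace ℝ (Fin d) → ℝ≥0∞) (ψ a) := by
  have heq : (fun a => C.indicator (1 : EuclideanSpace ℝ (Fin d) → ℝ≥0∞) (ψ a))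
      = (ψ ⁻¹' C).indicator (1 : α → ℝ≥0∞) := by
    ext a
    by_cases h : ψ a ∈ C <;> simp [Set.indicator_apply, Set.mem_preimage, h]
  rw [heq]
  exact measurable_const.indicator (hψ hCm)

private lemma auxB {d : ℕ} (hd : 0 < d) (C : Set (EuclideanSpace ℝ (Fin d))) (hCm : MeasurableSet C)
    {v : ℝ} (hv : 0 < v) (y z : EuclideanSpace ℝ (Fin d)) :
    ∫⁻ x, C.indicator (1 : EuclideanSpace ℝ (Fin d) → ℝ≥0∞) ((v ^ (-(d:ℝ)⁻¹)) • (y - x)) *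
        C.indicator (1 : EuclideanSpace ℝ (Fin d) → ℝ≥0∞) ((v ^ (-(d:ℝ)⁻¹)) • (z - x))
      = ENNReal.ofReal v * volume (((v ^ (-(d:ℝ)⁻¹)) • (y - z) +ᵥ C) ∩ C) := by
  set s : ℝ := v ^ (-(d:ℝ)⁻¹) with hs_def
  have hs : 0 < s := Real.rpow_pos_of_pos hv _
  set D : Set (EuclideanSpace ℝ (Fin d)) := ((s • (y - z)) +ᵥ C) ∩ C with hD_def
  have hDm : MeasurableSet D := (hCm.const_vadd _).inter hCm
  have hr : (-s⁻¹) ≠ 0 := neg_ne_zero.2 (inv_ne_zero hs.ne')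
  have hmem : ∀ x, x ∈ y +ᵥ ((-s⁻¹) • D) ↔ (s • (y - x) ∈ C ∧ s • (z - x) ∈ C) := by
    intro x
    rw [Set.mem_vadd_set_iff_neg_vadd_mem, mem_smul_set_iff_inv_smul_mem₀ hr]
    have h1 : (-s⁻¹)⁻¹ • (-y +ᵥ x) = s • (y - x) := by
      rw [inv_neg, inv_inv, vadd_eq_add, neg_add_eq_sub, neg_smul, ← smul_neg, neg_sub]
    rw [h1, hD_def, Set.mem_inter_iff, Set.mem_vadd_set_iff_neg_vadd_mem]
    have h2 : -(s • (y - z)) +ᵥ (s • (y - x)) = s • (z - x) := by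
      rw [vadd_eq_add, ← smul_neg, ← smul_add]
      congr 1
      abel
    rw [h2, and_comm]
  have hA : (y +ᵥ ((-s⁻¹) • D)) = {x | s • (y - x) ∈ C ∧ s • (z - x) ∈ C} := Set.ext hmem
  have hint : ∀ x, C.indicator (1 : EuclideanSpace ℝ (Fin d) → ℝ≥0∞) (s • (y - x)) *
      C.indicator (1 : EuclideanSpace ℝ (Fin d) → ℝ≥0∞) (s • (z - x))
      = (y +ᵥ ((-s⁻¹) • D)).indicator (1 : EuclideanSpace ℝ (Fin d) → ℝ≥0∞) x := by
    intro x
    rw [hA]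
    by_cases h1 : s • (y - x) ∈ C <;> by_cases h2 : s • (z - x) ∈ C <;>
      simp [Set.indicator_apply, Set.mem_setOf_eq, h1, h2]
  rw [lintegral_congr hint,
    lintegral_indicator_one ((hDm.const_smul₀ _).const_vadd _),
    measure_vadd, Measure.addHaar_smul, finrank_euclideanSpace_fin]
  congr 1
  have hsinv : s⁻¹ = v ^ ((d:ℝ)⁻¹) := by
    rw [hs_def, Real.rpow_neg hv.le, inv_inv]
  have habs : |(-s⁻¹) ^ d| = v := by
    rw [abs_pow, abs_neg, abs_of_pos (inv_pos.2 hs), hsinv,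
      ← Real.rpow_natCast (v ^ ((d:ℝ)⁻¹)) d, ← Real.rpow_mul hv.le,
      inv_mul_cancel₀ (Nat.cast_ne_zero.2 hd.ne'), Real.rpow_one]
  rw [habs]

private lemma auxPhi {d : ℕ} (C : Set (EuclideanSpace ℝ (Fin d))) (hCm : MeasurableSet C)
    (φ : Measure (EuclideanSpace ℝ (Fin d))) {v : ℝ} (hv : 0 < v) (x : EuclideanSpace ℝ (Fin d)) :
    φ (x +ᵥ (v ^ ((d:ℝ)⁻¹)) • C)
      = ∫⁻ w, C.indicator (1 : EuclideanSpace ℝ (Fin d) → ℝ≥0∞) ((v ^ (-(d:ℝ)⁻¹)) • (w - x)) ∂φ := by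
  have hr : (v ^ ((d:ℝ)⁻¹)) ≠ 0 := (Real.rpow_pos_of_pos hv _).ne'
  have hSm : MeasurableSet (x +ᵥ (v ^ ((d:ℝ)⁻¹)) • C) := (hCm.const_smul₀ _).const_vadd _
  rw [← lintegral_indicator_one hSm]
  apply lintegral_congr; intro w
  have hmem : w ∈ x +ᵥ (v ^ ((d:ℝ)⁻¹)) • C ↔ (v ^ (-(d:ℝ)⁻¹)) • (w - x) ∈ C := by
    rw [Set.mem_vadd_set_iff_neg_vadd_mem, mem_smul_set_iff_inv_smul_mem₀ hr,
      ← Real.rpow_neg hv.le, vadd_eq_add, neg_add_eq_sub]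
  by_cases h : (v ^ (-(d:ℝ)⁻¹)) • (w - x) ∈ C <;>
    simp [Set.indicator_apply, hmem, h]

private lemma measVol {d : ℕ} {α : Type*} [MeasurableSpace α]
    (C : Set (EuclideanSpace ℝ (Fin d))) (hCm : MeasurableSet C)
    {ψ : α → EuclideanSpace ℝ (Fin d)} (hψ : Measurable ψ) :
    Measurable fun a => volume ((ψ a +ᵥ C) ∩ C) := by
  have hrepr : ∀ w : EuclideanSpace ℝ (Fin d), volume ((w +ᵥ C) ∩ C)
      = ∫⁻ a, C.indicator (1 : EuclideanSpace ℝ (Fin d) → ℝ≥0∞) (a - w) * C.indicator (1 : EuclideanSpace ℝ (Fin d) → ℝ≥0∞) a := by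
    intro w
    rw [← lintegral_indicator_one ((hCm.const_vadd _).inter hCm)]
    apply lintegral_congr; intro a
    have hmem : a ∈ w +ᵥ C ↔ a - w ∈ C := by
      rw [Set.mem_vadd_set_iff_neg_vadd_mem, vadd_eq_add, neg_add_eq_sub]
    by_cases h1 : a - w ∈ C <;> by_cases h2 : a ∈ C <;>
      simp [Set.indicator_apply, Set.mem_inter_iff, hmem, h1, h2]
  simp_rw [hrepr]
  exact Measurable.lintegral_prod_right'
    (f := fun p : α × EuclideanSpace ℝ (Fin d) =>
      C.indicator (1 : EuclideanSpace ℝ (Fin d) → ℝ≥0∞) (p.2 - ψ p.1) *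
      C.indicator (1 : EuclideanSpace ℝ (Fin d) → ℝ≥0∞) p.2)
    ((meas_ind_comp C hCm (measurable_snd.sub (hψ.comp measurable_fst))).mul
      (meas_ind_comp C hCm measurable_snd))

private lemma sq_step {α : Type*} [MeasurableSpace α] (φ : Measure α) [IsFiniteMeasure φ]
    (f : α → ℝ≥0∞) (hfle : ∀ a, f a ≤ 1) (c : ℝ≥0∞) (hc : c ≠ ⊤) :
    (∫⁻ w, f w ∂φ) ^ 2 * c = ∫⁻ y, ∫⁻ z, c * (f y * f z) ∂φ ∂φ := by
  have hfne : ∀ a, f a ≠ ⊤ := fun a => ne_top_of_le_ne_top ENNReal.one_ne_top (hfle a)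
  have hIne : (∫⁻ w, f w ∂φ) ≠ ⊤ := by
    refine ne_top_of_le_ne_top (measure_lt_top φ Set.univ).ne ?_
    calc (∫⁻ w, f w ∂φ) ≤ ∫⁻ _, 1 ∂φ := lintegral_mono hfle
      _ = φ Set.univ := lintegral_one
  have h1 : ∀ y, (∫⁻ z, c * (f y * f z) ∂φ) = (c * f y) * ∫⁻ z, f z ∂φ := by
    intro y
    simp_rw [← mul_assoc]
    exact lintegral_const_mul' _ _ (ENNReal.mul_ne_top hc (hfne y))
  simp_rw [h1]
  rw [lintegral_mul_const' _ _ hIne, lintegral_const_mul' _ _ hc, pow_two]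
  ring

theorem grain_square_integral_eq_kernel_energy
    (d : ℕ) (hd : 0 < d)
    (C : Set (EuclideanSpace ℝ (Fin d)))
    (hCm : MeasurableSet C) (hCb : Bornology.IsBounded C)
    (hC1 : volume C = 1)
    (γ : ℝ) (hγ1 : 1 < γ) (hγ2 : γ < 2)
    (φ : Measure (EuclideanSpace ℝ (Fin d))) [IsFiniteMeasure φ] :
    (∫⁻ x : EuclideanSpace ℝ (Fin d), ∫⁻ v in Set.Ioi (0:ℝ),
        (φ (x +ᵥ (v ^ ((d:ℝ)⁻¹) • C))) ^ 2 * ENNReal.ofReal (v ^ (-γ - 1)))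
    = ∫⁻ x, ∫⁻ y, rieszKernel d γ C (x - y) ∂φ ∂φ := by
  have mG : Measurable fun q : ℝ × EuclideanSpace ℝ (Fin d) × EuclideanSpace ℝ (Fin d) × EuclideanSpace ℝ (Fin d) =>
      ENNReal.ofReal (q.1 ^ (-γ - 1)) *
        (C.indicator (1 : EuclideanSpace ℝ (Fin d) → ℝ≥0∞) ((q.1 ^ (-(d:ℝ)⁻¹)) • (q.2.2.1 - q.2.1)) *
         C.indicator (1 : EuclideanSpace ℝ (Fin d) → ℝ≥0∞) ((q.1 ^ (-(d:ℝ)⁻¹)) • (q.2.2.2 - q.2.1))) :=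
    ((measurable_fst.pow_const _).ennreal_ofReal).mul
      ((meas_ind_comp C hCm ((measurable_fst.pow_const _).smul
          (measurable_snd.snd.fst.sub measurable_snd.fst))).mul
       (meas_ind_comp C hCm ((measurable_fst.pow_const _).smul
          (measurable_snd.snd.snd.sub measurable_snd.fst))))
  calc
    (∫⁻ x : EuclideanSpace ℝ (Fin d), ∫⁻ v in Set.Ioi (0:ℝ),
        (φ (x +ᵥ (v ^ ((d:ℝ)⁻¹) • C))) ^ 2 * ENNReal.ofReal (v ^ (-γ - 1)))
      = ∫⁻ x : EuclideanSpace ℝ (Fin d), ∫⁻ v in Set.Ioi (0:ℝ), ∫⁻ y, ∫⁻ z,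
          ENNReal.ofReal (v ^ (-γ - 1)) *
            (C.indicator (1 : EuclideanSpace ℝ (Fin d) → ℝ≥0∞) ((v ^ (-(d:ℝ)⁻¹)) • (y - x)) *
             C.indicator (1 : EuclideanSpace ℝ (Fin d) → ℝ≥0∞) ((v ^ (-(d:ℝ)⁻¹)) • (z - x))) ∂φ ∂φ := by
        apply lintegral_congr; intro x
        refine setLIntegral_congr_fun measurableSet_Ioi (fun v hv => ?_)
        rw [auxPhi C hCm φ hv x]
        exact sq_step φ _ (fun a => ind_le_one C _) _ ENNReal.ofReal_ne_top
    _ = ∫⁻ v in Set.Ioi (0:ℝ), ∫⁻ x : EuclideanSpace ℝ (Fin d), ∫⁻ y, ∫⁻ z,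
          ENNReal.ofReal (v ^ (-γ - 1)) *
            (C.indicator (1 : EuclideanSpace ℝ (Fin d) → ℝ≥0∞) ((v ^ (-(d:ℝ)⁻¹)) • (y - x)) *
             C.indicator (1 : EuclideanSpace ℝ (Fin d) → ℝ≥0∞) ((v ^ (-(d:ℝ)⁻¹)) • (z - x))) ∂φ ∂φ := by
        have m4 : Measurable fun t : ((EuclideanSpace ℝ (Fin d) × ℝ) × EuclideanSpace ℝ (Fin d)) × EuclideanSpace ℝ (Fin d) =>
            ENNReal.ofReal (t.1.1.2 ^ (-γ - 1)) *
              (C.indicator (1 : EuclideanSpace ℝ (Fin d) → ℝ≥0∞) ((t.1.1.2 ^ (-(d:ℝ)⁻¹)) • (t.1.2 - t.1.1.1)) *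
               C.indicator (1 : EuclideanSpace ℝ (Fin d) → ℝ≥0∞) ((t.1.1.2 ^ (-(d:ℝ)⁻¹)) • (t.2 - t.1.1.1))) :=
          mG.comp ((measurable_fst.fst.snd).prodMk ((measurable_fst.fst.fst).prodMk
            ((measurable_fst.snd).prodMk measurable_snd)))
        apply lintegral_lintegral_swap
        exact (m4.lintegral_prod_right'.lintegral_prod_right').aemeasurable
    _ = ∫⁻ v in Set.Ioi (0:ℝ), ∫⁻ y, (∫⁻ x : EuclideanSpace ℝ (Fin d), ∫⁻ z,
          ENNReal.ofReal (v ^ (-γ - 1)) *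
            (C.indicator (1 : EuclideanSpace ℝ (Fin d) → ℝ≥0∞) ((v ^ (-(d:ℝ)⁻¹)) • (y - x)) *
             C.indicator (1 : EuclideanSpace ℝ (Fin d) → ℝ≥0∞) ((v ^ (-(d:ℝ)⁻¹)) • (z - x))) ∂φ) ∂φ := by
        apply lintegral_congr; intro v
        have m4 : Measurable fun t : (EuclideanSpace ℝ (Fin d) × EuclideanSpace ℝ (Fin d)) × EuclideanSpace ℝ (Fin d) =>
            ENNReal.ofReal (v ^ (-γ - 1)) *
              (C.indicator (1 : EuclideanSpace ℝ (Fin d) → ℝ≥0∞) ((v ^ (-(d:ℝ)⁻¹)) • (t.1.2 - t.1.1)) *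
               C.indicator (1 : EuclideanSpace ℝ (Fin d) → ℝ≥0∞) ((v ^ (-(d:ℝ)⁻¹)) • (t.2 - t.1.1))) :=
          mG.comp (measurable_const.prodMk ((measurable_fst.fst).prodMk
            ((measurable_fst.snd).prodMk measurable_snd)))
        apply lintegral_lintegral_swap
        exact (m4.lintegral_prod_right').aemeasurable
    _ = ∫⁻ v in Set.Ioi (0:ℝ), ∫⁻ y, (∫⁻ z, (∫⁻ x : EuclideanSpace ℝ (Fin d),
          ENNReal.ofReal (v ^ (-γ - 1)) *
            (C.indicator (1 : EuclideanSpace ℝ (Fin d) → ℝ≥0∞) ((v ^ (-(d:ℝ)⁻¹)) • (y - x)) *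
             C.indicator (1 : EuclideanSpace ℝ (Fin d) → ℝ≥0∞) ((v ^ (-(d:ℝ)⁻¹)) • (z - x)))) ∂φ) ∂φ := by
        apply lintegral_congr; intro v
        apply lintegral_congr; intro y
        have m2 : Measurable fun t : EuclideanSpace ℝ (Fin d) × EuclideanSpace ℝ (Fin d) =>
            ENNReal.ofReal (v ^ (-γ - 1)) *
              (C.indicator (1 : EuclideanSpace ℝ (Fin d) → ℝ≥0∞) ((v ^ (-(d:ℝ)⁻¹)) • (y - t.1)) *
               C.indicator (1 : EuclideanSpace ℝ (Fin d) → ℝ≥0∞) ((v ^ (-(d:ℝ)⁻¹)) • (t.2 - t.1))) :=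
          mG.comp (measurable_const.prodMk (measurable_fst.prodMk
            (measurable_const.prodMk measurable_snd)))
        apply lintegral_lintegral_swap
        exact m2.aemeasurable
    _ = ∫⁻ v in Set.Ioi (0:ℝ), ∫⁻ y, ∫⁻ z,
          ENNReal.ofReal (v ^ (-γ - 1)) *
            (ENNReal.ofReal v * volume (((v ^ (-(d:ℝ)⁻¹)) • (y - z) +ᵥ C) ∩ C)) ∂φ ∂φ := by
        refine setLIntegral_congr_fun measurableSet_Ioi (fun v hv => ?_)
        apply lintegral_congr; intro y
        apply lintegral_congr; intro z
        rw [lintegral_const_mul' _ _ ENNReal.ofReal_ne_top, auxB hd C hCm hv y z]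
    _ = ∫⁻ y, (∫⁻ v in Set.Ioi (0:ℝ), ∫⁻ z,
          ENNReal.ofReal (v ^ (-γ - 1)) *
            (ENNReal.ofReal v * volume (((v ^ (-(d:ℝ)⁻¹)) • (y - z) +ᵥ C) ∩ C)) ∂φ) ∂φ := by
        have mm : Measurable fun p : (ℝ × EuclideanSpace ℝ (Fin d)) × EuclideanSpace ℝ (Fin d) =>
            ENNReal.ofReal (p.1.1 ^ (-γ - 1)) *
              (ENNReal.ofReal p.1.1 *
                volume (((p.1.1 ^ (-(d:ℝ)⁻¹)) • (p.1.2 - p.2) +ᵥ C) ∩ C)) :=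
          ((measurable_fst.fst.pow_const _).ennreal_ofReal).mul
            ((measurable_fst.fst.ennreal_ofReal).mul
              (measVol C hCm ((measurable_fst.fst.pow_const _).smul
                (measurable_fst.snd.sub measurable_snd))))
        apply lintegral_lintegral_swap
        exact (mm.lintegral_prod_right').aemeasurable
    _ = ∫⁻ y, (∫⁻ z, (∫⁻ v in Set.Ioi (0:ℝ),
          ENNReal.ofReal (v ^ (-γ - 1)) *
            (ENNReal.ofReal v * volume (((v ^ (-(d:ℝ)⁻¹)) • (y - z) +ᵥ C) ∩ C))) ∂φ) ∂φ := by
        apply lintegral_congr; intro y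
        have mm : Measurable fun p : ℝ × EuclideanSpace ℝ (Fin d) =>
            ENNReal.ofReal (p.1 ^ (-γ - 1)) *
              (ENNReal.ofReal p.1 *
                volume (((p.1 ^ (-(d:ℝ)⁻¹)) • (y - p.2) +ᵥ C) ∩ C)) :=
          ((measurable_fst.pow_const _).ennreal_ofReal).mul
            ((measurable_fst.ennreal_ofReal).mul
              (measVol C hCm ((measurable_fst.pow_const _).smul
                (measurable_const.sub measurable_snd))))
        apply lintegral_lintegral_swap
        exact mm.aemeasurable
    _ = ∫⁻ x, ∫⁻ y, rieszKernel d γ C (x - y) ∂φ ∂φ := by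
        apply lintegral_congr; intro y
        apply lintegral_congr; intro z
        rw [rieszKernel]
        refine setLIntegral_congr_fun measurableSet_Ioi (fun v hv => ?_)
        have hv0 : (0:ℝ) < v := hv
        rw [← mul_assoc, ← ENNReal.ofReal_mul (Real.rpow_nonneg hv0.le _)]
        have hvpow : v ^ (-γ - 1) * v = v ^ (-γ) :=
          calc v ^ (-γ - 1) * v = v ^ (-γ - 1) * v ^ (1:ℝ) := by rw [Real.rpow_one]
            _ = v ^ ((-γ - 1) + 1) := (Real.rpow_add hv0 _ _).symm
            _ = v ^ (-γ) := by norm_num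
        rw [hvpow, mul_comm]
end
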